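/- arXiv:1806.03955 — 5 statements merged into one kernel-verified Lean document; each statement's English description precedes it below -/
import Mathlib

section
/- For every m ≥ 1, the following identity holds in K[[q]] with K = ℚ(t): ∏_{d=1}^{∞} (1 − t^{d−1} q^d)^{−1} · ∑_{k=0}^{∞} (−1)^{k−m} · t^{k(k−1)/2 − km + m(m+1)/2} · [k choose m]_t · q^{k(k−1)/2} · ∏_{d=1}^{k} (1 − t^{d} q^{d})^{−1} = ∏_{i=1}^{m−1} (1 − t^{i+1})^{−1} · ∑_{a=1}^{m} (−1)^{a+1} · t^{a(a−1)/2 + m − 1} · [m choose a]_t · ∏_{d=0}^{∞} (1 − t^{d−a} q^{d}) · (1 − t^{d−1} q^{d})^{−1}. (The left-hand side is the generating function ∑_n E(B^{[n]}_m; t) q^n of the E-polynomials of the strata of the punctual Hilbert scheme by number of generators, and the right-hand side is its closed form.) -/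
noncomputable section

/-- The field `K = ℚ(t)` of rational functions. -/
abbrev K : Type := RatFunc ℚ

/-- `K` is given the discrete topology. -/
instance : TopologicalSpace K := ⊥

/-- `K[[q]]` is given the topology of coefficientwise convergence, under which the
infinite products and sums below converge. -/
instance : TopologicalSpace (PowerSeries K) :=
  TopologicalSpace.induced (fun f n => PowerSeries.coeff (R := K) n f) Pi.topologicalSpace

/-- The indeterminate `t` of `K = ℚ(t)`. -/
noncomputable def t : K := RatFunc.X

/-- The Gaussian binomial coefficient `[m choose a]_t ∈ ℚ(t)`:
`∏_{i=0}^{a-1} (1 - t^{m-i})/(1 - t^{i+1})` if `a ≤ m`, and `0` if `a > m`. -/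
noncomputable def gb (m a : ℕ) : K :=
  if a ≤ m then ∏ i ∈ Finset.range a, (1 - t ^ (m - i)) / (1 - t ^ (i + 1)) else 0

namespace StmtAux

open PowerSeries Filter Finset

abbrev R : Type := PowerSeries K

instance : DiscreteTopology K := ⟨rfl⟩

lemma continuous_coeff (n : ℕ) : Continuous (fun f : R => coeff (R := K) n f) := by
  have h : Continuous (fun f : R => fun n => coeff (R := K) n f) := continuous_induced_dom
  exact (continuous_apply n).comp h

lemma coeff_injective' : Function.Injective (fun f : R => fun n => coeff (R := K) n f) :=
  fun f g h => PowerSeries.ext fun n => congrFun h n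

instance : T2Space R := Topology.IsEmbedding.t2Space ⟨⟨rfl⟩, coeff_injective'⟩

instance : ContinuousAdd K := ⟨continuous_of_discreteTopology⟩
instance : ContinuousMul K := ⟨continuous_of_discreteTopology⟩
instance : ContinuousNeg K := ⟨continuous_of_discreteTopology⟩

instance : ContinuousAdd R := by
  refine ⟨continuous_induced_rng.2 (continuous_pi fun n => ?_)⟩
  show Continuous fun p : R × R => coeff (R := K) n (p.1 + p.2)
  simp only [map_add]
  exact ((continuous_coeff n).comp continuous_fst).add ((continuous_coeff n).comp continuous_snd)

instance : ContinuousNeg R := by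
  refine ⟨continuous_induced_rng.2 (continuous_pi fun n => ?_)⟩
  show Continuous fun p : R => coeff (R := K) n (-p)
  simp only [map_neg]
  exact (continuous_coeff n).neg

instance : ContinuousMul R := by
  refine ⟨continuous_induced_rng.2 (continuous_pi fun n => ?_)⟩
  show Continuous fun p : R × R => coeff (R := K) n (p.1 * p.2)
  simp only [PowerSeries.coeff_mul]
  exact continuous_finset_sum _ fun p _ =>
    ((continuous_coeff p.1).comp continuous_fst).mul ((continuous_coeff p.2).comp continuous_snd)

instance : IsTopologicalAddGroup R := ⟨⟩
instance : IsTopologicalSemiring R := ⟨⟩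

lemma tendsto_iff_coeff {α : Type*} {l : Filter α} {F : α → R} {g : R} :
    Tendsto F l (nhds g) ↔ ∀ n, ∀ᶠ x in l, coeff (R := K) n (F x) = coeff (R := K) n g := by
  rw [nhds_induced, tendsto_comap_iff]
  rw [show Tendsto ((fun f (n : ℕ) => coeff (R := K) n f) ∘ F) l (nhds fun n => coeff (R := K) n g) ↔
      ∀ n, Tendsto (fun x => coeff (R := K) n (F x)) l (nhds (coeff (R := K) n g)) from tendsto_pi_nhds]
  refine forall_congr' fun n => ?_
  rw [nhds_discrete, tendsto_pure]

lemma hasSum_of_coeff {f : ℕ → R} {S : R}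
    (h : ∀ n, ∃ N, (∀ j, N ≤ j → coeff (R := K) n (f j) = 0) ∧
      coeff (R := K) n (∑ j ∈ range N, f j) = coeff (R := K) n S) :
    HasSum f S := by
  rw [HasSum, tendsto_iff_coeff]
  intro n
  obtain ⟨N, h0, hS⟩ := h n
  rw [SummationFilter.unconditional_filter, eventually_atTop]
  refine ⟨range N, fun s hs => ?_⟩
  rw [map_sum, ← hS, map_sum]
  exact (Finset.sum_subset hs fun j _ hj => h0 j (by simpa using hj)).symm

lemma coeff_zero_of_dvd {n M : ℕ} {g : R} (h : X ^ M ∣ g) (hn : n < M) : coeff (R := K) n g = 0 :=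
  (X_pow_dvd_iff.1 h) n hn

lemma dvd_sub_one_prod {s : Finset ℕ} {M : ℕ} {f : ℕ → R} (h : ∀ i ∈ s, X ^ M ∣ (f i - 1)) :
    X ^ M ∣ (∏ i ∈ s, f i) - 1 := by
  classical
  induction s using Finset.induction_on with
  | empty => simp
  | @insert a s ha ih =>
      rw [Finset.prod_insert ha]
      have h1 : f a * (∏ i ∈ s, f i) - 1 = f a * ((∏ i ∈ s, f i) - 1) + (f a - 1) := by ring
      rw [h1]
      exact dvd_add ((ih fun i hi => h i (mem_insert_of_mem hi)).mul_left _)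
        (h a (mem_insert_self a s))

lemma coeff_mul_congr_one {n M : ℕ} (hM : n < M) {A g : R} (h : X ^ M ∣ g - 1) :
    coeff (R := K) n (A * g) = coeff (R := K) n A := by
  have h1 : A * g = A + A * (g - 1) := by ring
  rw [h1, map_add, coeff_zero_of_dvd (h.mul_left A) hM, add_zero]

lemma hasProd_of_coeff {f : ℕ → R} {S : R}
    (h : ∀ n, ∃ N, (∀ j, N ≤ j → X ^ (n + 1) ∣ (f j - 1)) ∧
      ∀ M, N ≤ M → coeff (R := K) n (∏ j ∈ range M, f j) = coeff (R := K) n S) :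
    HasProd f S := by
  rw [HasProd, tendsto_iff_coeff]
  intro n
  obtain ⟨N, h1, hS⟩ := h n
  rw [SummationFilter.unconditional_filter, eventually_atTop]
  refine ⟨range N, fun s hs => ?_⟩
  set M := max N (s.sup id + 1) with hM
  have hsM : s ⊆ range M := fun j hj => mem_range.2 (lt_of_lt_of_le
    (Nat.lt_succ_of_le (le_sup (f := id) hj)) (le_max_right _ _))
  have hsplit : ∏ j ∈ range M, f j = (∏ j ∈ s, f j) * ∏ j ∈ range M \ s, f j := by
    rw [← Finset.prod_union (Finset.disjoint_sdiff), Finset.union_sdiff_of_subset hsM]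
  have hdvd : X ^ (n + 1) ∣ (∏ j ∈ range M \ s, f j) - 1 := by
    refine dvd_sub_one_prod fun i hi => h1 i ?_
    rcases Finset.mem_sdiff.1 hi with ⟨_, hns⟩
    by_contra hlt
    exact hns (hs (by simpa using Nat.lt_of_not_le hlt))
  calc coeff (R := K) n (∏ j ∈ s, f j)
      = coeff (R := K) n ((∏ j ∈ s, f j) * ∏ j ∈ range M \ s, f j) :=
        (coeff_mul_congr_one (Nat.lt_succ_self n) hdvd).symm
    _ = coeff (R := K) n (∏ j ∈ range M, f j) := by rw [hsplit]
    _ = coeff (R := K) n S := hS M (le_max_left _ _)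

def sumOf (f : ℕ → R) : R := PowerSeries.mk fun n => coeff (R := K) n (∑ j ∈ range (n + 2), f j)

lemma hasSum_sumOf {f : ℕ → R} (h : ∀ n j, n + 2 ≤ j → coeff (R := K) n (f j) = 0) :
    HasSum f (sumOf f) :=
  hasSum_of_coeff fun n => ⟨n + 2, fun j hj => h n j hj, by rw [sumOf, coeff_mk]⟩

section Gc
variable {A : Type*} [CommRing A]

def gc (y : A) : ℕ → ℕ → A
  | _, 0 => 1
  | 0, _ + 1 => 0
  | N + 1, a + 1 => gc y N a + y ^ (a + 1) * gc y N (a + 1)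

lemma gc_zero (y : A) : ∀ {N a : ℕ}, N < a → gc y N a = 0 := by
  intro N
  induction N with
  | zero => intro a h; match a, h with | a + 1, _ => rfl
  | succ N ih =>
      intro a h
      match a, h with
      | a + 1, h =>
          show gc y N a + y ^ (a + 1) * gc y N (a + 1) = 0
          rw [ih (by omega), ih (by omega), mul_zero, add_zero]

lemma nat_half_succ (a : ℕ) : (a + 1) * a / 2 = a * (a - 1) / 2 + a := by
  cases a with
  | zero => rfl
  | succ b =>
      have h1 : (b + 2) * (b + 1) = (b + 1) * b + 2 * (b + 1) := by ring
      rw [h1, Nat.add_mul_div_left _ _ (by norm_num), Nat.succ_sub_one]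

lemma gc_mul (y : A) (N a : ℕ) :
    gc y N a * ∏ i ∈ range a, (1 - y ^ (i + 1)) = ∏ i ∈ range a, (1 - y ^ (N - i)) := by
  induction N generalizing a with
  | zero =>
      cases a with
      | zero => simp [gc]
      | succ b =>
          rw [gc_zero y (Nat.succ_pos b), zero_mul]
          refine (Finset.prod_eq_zero (Finset.mem_range.2 (Nat.succ_pos b)) ?_).symm
          simp
  | succ N ih =>
      cases a with
      | zero => simp [gc]
      | succ b =>
          by_cases hb : b ≤ N
          · show (gc y N b + y ^ (b + 1) * gc y N (b + 1)) * _ = _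
            have e1 : ∏ i ∈ range (b + 1), (1 - y ^ (i + 1)) =
                (∏ i ∈ range b, (1 - y ^ (i + 1))) * (1 - y ^ (b + 1)) := prod_range_succ _ _
            have e2 : ∏ i ∈ range (b + 1), (1 - y ^ (N + 1 - i)) =
                (∏ i ∈ range b, (1 - y ^ (N - i))) * (1 - y ^ (N + 1)) := by
              rw [Finset.prod_range_succ']
              congr 1
              refine Finset.prod_congr rfl fun i _ => ?_
              congr 2
              omega
            have e3 : ∏ i ∈ range (b + 1), (1 - y ^ (N - i)) =
                (∏ i ∈ range b, (1 - y ^ (N - i))) * (1 - y ^ (N - b)) := prod_range_succ _ _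
            have hkey : (1 - y ^ (b + 1)) + y ^ (b + 1) * (1 - y ^ (N - b)) = 1 - y ^ (N + 1) := by
              have hx : y ^ (b + 1) * y ^ (N - b) = y ^ (N + 1) := by
                rw [← pow_add]; congr 1; omega
              linear_combination -hx
            calc (gc y N b + y ^ (b + 1) * gc y N (b + 1)) * ∏ i ∈ range (b + 1), (1 - y ^ (i + 1))
                = (gc y N b * ∏ i ∈ range b, (1 - y ^ (i + 1))) * (1 - y ^ (b + 1))
                  + y ^ (b + 1) * (gc y N (b + 1) * ∏ i ∈ range (b + 1), (1 - y ^ (i + 1))) := by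
                  rw [e1]; ring
              _ = (∏ i ∈ range b, (1 - y ^ (N - i))) * (1 - y ^ (b + 1))
                  + y ^ (b + 1) * ∏ i ∈ range (b + 1), (1 - y ^ (N - i)) := by rw [ih b, ih (b + 1)]
              _ = (∏ i ∈ range b, (1 - y ^ (N - i))) *
                    ((1 - y ^ (b + 1)) + y ^ (b + 1) * (1 - y ^ (N - b))) := by rw [e3]; ring
              _ = (∏ i ∈ range b, (1 - y ^ (N - i))) * (1 - y ^ (N + 1)) := by rw [hkey]
              _ = ∏ i ∈ range (b + 1), (1 - y ^ (N + 1 - i)) := e2.symm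
          · rw [gc_zero y (by omega), zero_mul]
            refine (Finset.prod_eq_zero (Finset.mem_range.2 (show N + 1 < b + 1 by omega)) ?_).symm
            rw [Nat.sub_self]; simp

lemma sum_shift {g : ℕ → A} {N : ℕ} (h : g (N + 1) = 0) :
    ∑ a ∈ Finset.range (N + 1), g (a + 1) = (∑ a ∈ Finset.range (N + 1), g a) - g 0 := by
  have h2 := Finset.sum_range_succ' g (N + 1)
  have h3 := Finset.sum_range_succ g (N + 1)
  rw [h3, h, add_zero] at h2
  linear_combination -h2

lemma gc_gauss (y : A) (N : ℕ) (z : A) :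
    ∑ a ∈ range (N + 1), (-1 : A) ^ a * y ^ (a * (a - 1) / 2) * gc y N a * z ^ a
      = ∏ i ∈ range N, (1 - y ^ i * z) := by
  induction N generalizing z with
  | zero => simp [gc]
  | succ N ih =>
      have key : ∀ a : ℕ,
          (-1 : A) ^ (a + 1) * y ^ ((a + 1) * (a + 1 - 1) / 2) * gc y (N + 1) (a + 1) * z ^ (a + 1)
          = -(z * ((-1) ^ a * y ^ (a * (a - 1) / 2) * gc y N a * (y * z) ^ a))
            + (-1 : A) ^ (a + 1) * y ^ ((a + 1) * (a + 1 - 1) / 2) * gc y N (a + 1) *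
              (y * z) ^ (a + 1) := by
        intro a
        show (-1 : A) ^ (a + 1) * y ^ ((a + 1) * (a + 1 - 1) / 2) *
            (gc y N a + y ^ (a + 1) * gc y N (a + 1)) * z ^ (a + 1) = _
        simp only [Nat.add_sub_cancel]
        rw [nat_half_succ]
        rw [pow_add y (a * (a - 1) / 2) a]
        rw [mul_pow y z a, mul_pow y z (a + 1), pow_succ (-1 : A) a, pow_succ y a, pow_succ z a]
        ring
      rw [Finset.sum_range_succ']
      rw [Finset.sum_congr rfl (fun a _ => key a), Finset.sum_add_distrib]
      have hs := sum_shift (N := N)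
        (g := fun b => (-1 : A) ^ b * y ^ (b * (b - 1) / 2) * gc y N b * (y * z) ^ b)
        (by simp [gc_zero y (Nat.lt_succ_self N)])
      rw [hs]
      have hsum : ∑ a ∈ range (N + 1),
          -(z * ((-1 : A) ^ a * y ^ (a * (a - 1) / 2) * gc y N a * (y * z) ^ a))
          = -(z * ∑ a ∈ range (N + 1),
              ((-1 : A) ^ a * y ^ (a * (a - 1) / 2) * gc y N a * (y * z) ^ a)) := by
        rw [Finset.mul_sum, ← Finset.sum_neg_distrib]
      rw [hsum, ih (y * z)]
      have hc : ∏ i ∈ range N, (1 - y ^ i * (y * z)) = ∏ i ∈ range N, (1 - y ^ (i + 1) * z) := by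
        refine Finset.prod_congr rfl fun i _ => ?_
        rw [pow_succ]; ring
      rw [hc]
      have hr : ∏ i ∈ range (N + 1), (1 - y ^ i * z)
          = (∏ i ∈ range N, (1 - y ^ (i + 1) * z)) * (1 - y ^ 0 * z) := Finset.prod_range_succ' _ _
      rw [hr]
      norm_num [gc]
      ring
end Gc

-- K-level facts
lemma t_ne_zero : t ≠ 0 := RatFunc.X_ne_zero

lemma t_pow_ne_one {i : ℕ} (hi : 1 ≤ i) : t ^ i ≠ 1 := by
  intro h
  have h2 : (Polynomial.X : Polynomial ℚ) ^ i = 1 := by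
    apply RatFunc.algebraMap_injective ℚ
    rw [map_pow, map_one, RatFunc.algebraMap_X]
    exact h
  have h3 := congrArg Polynomial.natDegree h2
  rw [Polynomial.natDegree_X_pow, Polynomial.natDegree_one] at h3
  omega

lemma one_sub_t_pow_ne_zero {i : ℕ} (hi : 1 ≤ i) : 1 - t ^ i ≠ 0 := by
  intro h
  exact t_pow_ne_one hi (by linear_combination -h)

lemma gb_eq_gc (m a : ℕ) : gb m a = gc t m a := by
  by_cases h : a ≤ m
  · rw [gb, if_pos h, Finset.prod_div_distrib]
    have hD : ∏ i ∈ range a, (1 - t ^ (i + 1)) ≠ 0 :=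
      Finset.prod_ne_zero_iff.2 fun i _ => one_sub_t_pow_ne_zero (Nat.succ_le_succ (Nat.zero_le i))
    rw [div_eq_iff hD, gc_mul]
  · rw [gb, if_neg h, gc_zero t (Nat.lt_of_not_le h)]

-- power series objects
def Y : R := C (R := K) t * X

lemma Y_pow (j : ℕ) : Y ^ j = C (R := K) (t ^ j) * X ^ j := by rw [Y, mul_pow, map_pow]

lemma X_pow_dvd_Y_pow {c j : ℕ} (h : c ≤ j) : (X : R) ^ c ∣ Y ^ j :=
  (pow_dvd_pow X h).trans ⟨C (R := K) (t ^ j), by rw [Y_pow]; ring⟩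

lemma constantCoeff_Y : constantCoeff (R := K) Y = 0 := by simp [Y]

def Dk (k : ℕ) : R := ∏ i ∈ range k, (1 - Y ^ (i + 1))

lemma constantCoeff_Dk (k : ℕ) : constantCoeff (R := K) (Dk k) = 1 := by
  rw [Dk, map_prod]
  refine Finset.prod_eq_one fun i _ => ?_
  rw [map_sub, map_one, map_pow, constantCoeff_Y, zero_pow (Nat.succ_ne_zero i), sub_zero]

lemma Dk_mul_inv (k : ℕ) : Dk k * (Dk k)⁻¹ = 1 :=
  PowerSeries.mul_inv_cancel _ (by rw [constantCoeff_Dk]; exact one_ne_zero)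

lemma inv_unique {f g : R} (hf : constantCoeff (R := K) f ≠ 0) (h : f * g = 1) : f⁻¹ = g := by
  have h2 := PowerSeries.inv_mul_cancel f hf
  calc f⁻¹ = f⁻¹ * (f * g) := by rw [h, mul_one]
    _ = (f⁻¹ * f) * g := by ring
    _ = g := by rw [h2, one_mul]

-- congruence helpers
lemma dvd_of_coeff_eq {c : ℕ} {A B : R} (h : ∀ i, i < c → coeff (R := K) i A = coeff (R := K) i B) :
    X ^ c ∣ A - B :=
  X_pow_dvd_iff.2 fun m hm => by rw [map_sub, h m hm, sub_self]

lemma coeff_eq_of_dvd {c : ℕ} {A B : R} (h : X ^ c ∣ A - B) {i : ℕ} (hi : i < c) :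
    coeff (R := K) i A = coeff (R := K) i B := by
  have h2 := X_pow_dvd_iff.1 h i hi
  rw [map_sub, sub_eq_zero] at h2
  exact h2

lemma cong_mul {c : ℕ} {A B A' B' : R} (h : X ^ c ∣ A - B) (h' : X ^ c ∣ A' - B') :
    X ^ c ∣ A * A' - B * B' := by
  have e : A * A' - B * B' = A * (A' - B') + (A - B) * B' := by ring
  rw [e]
  exact dvd_add (h'.mul_left _) (h.mul_right _)

lemma cong_inv {c : ℕ} {A B : R} (hA : constantCoeff (R := K) A ≠ 0) (hB : constantCoeff (R := K) B ≠ 0)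
    (h : X ^ c ∣ A - B) : X ^ c ∣ A⁻¹ - B⁻¹ := by
  have h1 := PowerSeries.mul_inv_cancel A hA
  have h2 := PowerSeries.mul_inv_cancel B hB
  have e : A⁻¹ - B⁻¹ = A⁻¹ * (B - A) * B⁻¹ := by
    calc A⁻¹ - B⁻¹ = A⁻¹ * (B * B⁻¹) - (A * A⁻¹) * B⁻¹ := by rw [h1, h2]; ring
      _ = A⁻¹ * (B - A) * B⁻¹ := by ring
  rw [e]
  exact ((dvd_sub_comm.mp h).mul_left _).mul_right _

-- Euler factors
def eft (z : K) (d : ℕ) : R := 1 - C (R := K) z * Y ^ (d + 1)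

lemma eft_sub_one (z : K) (d : ℕ) : X ^ (d + 1) ∣ eft z d - 1 := by
  have e : eft z d - 1 = -(C (R := K) z * Y ^ (d + 1)) := by rw [eft]; ring
  rw [e]
  exact ((X_pow_dvd_Y_pow (le_refl (d + 1))).mul_left _).neg_right

lemma constantCoeff_eft (z : K) (d : ℕ) : constantCoeff (R := K) (eft z d) = 1 := by
  rw [eft, map_sub, map_one, map_mul, map_pow, constantCoeff_Y,
    zero_pow (Nat.succ_ne_zero d), mul_zero, sub_zero]

lemma prod_eft_congr (z : K) {n M M' : ℕ} (h : n ≤ M) (h2 : M ≤ M') :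
    X ^ (n + 1) ∣ (∏ d ∈ range M', eft z d) - (∏ d ∈ range M, eft z d) := by
  rw [← Finset.prod_range_mul_prod_Ico _ h2]
  have hd : X ^ (n + 1) ∣ (∏ d ∈ Finset.Ico M M', eft z d) - 1 := by
    refine dvd_sub_one_prod fun i hi => ?_
    have hMi : M ≤ i := (Finset.mem_Ico.1 hi).1
    exact (pow_dvd_pow X (by omega)).trans (eft_sub_one z i)
  have e : (∏ d ∈ range M, eft z d) * (∏ d ∈ Finset.Ico M M', eft z d)
      - (∏ d ∈ range M, eft z d)
      = (∏ d ∈ range M, eft z d) * ((∏ d ∈ Finset.Ico M M', eft z d) - 1) := by ring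
  rw [e]
  exact hd.mul_left _

def S (z : K) : R := PowerSeries.mk fun n => coeff (R := K) n (∏ d ∈ range (n + 1), eft z d)

lemma coeff_S (z : K) {n M : ℕ} (h : n ≤ M) :
    coeff (R := K) n (S z) = coeff (R := K) n (∏ d ∈ range M, eft z d) := by
  rw [S, coeff_mk]
  rcases le_total (n + 1) M with h2 | h2
  · exact (coeff_eq_of_dvd (prod_eft_congr z (show n ≤ n + 1 by omega) h2) (Nat.lt_succ_self n)).symm
  · exact coeff_eq_of_dvd (prod_eft_congr z h h2) (Nat.lt_succ_self n)

lemma dvd_S_prod (z : K) {n M : ℕ} (h : n ≤ M) :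
    X ^ (n + 1) ∣ (∏ d ∈ range M, eft z d) - S z :=
  dvd_of_coeff_eq fun i hi => (coeff_S z (show i ≤ M by omega)).symm

lemma constantCoeff_S (z : K) : constantCoeff (R := K) (S z) = 1 := by
  have h := coeff_S z (le_refl 0)
  rw [Finset.range_zero, Finset.prod_empty] at h
  rw [← coeff_zero_eq_constantCoeff, h]
  simp

lemma euler_hasProd (z : K) : HasProd (eft z) (S z) := by
  refine hasProd_of_coeff fun n => ⟨n + 1, fun j hj => ?_, fun M hM => ?_⟩
  · exact (pow_dvd_pow X (by omega)).trans (eft_sub_one z j)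
  · exact (coeff_S z (by omega)).symm

lemma le_half (j : ℕ) : j ≤ j * (j + 1) / 2 := by
  have h : 2 * j ≤ j * (j + 1) := by
    cases j with
    | zero => simp
    | succ s => nlinarith [sq_nonneg s]
  calc j = 2 * j / 2 := by omega
    _ ≤ j * (j + 1) / 2 := Nat.div_le_div_right h

lemma nat_half (j : ℕ) : j * (j + 1) / 2 = j * (j - 1) / 2 + j := by
  rw [mul_comm]; exact nat_half_succ j

lemma gauss_R (z : K) (N : ℕ) :
    ∏ d ∈ range N, eft z d
      = ∑ j ∈ range (N + 1), C (R := K) ((-1) ^ j * z ^ j) * gc Y N j * Y ^ (j * (j + 1) / 2) := by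
  have h := gc_gauss Y N (C (R := K) z * Y)
  have hL : ∀ a : ℕ, (-1 : R) ^ a * Y ^ (a * (a - 1) / 2) * gc Y N a * (C (R := K) z * Y) ^ a
      = C (R := K) ((-1) ^ a * z ^ a) * gc Y N a * Y ^ (a * (a + 1) / 2) := by
    intro a
    rw [nat_half, pow_add, mul_pow, map_mul, map_pow, map_pow, map_neg, map_one]
    ring
  have hR : ∀ i : ℕ, (1 : R) - Y ^ i * (C (R := K) z * Y) = eft z i := by
    intro i
    rw [eft, pow_succ]
    ring
  rw [← Finset.prod_congr rfl fun i _ => hR i, ← h,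
    Finset.sum_congr rfl fun a _ => (hL a).symm]

lemma euler_hasSum (z : K) :
    HasSum (fun j => C (R := K) ((-1) ^ j * z ^ j) * Y ^ (j * (j + 1) / 2) * (Dk j)⁻¹) (S z) := by
  refine hasSum_of_coeff fun n => ⟨n + 1, fun j hj => ?_, ?_⟩
  · refine coeff_zero_of_dvd ?_ (lt_of_lt_of_le (show n < j by omega) (le_half j))
    exact (X_pow_dvd_Y_pow (le_refl (j * (j + 1) / 2))).trans
      ⟨C (R := K) ((-1) ^ j * z ^ j) * (Dk j)⁻¹, by ring⟩
  · rw [coeff_S z (show n ≤ n + 1 by omega), gauss_R z (n + 1), map_sum, map_sum]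
    conv_rhs => rw [Finset.sum_range_succ]
    have hlast : coeff (R := K) n (C (R := K) ((-1) ^ (n + 1) * z ^ (n + 1)) * gc Y (n + 1) (n + 1) *
        Y ^ ((n + 1) * (n + 1 + 1) / 2)) = 0 := by
      refine coeff_zero_of_dvd ?_ (lt_of_lt_of_le (Nat.lt_succ_self n) (le_half (n + 1)))
      exact (X_pow_dvd_Y_pow (le_refl ((n + 1) * (n + 1 + 1) / 2))).trans
        ⟨C (R := K) ((-1) ^ (n + 1) * z ^ (n + 1)) * gc Y (n + 1) (n + 1), by ring⟩
    rw [hlast, add_zero]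
    refine Finset.sum_congr rfl fun j hj => ?_
    have hjn : j ≤ n + 1 := by have := Finset.mem_range.1 hj; omega
    have hgc : gc Y (n + 1) j = (∏ i ∈ range j, (1 - Y ^ (n + 1 - i))) * (Dk j)⁻¹ := by
      have h1 := gc_mul Y (n + 1) j
      rw [← h1]
      show gc Y (n + 1) j = gc Y (n + 1) j * (∏ i ∈ range j, (1 - Y ^ (i + 1))) * (Dk j)⁻¹
      rw [show (∏ i ∈ range j, ((1 : R) - Y ^ (i + 1))) = Dk j from rfl, mul_assoc, Dk_mul_inv,
        mul_one]
    have hdvd : X ^ (n + 1) ∣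
        C (R := K) ((-1) ^ j * z ^ j) * Y ^ (j * (j + 1) / 2) * (Dk j)⁻¹ -
        C (R := K) ((-1) ^ j * z ^ j) * gc Y (n + 1) j * Y ^ (j * (j + 1) / 2) := by
      rw [hgc]
      have e : C (R := K) ((-1) ^ j * z ^ j) * Y ^ (j * (j + 1) / 2) * (Dk j)⁻¹ -
          C (R := K) ((-1) ^ j * z ^ j) * ((∏ i ∈ range j, (1 - Y ^ (n + 1 - i))) * (Dk j)⁻¹) *
            Y ^ (j * (j + 1) / 2)
          = -(Y ^ (j * (j + 1) / 2) * ((∏ i ∈ range j, (1 - Y ^ (n + 1 - i))) - 1)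
              * (C (R := K) ((-1) ^ j * z ^ j) * (Dk j)⁻¹)) := by ring
      rw [e]
      refine Dvd.dvd.neg_right (Dvd.dvd.mul_right ?_ _)
      have h1 : (X : R) ^ j ∣ Y ^ (j * (j + 1) / 2) := X_pow_dvd_Y_pow (le_half j)
      have h2 : (X : R) ^ (n + 2 - j) ∣ (∏ i ∈ range j, (1 - Y ^ (n + 1 - i))) - 1 := by
        refine dvd_sub_one_prod fun i hi => ?_
        have hij : i < j := Finset.mem_range.1 hi
        have e2 : (1 : R) - Y ^ (n + 1 - i) - 1 = -(Y ^ (n + 1 - i)) := by ring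
        rw [e2]
        exact (X_pow_dvd_Y_pow (by omega)).neg_right
      have h3 := mul_dvd_mul h1 h2
      rw [← pow_add] at h3
      exact (pow_dvd_pow X (by omega)).trans h3
    exact coeff_eq_of_dvd hdvd (Nat.lt_succ_self n)

-- ℤ-power kit
lemma tz_add (x y : ℤ) : t ^ (x + y) = t ^ x * t ^ y := zpow_add₀ t_ne_zero x y

lemma tz_nat (n : ℕ) : t ^ (n : ℤ) = t ^ n := zpow_natCast t n

lemma tz_pow_nat (x : ℤ) (n : ℕ) : (t ^ x) ^ n = t ^ (x * n) := by
  induction n with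
  | zero => simp
  | succ s ih =>
      rw [pow_succ, ih, ← tz_add]
      congr 1
      push_cast
      ring

lemma tz_prod (s : Finset ℕ) (f : ℕ → ℤ) : ∏ i ∈ s, t ^ f i = t ^ (∑ i ∈ s, f i) := by
  classical
  induction s using Finset.induction_on with
  | empty => simp
  | @insert a s ha ih => rw [Finset.prod_insert ha, Finset.sum_insert ha, tz_add, ih]

lemma neg_one_pow_inv (n : ℕ) : ((-1 : K) ^ n)⁻¹ = (-1 : K) ^ n := by
  rcases Nat.even_or_odd n with h | h
  · rw [h.neg_one_pow]; norm_num
  · rw [h.neg_one_pow]; norm_num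

lemma sign_z (k m : ℕ) : (-1 : K) ^ ((k : ℤ) - (m : ℤ)) = (-1 : K) ^ k * (-1 : K) ^ m := by
  rw [zpow_sub₀ (by norm_num : (-1 : K) ≠ 0), zpow_natCast, zpow_natCast, div_eq_mul_inv,
    neg_one_pow_inv]

lemma zdiv_half (k : ℕ) : (k : ℤ) * ((k : ℤ) - 1) / 2 = ((k * (k - 1) / 2 : ℕ) : ℤ) := by
  cases k with
  | zero => rfl
  | succ s =>
      rw [Int.natCast_div]
      push_cast [Nat.succ_sub_one]
      ring_nf

lemma zdiv_half' (k : ℕ) : (k : ℤ) * ((k : ℤ) + 1) / 2 = ((k * (k + 1) / 2 : ℕ) : ℤ) := by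
  rw [Int.natCast_div]
  push_cast
  ring_nf

-- scalar definitions
def eK (m : ℕ) : K := ∏ i ∈ Finset.Icc 1 (m - 1), (1 - t ^ (i + 1))
def DK (m : ℕ) : K := ∏ i ∈ range m, (1 - t ^ (i + 1))
def cK (m a : ℕ) : K := (-1) ^ (a + 1) * t ^ (a * (a - 1) / 2 + m - 1) * gb m a
def wK (a : ℕ) : K := (1 - t ^ (-(a : ℤ))) * (1 - t ^ (-1 : ℤ))⁻¹
def piK (m j : ℕ) : K := ∏ i ∈ range m, (1 - t ^ ((i : ℤ) - (j : ℤ)))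

lemma DK_ne_zero (m : ℕ) : DK m ≠ 0 :=
  Finset.prod_ne_zero_iff.2 fun i _ => one_sub_t_pow_ne_zero (Nat.succ_le_succ (Nat.zero_le i))

lemma eK_ne_zero (m : ℕ) : eK m ≠ 0 :=
  Finset.prod_ne_zero_iff.2 fun i _ => one_sub_t_pow_ne_zero (by omega)

lemma one_sub_t_ne_zero : 1 - t ≠ 0 := by
  have := one_sub_t_pow_ne_zero (le_refl 1)
  rwa [pow_one] at this

lemma t_zpow_neg_one : t ^ (-1 : ℤ) = t⁻¹ := by
  rw [zpow_neg, zpow_one]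

lemma one_sub_t_zpow_neg_one_ne_zero : 1 - t ^ (-1 : ℤ) ≠ 0 := by
  rw [t_zpow_neg_one]
  intro h
  have h2 : t⁻¹ = 1 := by linear_combination -h
  rw [inv_eq_one] at h2
  exact t_pow_ne_one (le_refl 1) (by rwa [pow_one])

lemma one_sub_t_zpow_neg_ne_zero {a : ℕ} (ha : 1 ≤ a) : 1 - t ^ (-(a : ℤ)) ≠ 0 := by
  intro h
  have h2 : t ^ (-(a : ℤ)) = 1 := by linear_combination -h
  rw [zpow_neg, zpow_natCast, inv_eq_one] at h2
  exact t_pow_ne_one ha h2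

lemma DK_eq {m : ℕ} (hm : 1 ≤ m) : DK m = (1 - t) * eK m := by
  obtain ⟨k, rfl⟩ : ∃ k, m = k + 1 := ⟨m - 1, by omega⟩
  rw [DK, eK, Nat.add_sub_cancel, Finset.prod_range_succ']
  have e0 : (1 : K) - t ^ (0 + 1) = 1 - t := by norm_num
  rw [e0]
  rw [show Finset.Icc 1 k = Finset.Ico 1 (k + 1) from (Finset.Ico_add_one_right_eq_Icc 1 k).symm,
    Finset.prod_Ico_eq_prod_range, Nat.add_sub_cancel]
  rw [mul_comm]
  congr 1
  refine Finset.prod_congr rfl fun i _ => ?_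
  congr 2
  omega

lemma hC (m : ℕ) (hm : 1 ≤ m) : (1 - t ^ (-1 : ℤ))⁻¹ * DK m = (-t) * eK m := by
  have h2 : (1 : K) - t = (-t) * (1 - t ^ (-1 : ℤ)) := by
    rw [t_zpow_neg_one]
    linear_combination (-1 : K) * mul_inv_cancel₀ t_ne_zero
  calc (1 - t ^ (-1 : ℤ))⁻¹ * DK m
      = ((1 - t ^ (-1 : ℤ))⁻¹ * (1 - t ^ (-1 : ℤ))) * ((-t) * eK m) := by
        rw [DK_eq hm, h2]; ring
    _ = (-t) * eK m := by rw [inv_mul_cancel₀ one_sub_t_zpow_neg_one_ne_zero, one_mul]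

lemma gauss_K (m : ℕ) (z : K) :
    ∑ a ∈ range (m + 1), (-1 : K) ^ a * t ^ (a * (a - 1) / 2) * gb m a * z ^ a
      = ∏ i ∈ range m, (1 - t ^ i * z) := by
  rw [← gc_gauss t m z]
  exact Finset.sum_congr rfl fun a _ => by rw [gb_eq_gc]

lemma pi_eq (m j : ℕ) :
    piK m j = (-1 : K) ^ m * t ^ (((m * (m - 1) / 2 : ℕ) : ℤ) - (m : ℤ) * (j : ℤ)) *
      (gb j m * DK m) := by
  have step1 : piK m j = (∏ i ∈ range m, -(t ^ ((i : ℤ) - (j : ℤ)))) *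
      ∏ i ∈ range m, (1 - t ^ ((j : ℤ) - (i : ℤ))) := by
    rw [piK, ← Finset.prod_mul_distrib]
    refine Finset.prod_congr rfl fun i _ => ?_
    have h2 : t ^ ((i : ℤ) - (j : ℤ)) * t ^ ((j : ℤ) - (i : ℤ)) = 1 := by
      rw [← tz_add]
      simp
    linear_combination -h2
  have step2 : (∏ i ∈ range m, -(t ^ ((i : ℤ) - (j : ℤ))))
      = (-1 : K) ^ m * t ^ (((m * (m - 1) / 2 : ℕ) : ℤ) - (m : ℤ) * (j : ℤ)) := by
    have h3 : ∀ i : ℕ, -(t ^ ((i : ℤ) - (j : ℤ))) = (-1) * t ^ ((i : ℤ) - (j : ℤ)) := fun i => by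
      ring
    rw [Finset.prod_congr rfl fun i _ => h3 i, Finset.prod_mul_distrib, Finset.prod_const,
      Finset.card_range, tz_prod]
    congr 1
    rw [Finset.sum_sub_distrib, Finset.sum_const, Finset.card_range, ← Nat.cast_sum,
      Finset.sum_range_id]
    simp [nsmul_eq_mul]
  have step3 : ∏ i ∈ range m, (1 - t ^ ((j : ℤ) - (i : ℤ))) = gb j m * DK m := by
    by_cases hjm : m ≤ j
    · have h4 : ∀ i ∈ range m, (1 : K) - t ^ ((j : ℤ) - (i : ℤ)) = 1 - t ^ (j - i) := by
        intro i hi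
        have hij : i ≤ j := by
          have := Finset.mem_range.1 hi
          omega
        rw [← tz_nat (j - i)]
        congr 2
        omega
      rw [Finset.prod_congr rfl h4, ← gc_mul t j m, ← gb_eq_gc, DK]
    · have hj : j ∈ range m := Finset.mem_range.2 (by omega)
      rw [Finset.prod_eq_zero hj (by simp), gb, if_neg hjm, zero_mul]
  rw [step1, step2, step3]

def lK (m k : ℕ) : K :=
  (-1 : K) ^ ((k : ℤ) - (m : ℤ)) *
    t ^ ((k : ℤ) * ((k : ℤ) - 1) / 2 - (k : ℤ) * (m : ℤ) + (m : ℤ) * ((m : ℤ) + 1) / 2) * gb k m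

lemma range_succ_insert (m : ℕ) : insert 0 (Finset.Icc 1 m) = range (m + 1) := by
  ext x
  simp only [Finset.mem_insert, Finset.mem_Icc, Finset.mem_range]
  omega

lemma hsum (m : ℕ) (hm : 1 ≤ m) (j : ℕ) :
    ∑ a ∈ Finset.Icc 1 m, (eK m)⁻¹ * cK m a * wK a * ((-1 : K) ^ j * (t ^ (-(a : ℤ))) ^ j)
      = (-1 : K) ^ j * (eK m)⁻¹ * (1 - t ^ (-1 : ℤ))⁻¹ * t ^ (m - 1) *
        (piK m (j + 1) - piK m j) := by
  set c : K := (-1 : K) ^ j * (eK m)⁻¹ * (1 - t ^ (-1 : ℤ))⁻¹ * t ^ (m - 1) with hc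
  have key : ∀ a : ℕ,
      (eK m)⁻¹ * cK m a * wK a * ((-1 : K) ^ j * (t ^ (-(a : ℤ))) ^ j)
      = c * ((-1 : K) ^ a * t ^ (a * (a - 1) / 2) * gb m a * (t ^ (-(j : ℤ) - 1)) ^ a)
        - c * ((-1 : K) ^ a * t ^ (a * (a - 1) / 2) * gb m a * (t ^ (-(j : ℤ))) ^ a) := by
    intro a
    rw [cK, wK, hc]
    have hA : (t ^ (-(a : ℤ))) ^ j = (t ^ (-(j : ℤ))) ^ a := by
      rw [tz_pow_nat, tz_pow_nat]; congr 1; ring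
    have hB : (t ^ (-(j : ℤ) - 1)) ^ a = (t ^ (-(j : ℤ))) ^ a * t ^ (-(a : ℤ)) := by
      rw [tz_pow_nat, tz_pow_nat, ← tz_add]; congr 1; ring
    have hpow : t ^ (a * (a - 1) / 2 + m - 1) = t ^ (a * (a - 1) / 2) * t ^ (m - 1) := by
      rw [← pow_add]; congr 1; omega
    rw [hA, hB, hpow, pow_succ]
    ring
  rw [Finset.sum_congr rfl fun a _ => key a, Finset.sum_sub_distrib, ← Finset.mul_sum,
    ← Finset.mul_sum]
  have hext : ∀ z : K, ∑ a ∈ Finset.Icc 1 m,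
      (-1 : K) ^ a * t ^ (a * (a - 1) / 2) * gb m a * z ^ a
      = (∏ i ∈ range m, (1 - t ^ i * z)) - 1 := by
    intro z
    have h1 := gauss_K m z
    rw [← range_succ_insert m, Finset.sum_insert (by simp)] at h1
    have h0 : (-1 : K) ^ 0 * t ^ (0 * (0 - 1) / 2) * gb m 0 * z ^ 0 = 1 := by
      simp [gb]
    rw [h0] at h1
    linear_combination h1
  rw [hext, hext]
  have hpi : ∏ i ∈ range m, (1 - t ^ i * t ^ (-(j : ℤ))) = piK m j := by
    rw [piK]
    refine Finset.prod_congr rfl fun i _ => ?_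
    rw [← tz_nat i, ← tz_add]
    congr 2 <;> ring
  have hpi1 : ∏ i ∈ range m, (1 - t ^ i * (t ^ (-(j : ℤ) - 1))) = piK m (j + 1) := by
    rw [piK]
    refine Finset.prod_congr rfl fun i _ => ?_
    rw [← tz_nat i, ← tz_add]
    congr 2 <;> (push_cast; ring)
  rw [hpi1, hpi]
  ring

lemma t_pow_m {m : ℕ} (hm : 1 ≤ m) : t ^ m = t * t ^ (m - 1) := by
  conv_lhs => rw [show m = m - 1 + 1 by omega]
  rw [pow_succ']

lemma cfA (m : ℕ) (hm : 1 ≤ m) (j : ℕ) :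
    (-1 : K) ^ j * (-t) * t ^ (m - 1) *
        ((-1 : K) ^ m * t ^ (((m * (m - 1) / 2 : ℕ) : ℤ) - (m : ℤ) * ((j + 1 : ℕ) : ℤ))) *
        t ^ (j * (j + 1) / 2)
      = (-1 : K) ^ (((j + 1 : ℕ) : ℤ) - (m : ℤ)) *
        t ^ (((j + 1 : ℕ) : ℤ) * (((j + 1 : ℕ) : ℤ) - 1) / 2 - ((j + 1 : ℕ) : ℤ) * (m : ℤ)
          + (m : ℤ) * ((m : ℤ) + 1) / 2) := by
  rw [sign_z (j + 1) m]
  have ht : t ^ m * t ^ (((m * (m - 1) / 2 : ℕ) : ℤ) - (m : ℤ) * ((j + 1 : ℕ) : ℤ)) *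
      t ^ (j * (j + 1) / 2)
      = t ^ (((j + 1 : ℕ) : ℤ) * (((j + 1 : ℕ) : ℤ) - 1) / 2 - ((j + 1 : ℕ) : ℤ) * (m : ℤ)
          + (m : ℤ) * ((m : ℤ) + 1) / 2) := by
    rw [zdiv_half (j + 1), zdiv_half' m]
    rw [show (j + 1) * (j + 1 - 1) / 2 = j * (j - 1) / 2 + j by simpa using nat_half_succ j]
    rw [show m * (m + 1) / 2 = m * (m - 1) / 2 + m from nat_half m]
    rw [← tz_nat m, ← tz_nat (j * (j + 1) / 2), ← tz_add, ← tz_add]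
    rw [show j * (j + 1) / 2 = j * (j - 1) / 2 + j from nat_half j]
    congr 1
    push_cast
    ring
  rw [t_pow_m hm] at ht
  linear_combination ((-1 : K) ^ (j + 1) * (-1 : K) ^ m) * ht

lemma cfB (m : ℕ) (hm : 1 ≤ m) (j : ℕ) :
    (-1 : K) ^ j * (-t) * t ^ (m - 1) *
        ((-1 : K) ^ m * t ^ (((m * (m - 1) / 2 : ℕ) : ℤ) - (m : ℤ) * (j : ℤ))) *
        t ^ (j * (j + 1) / 2)
      = -(t ^ j * ((-1 : K) ^ ((j : ℤ) - (m : ℤ)) *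
          t ^ ((j : ℤ) * ((j : ℤ) - 1) / 2 - (j : ℤ) * (m : ℤ) + (m : ℤ) * ((m : ℤ) + 1) / 2))) := by
  rw [sign_z j m]
  have ht : t ^ m * t ^ (((m * (m - 1) / 2 : ℕ) : ℤ) - (m : ℤ) * (j : ℤ)) *
      t ^ (j * (j + 1) / 2)
      = t ^ j *
        t ^ ((j : ℤ) * ((j : ℤ) - 1) / 2 - (j : ℤ) * (m : ℤ) + (m : ℤ) * ((m : ℤ) + 1) / 2) := by
    rw [zdiv_half j, zdiv_half' m]
    rw [show m * (m + 1) / 2 = m * (m - 1) / 2 + m from nat_half m]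
    rw [← tz_nat m, ← tz_nat (j * (j + 1) / 2), ← tz_nat j, ← tz_add, ← tz_add]
    rw [show j * (j + 1) / 2 = j * (j - 1) / 2 + j from nat_half j]
    rw [← tz_add]
    congr 1
    push_cast
    ring
  rw [t_pow_m hm] at ht
  linear_combination (-((-1 : K) ^ j * (-1 : K) ^ m)) * ht

lemma hid (m : ℕ) (hm : 1 ≤ m) (j : ℕ) :
    (∑ a ∈ Finset.Icc 1 m, (eK m)⁻¹ * cK m a * wK a * ((-1 : K) ^ j * (t ^ (-(a : ℤ))) ^ j))
      * t ^ (j * (j + 1) / 2)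
      = t ^ j * lK m j + lK m (j + 1) := by
  rw [hsum m hm j, pi_eq m (j + 1), pi_eq m j]
  simp only [lK]
  have hE : (eK m)⁻¹ * eK m = 1 := inv_mul_cancel₀ (eK_ne_zero m)
  have hQ := hC m hm
  set W : K := (-1 : K) ^ j * t ^ (m - 1) *
    ((-1 : K) ^ m * t ^ (((m * (m - 1) / 2 : ℕ) : ℤ) - (m : ℤ) * ((j + 1 : ℕ) : ℤ)) * gb (j + 1) m
      - (-1 : K) ^ m * t ^ (((m * (m - 1) / 2 : ℕ) : ℤ) - (m : ℤ) * (j : ℤ)) * gb j m) *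
    t ^ (j * (j + 1) / 2) with hW
  linear_combination ((eK m)⁻¹ * W) * hQ + ((-t) * W) * hE + gb (j + 1) m * cfA m hm j
    + (-(gb j m)) * cfB m hm j

def L (m k : ℕ) : R := C (R := K) (lK m k) * X ^ (k * (k - 1) / 2) * (Dk k)⁻¹
def u (m k : ℕ) : R := Y ^ k * L m k
def V (a : ℕ) : R := C (R := K) (wK a) * S (t ^ (-(a : ℤ))) * (S (t ^ (-1 : ℤ)))⁻¹
def Gf (a : ℕ) (d : ℕ) : R := (1 - C (R := K) (t ^ ((d : ℤ) - (a : ℤ))) * X ^ d) *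
    (1 - C (R := K) (t ^ ((d : ℤ) - 1)) * X ^ d)⁻¹

lemma half_ge (k : ℕ) : k - 1 ≤ k * (k - 1) / 2 := by
  cases k with
  | zero => simp
  | succ s => simpa [Nat.succ_sub_one, mul_comm] using le_half s

lemma hasSum_L (m : ℕ) : HasSum (L m) (sumOf (L m)) := by
  refine hasSum_sumOf fun n j hj => ?_
  refine coeff_zero_of_dvd ⟨C (R := K) (lK m j) * (Dk j)⁻¹, by rw [L]; ring⟩ ?_
  have := half_ge j
  omega

lemma hasSum_u (m : ℕ) : HasSum (u m) (sumOf (u m)) := by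
  refine hasSum_sumOf fun n j hj => ?_
  refine coeff_zero_of_dvd ((X_pow_dvd_Y_pow (le_refl j)).trans (dvd_mul_right _ _)) (by omega)

lemma hasSum_L1 (m : ℕ) : HasSum (fun j => L m (j + 1)) (sumOf (L m) - L m 0) := by
  refine (hasSum_nat_add_iff 1).2 ?_
  simpa using hasSum_L m

lemma hasSum_u1 (m : ℕ) : HasSum (fun j => u m (j + 1)) (sumOf (u m) - u m 0) := by
  refine (hasSum_nat_add_iff 1).2 ?_
  simpa using hasSum_u m

lemma hasSum_tel (m : ℕ) : HasSum (fun j => u m j + L m (j + 1) - u m (j + 1)) (sumOf (L m)) := by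
  have h := ((hasSum_u m).add (hasSum_L1 m)).sub (hasSum_u1 m)
  have hu0 : u m 0 = L m 0 := by rw [u, pow_zero, one_mul]
  have hv : sumOf (u m) + (sumOf (L m) - L m 0) - (sumOf (u m) - u m 0) = sumOf (L m) := by
    rw [hu0]; ring
  rwa [hv] at h

lemma psID (m : ℕ) (hm : 1 ≤ m) (j : ℕ) :
    ∑ a ∈ Finset.Icc 1 m, C (R := K) ((eK m)⁻¹ * cK m a * wK a) *
        (C (R := K) ((-1 : K) ^ j * (t ^ (-(a : ℤ))) ^ j) * Y ^ (j * (j + 1) / 2) * (Dk j)⁻¹)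
      = u m j + L m (j + 1) - u m (j + 1) := by
  have hLHS : ∑ a ∈ Finset.Icc 1 m, C (R := K) ((eK m)⁻¹ * cK m a * wK a) *
        (C (R := K) ((-1 : K) ^ j * (t ^ (-(a : ℤ))) ^ j) * Y ^ (j * (j + 1) / 2) * (Dk j)⁻¹)
      = C (R := K) (∑ a ∈ Finset.Icc 1 m,
          (eK m)⁻¹ * cK m a * wK a * ((-1 : K) ^ j * (t ^ (-(a : ℤ))) ^ j))
        * Y ^ (j * (j + 1) / 2) * (Dk j)⁻¹ := by
    rw [map_sum, Finset.sum_mul, Finset.sum_mul]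
    refine Finset.sum_congr rfl fun a _ => ?_
    simp only [map_mul]
    ring
  rw [hLHS]
  have hu : u m j = C (R := K) (t ^ j * lK m j) * X ^ (j * (j + 1) / 2) * (Dk j)⁻¹ := by
    rw [u, L, Y_pow, map_mul]
    rw [show j * (j + 1) / 2 = j * (j - 1) / 2 + j from nat_half j, pow_add]
    ring
  have hrest : L m (j + 1) - u m (j + 1)
      = C (R := K) (lK m (j + 1)) * X ^ (j * (j + 1) / 2) * (Dk j)⁻¹ := by
    have hdk : Dk (j + 1) = Dk j * (1 - Y ^ (j + 1)) := Finset.prod_range_succ _ _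
    have hc1 : constantCoeff (R := K) (1 - Y ^ (j + 1)) ≠ 0 := by
      rw [map_sub, map_one, map_pow, constantCoeff_Y, zero_pow (Nat.succ_ne_zero j), sub_zero]
      exact one_ne_zero
    have hinv : (1 - Y ^ (j + 1)) * (Dk (j + 1))⁻¹ = (Dk j)⁻¹ := by
      rw [hdk, PowerSeries.mul_inv_rev]
      calc (1 - Y ^ (j + 1)) * ((1 - Y ^ (j + 1))⁻¹ * (Dk j)⁻¹)
          = ((1 - Y ^ (j + 1)) * (1 - Y ^ (j + 1))⁻¹) * (Dk j)⁻¹ := by ring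
        _ = (Dk j)⁻¹ := by rw [PowerSeries.mul_inv_cancel _ hc1, one_mul]
    have hX : (X : R) ^ ((j + 1) * (j + 1 - 1) / 2) = (X : R) ^ (j * (j + 1) / 2) := by
      rw [Nat.add_sub_cancel, Nat.mul_comm]
    calc L m (j + 1) - u m (j + 1)
        = (1 - Y ^ (j + 1)) * L m (j + 1) := by rw [u]; ring
      _ = C (R := K) (lK m (j + 1)) * X ^ ((j + 1) * (j + 1 - 1) / 2) *
            ((1 - Y ^ (j + 1)) * (Dk (j + 1))⁻¹) := by rw [L]; ring
      _ = _ := by rw [hinv, hX]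
  rw [hu, add_sub_assoc, hrest, Y_pow]
  have hCC : C (R := K) (∑ a ∈ Finset.Icc 1 m,
        (eK m)⁻¹ * cK m a * wK a * ((-1 : K) ^ j * (t ^ (-(a : ℤ))) ^ j)) *
        C (R := K) (t ^ (j * (j + 1) / 2))
      = C (R := K) (t ^ j * lK m j) + C (R := K) (lK m (j + 1)) := by
    rw [← map_mul, hid m hm j, map_add]
  linear_combination ((X : R) ^ (j * (j + 1) / 2) * (Dk j)⁻¹) * hCC

lemma main_eq (m : ℕ) (hm : 1 ≤ m) :
    ∑ a ∈ Finset.Icc 1 m, C (R := K) ((eK m)⁻¹ * cK m a * wK a) * S (t ^ (-(a : ℤ)))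
      = sumOf (L m) := by
  have h1 : HasSum (fun j => ∑ a ∈ Finset.Icc 1 m, C (R := K) ((eK m)⁻¹ * cK m a * wK a) *
        (C (R := K) ((-1 : K) ^ j * (t ^ (-(a : ℤ))) ^ j) * Y ^ (j * (j + 1) / 2) * (Dk j)⁻¹))
      (∑ a ∈ Finset.Icc 1 m, C (R := K) ((eK m)⁻¹ * cK m a * wK a) * S (t ^ (-(a : ℤ)))) :=
    hasSum_sum fun a _ => (euler_hasSum (t ^ (-(a : ℤ)))).mul_left _
  have h2 := hasSum_tel m
  rw [← funext fun j => psID m hm j] at h2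
  exact h1.unique h2

def uf (a d : ℕ) : R := 1 - C (R := K) (t ^ ((d : ℤ) - (a : ℤ))) * X ^ d

lemma constantCoeff_uf_pos (a : ℕ) {d : ℕ} (hd : 1 ≤ d) : constantCoeff (R := K) (uf a d) = 1 := by
  rw [uf, map_sub, map_one, map_mul, map_pow, constantCoeff_X, zero_pow (by omega), mul_zero,
    sub_zero]

lemma uf_zero (a : ℕ) : uf a 0 = C (R := K) (1 - t ^ (-(a : ℤ))) := by
  rw [uf, pow_zero, mul_one, map_sub, map_one]
  congr 2
  simp

lemma constantCoeff_uf_ne {a : ℕ} (ha : 1 ≤ a) (d : ℕ) : constantCoeff (R := K) (uf a d) ≠ 0 := by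
  cases d with
  | zero =>
      rw [uf_zero, PowerSeries.constantCoeff_C]
      exact one_sub_t_zpow_neg_ne_zero ha
  | succ s =>
      rw [constantCoeff_uf_pos a (Nat.succ_le_succ (Nat.zero_le s))]
      exact one_ne_zero

lemma uf_succ (a d : ℕ) : uf a (d + 1) = eft (t ^ (-(a : ℤ))) d := by
  rw [uf, eft, Y_pow, ← mul_assoc, ← map_mul]
  congr 3
  rw [← tz_nat (d + 1), ← tz_add]
  congr 1
  push_cast
  ring

lemma prod_uf (a M : ℕ) : ∏ d ∈ range (M + 1), uf a d
    = C (R := K) (1 - t ^ (-(a : ℤ))) * ∏ d ∈ range M, eft (t ^ (-(a : ℤ))) d := by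
  rw [Finset.prod_range_succ', Finset.prod_congr rfl fun d _ => uf_succ a d, uf_zero]
  ring

lemma constantCoeff_prod_eft (z : K) (M : ℕ) :
    constantCoeff (R := K) (∏ d ∈ range M, eft z d) = 1 := by
  rw [map_prod]
  exact Finset.prod_eq_one fun i _ => constantCoeff_eft z i

lemma prod_inv {s : Finset ℕ} {f : ℕ → R} (h : ∀ i ∈ s, constantCoeff (R := K) (f i) ≠ 0) :
    (∏ i ∈ s, f i)⁻¹ = ∏ i ∈ s, (f i)⁻¹ := by
  refine inv_unique ?_ ?_
  · rw [map_prod]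
    exact Finset.prod_ne_zero_iff.2 h
  · rw [← Finset.prod_mul_distrib]
    exact Finset.prod_eq_one fun i hi => PowerSeries.mul_inv_cancel _ (h i hi)

lemma Gf_eq (a d : ℕ) : Gf a d = uf a d * (uf 1 d)⁻¹ := by
  rw [Gf, uf, uf, Nat.cast_one]

lemma hasProd_Gf (m : ℕ) {a : ℕ} (ha : 1 ≤ a) : HasProd (Gf a) (V a) := by
  refine hasProd_of_coeff fun n => ⟨n + 2, fun j hj => ?_, fun M hM => ?_⟩
  · have hc1 : constantCoeff (R := K) (uf 1 j) ≠ 0 := constantCoeff_uf_ne (le_refl 1) j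
    have hv := PowerSeries.mul_inv_cancel _ hc1
    have e : Gf a j - 1 = (uf a j - uf 1 j) * (uf 1 j)⁻¹ := by
      rw [Gf_eq]
      calc uf a j * (uf 1 j)⁻¹ - 1 = uf a j * (uf 1 j)⁻¹ - uf 1 j * (uf 1 j)⁻¹ := by rw [hv]
        _ = (uf a j - uf 1 j) * (uf 1 j)⁻¹ := by ring
    have e2 : uf a j - uf 1 j
        = (C (R := K) (t ^ ((j : ℤ) - ((1 : ℕ) : ℤ))) - C (R := K) (t ^ ((j : ℤ) - (a : ℤ)))) * X ^ j := by
      rw [uf, uf]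
      ring
    rw [e, e2]
    exact (((pow_dvd_pow X (show n + 1 ≤ j by omega)).mul_left _).mul_right _)
  · obtain ⟨M', rfl⟩ : ∃ M', M = M' + 1 := ⟨M - 1, by omega⟩
    have hM' : n ≤ M' := by omega
    have hsplit : ∏ d ∈ range (M' + 1), Gf a d
        = (C (R := K) (wK a)) *
          ((∏ d ∈ range M', eft (t ^ (-(a : ℤ))) d) *
            (∏ d ∈ range M', eft (t ^ (-1 : ℤ)) d)⁻¹) := by
      rw [Finset.prod_congr rfl fun d _ => Gf_eq a d, Finset.prod_mul_distrib,
        ← prod_inv (fun i _ => constantCoeff_uf_ne (le_refl 1) i), prod_uf, prod_uf]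
      simp only [Nat.cast_one]
      rw [PowerSeries.mul_inv_rev, PowerSeries.C_inv, wK, map_mul]
      ring
    rw [hsplit]
    have hdvd : X ^ (n + 1) ∣
        C (R := K) (wK a) * ((∏ d ∈ range M', eft (t ^ (-(a : ℤ))) d) *
            (∏ d ∈ range M', eft (t ^ (-1 : ℤ)) d)⁻¹)
          - C (R := K) (wK a) * (S (t ^ (-(a : ℤ))) * (S (t ^ (-1 : ℤ)))⁻¹) := by
      refine cong_mul (by rw [sub_self]; exact dvd_zero _) ?_
      refine cong_mul (dvd_S_prod _ hM') ?_
      refine cong_inv ?_ ?_ (dvd_S_prod _ hM')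
      · rw [constantCoeff_prod_eft]
        exact one_ne_zero
      · rw [constantCoeff_S]
        exact one_ne_zero
    have hV : V a = C (R := K) (wK a) * (S (t ^ (-(a : ℤ))) * (S (t ^ (-1 : ℤ)))⁻¹) := by
      rw [V, mul_assoc]
    rw [hV]
    exact coeff_eq_of_dvd hdvd (Nat.lt_succ_self n)

lemma final (m : ℕ) (hm : 1 ≤ m) :
    (∏' d : ℕ, (1 - C (R := K) (t ^ d) * X ^ (d + 1)))⁻¹ *
        ∑' k : ℕ,
          C (R := K) ((-1 : K) ^ ((k : ℤ) - (m : ℤ)) *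
              t ^ ((k : ℤ) * ((k : ℤ) - 1) / 2 - (k : ℤ) * (m : ℤ)
                    + (m : ℤ) * ((m : ℤ) + 1) / 2) *
              gb k m) *
            X ^ (k * (k - 1) / 2) *
            (∏ d ∈ Finset.range k, (1 - C (R := K) (t ^ (d + 1)) * X ^ (d + 1)))⁻¹
      = C (R := K) (∏ i ∈ Finset.Icc 1 (m - 1), (1 - t ^ (i + 1)))⁻¹ *
          ∑ a ∈ Finset.Icc 1 m,
            C (R := K) ((-1 : K) ^ (a + 1) * t ^ (a * (a - 1) / 2 + m - 1) * gb m a) *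
              ∏' d : ℕ,
                (1 - C (R := K) (t ^ ((d : ℤ) - (a : ℤ))) * X ^ d) *
                  (1 - C (R := K) (t ^ ((d : ℤ) - 1)) * X ^ d)⁻¹ := by
  classical
  have hfun : (fun d : ℕ => 1 - C (R := K) (t ^ d) * X ^ (d + 1)) = eft (t ^ (-1 : ℤ)) := by
    funext d
    rw [eft, Y_pow, ← mul_assoc, ← map_mul]
    congr 3
    rw [← tz_nat d, ← tz_nat (d + 1), ← tz_add]
    congr 1
    push_cast
    ring
  have hP : (∏' d : ℕ, (1 - C (R := K) (t ^ d) * X ^ (d + 1))) = S (t ^ (-1 : ℤ)) := by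
    rw [hfun]
    exact (euler_hasProd _).tprod_eq
  have hsummand : (fun k : ℕ =>
      C (R := K) ((-1 : K) ^ ((k : ℤ) - (m : ℤ)) *
          t ^ ((k : ℤ) * ((k : ℤ) - 1) / 2 - (k : ℤ) * (m : ℤ)
                + (m : ℤ) * ((m : ℤ) + 1) / 2) *
          gb k m) *
        X ^ (k * (k - 1) / 2) *
        (∏ d ∈ Finset.range k, (1 - C (R := K) (t ^ (d + 1)) * X ^ (d + 1)))⁻¹) = L m := by
    funext k
    rw [L, lK]
    congr 2
    rw [Dk]
    exact Finset.prod_congr rfl fun d _ => by rw [Y_pow]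
  rw [hP, hsummand, (hasSum_L m).tsum_eq]
  have hRHS : ∑ a ∈ Finset.Icc 1 m,
      C (R := K) ((-1 : K) ^ (a + 1) * t ^ (a * (a - 1) / 2 + m - 1) * gb m a) *
        (∏' d : ℕ, (1 - C (R := K) (t ^ ((d : ℤ) - (a : ℤ))) * X ^ d) *
          (1 - C (R := K) (t ^ ((d : ℤ) - 1)) * X ^ d)⁻¹)
      = ∑ a ∈ Finset.Icc 1 m, C (R := K) (cK m a) * V a := by
    refine Finset.sum_congr rfl fun a ha => ?_
    rw [show (∏' d : ℕ, (1 - C (R := K) (t ^ ((d : ℤ) - (a : ℤ))) * X ^ d) *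
          (1 - C (R := K) (t ^ ((d : ℤ) - 1)) * X ^ d)⁻¹) = V a from
      (hasProd_Gf m (Finset.mem_Icc.1 ha).1).tprod_eq]
    rfl
  rw [hRHS]
  have hstep : C (R := K) (∏ i ∈ Finset.Icc 1 (m - 1), (1 - t ^ (i + 1)))⁻¹ *
      ∑ a ∈ Finset.Icc 1 m, C (R := K) (cK m a) * V a
      = sumOf (L m) * (S (t ^ (-1 : ℤ)))⁻¹ := by
    show C (R := K) ((eK m)⁻¹) * ∑ a ∈ Finset.Icc 1 m, C (R := K) (cK m a) * V a = _
    rw [← main_eq m hm, Finset.mul_sum, Finset.sum_mul]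
    refine Finset.sum_congr rfl fun a _ => ?_
    rw [V]
    simp only [map_mul]
    ring
  rw [hstep, mul_comm]

end StmtAux

open PowerSeries in
/-- The closed form for the generating function `∑_n E(B^{[n]}_m; t) qⁿ` of the
E-polynomials of the strata of the punctual Hilbert scheme (Theorem `genEBmn`):
`∏_{d=1}^∞ (1 - t^{d-1} q^d)⁻¹ ·
   ∑_{k=0}^∞ (-1)^{k-m} t^{k(k-1)/2 - km + m(m+1)/2} [k choose m]_t q^{k(k-1)/2}
     ∏_{d=1}^{k} (1 - t^d q^d)⁻¹
 = ∏_{i=1}^{m-1} (1 - t^{i+1})⁻¹ ·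
   ∑_{a=1}^{m} (-1)^{a+1} t^{a(a-1)/2 + m - 1} [m choose a]_t
     ∏_{d=0}^∞ (1 - t^{d-a} q^d)(1 - t^{d-1} q^d)⁻¹`. -/
theorem stmt9 (m : ℕ) (hm : 1 ≤ m) :
    (∏' d : ℕ, (1 - C (R := K) (t ^ d) * X ^ (d + 1)))⁻¹ *
        ∑' k : ℕ,
          C (R := K) ((-1 : K) ^ ((k : ℤ) - (m : ℤ)) *
              t ^ ((k : ℤ) * ((k : ℤ) - 1) / 2 - (k : ℤ) * (m : ℤ)
                    + (m : ℤ) * ((m : ℤ) + 1) / 2) *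
              gb k m) *
            X ^ (k * (k - 1) / 2) *
            (∏ d ∈ Finset.range k, (1 - C (R := K) (t ^ (d + 1)) * X ^ (d + 1)))⁻¹
      = C (R := K) (∏ i ∈ Finset.Icc 1 (m - 1), (1 - t ^ (i + 1)))⁻¹ *
          ∑ a ∈ Finset.Icc 1 m,
            C (R := K) ((-1 : K) ^ (a + 1) * t ^ (a * (a - 1) / 2 + m - 1) * gb m a) *
              ∏' d : ℕ,
                (1 - C (R := K) (t ^ ((d : ℤ) - (a : ℤ))) * X ^ d) *
                  (1 - C (R := K) (t ^ ((d : ℤ) - 1)) * X ^ d)⁻¹ := StmtAux.final m hm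

end
end

section
/- Let a_n ∈ ℚ(t) (n ≥ 0) be the coefficients of the formal power series ∏_{d=1}^{∞} (1 − t^{d−1} q^d) · (1 − t^{d+1} q^d)^{−1} = ∑_{n=0}^{∞} a_n q^n in ℚ(t)[[q]], and let ι : ℚ(t) → ℚ(t) be the field homomorphism determined by ι(t) = t^{−1}. Then ∑_{n=0}^{∞} t^{2n} · ι(a_n) · q^n = ∏_{d=1}^{∞} (1 − t^{d+1} q^d) · (1 − t^{d−1} q^d)^{−1}. -/
noncomputable section

-- auxiliary
instance : DiscreteTopology K := ⟨rfl⟩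

lemma t_ne_zero : t ≠ 0 := RatFunc.X_ne_zero

open PowerSeries

lemma embed : Topology.IsEmbedding (fun f n => PowerSeries.coeff (R := K) n f) :=
  ⟨⟨rfl⟩, fun {f g} h => PowerSeries.ext fun n => congrFun h n⟩

instance : T2Space (PowerSeries K) := embed.t2Space

lemma coeff_continuous (n : ℕ) : Continuous (fun f => PowerSeries.coeff (R := K) n f) :=
  (continuous_apply n).comp embed.continuous

section Phi

variable (ι : K →+* K)

/-- The map `∑ aₙ qⁿ ↦ ∑ t^{2n} ι(aₙ) qⁿ` as a ring hom. -/
def Φ : PowerSeries K →+* PowerSeries K :=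
  (PowerSeries.rescale (t ^ 2)).comp (PowerSeries.map ι)

lemma coeff_Φ (f : PowerSeries K) (n : ℕ) :
    PowerSeries.coeff (R := K) n (Φ ι f) = t ^ (2 * n) * ι (PowerSeries.coeff (R := K) n f) := by
  simp [Φ, PowerSeries.coeff_rescale, PowerSeries.coeff_map, pow_mul]

lemma Φ_continuous : Continuous (Φ ι) := by
  rw [continuous_induced_rng]
  refine continuous_pi fun n => ?_
  show Continuous fun f => PowerSeries.coeff (R := K) n (Φ ι f)
  have : (fun f => PowerSeries.coeff (R := K) n (Φ ι f)) =
      (fun x : K => t ^ (2 * n) * ι x) ∘ (fun f => PowerSeries.coeff (R := K) n f) := by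
    funext f; exact coeff_Φ ι f n
  rw [this]
  exact continuous_of_discreteTopology.comp (coeff_continuous n)

variable (hι : ι t = t⁻¹)
include hι

lemma iota_invol : ∀ x, ι (ι x) = x := by
  have : (ι.comp ι).comp (algebraMap (Polynomial ℚ) K) =
      (RingHom.id K).comp (algebraMap (Polynomial ℚ) K) := by
    apply Polynomial.ringHom_ext
    · intro a
      have h1 : (ι.comp ι).comp (algebraMap ℚ K) = algebraMap ℚ K := Subsingleton.elim _ _
      have := RingHom.congr_fun h1 a
      simpa using this
    · have hX : algebraMap (Polynomial ℚ) K Polynomial.X = t := RatFunc.algebraMap_X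
      simp [hX, hι, map_inv₀]
  have h2 : ι.comp ι = RingHom.id K :=
    IsLocalization.ringHom_ext (nonZeroDivisors (Polynomial ℚ)) this
  exact fun x => RingHom.congr_fun h2 x

lemma Φ_invol : ∀ f, Φ ι (Φ ι f) = f := by
  intro f
  ext n
  rw [coeff_Φ, coeff_Φ]
  rw [map_mul, map_pow, hι, iota_invol ι hι]
  field_simp
  rw [← mul_pow, mul_one_div_cancel t_ne_zero, one_pow, one_mul]

lemma Φ_tprod (f : ℕ → PowerSeries K) : Φ ι (∏' d, f d) = ∏' d, Φ ι (f d) := by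
  by_cases hf : Multipliable f
  · exact ((hf.hasProd.map (Φ ι).toMonoidHom (Φ_continuous ι)).tprod_eq).symm
  · have hnf : ¬ Multipliable (fun d => Φ ι (f d)) := by
      intro h
      apply hf
      have := h.hasProd.map (Φ ι).toMonoidHom (Φ_continuous ι)
      simp only [RingHom.toMonoidHom_eq_coe, MonoidHom.coe_coe, Function.comp_def,
        Φ_invol ι hι] at this
      exact this.multipliable
    rw [tprod_eq_one_of_not_multipliable hf, tprod_eq_one_of_not_multipliable hnf, map_one]

lemma Φ_factor (c : K) (m : ℕ) :
    Φ ι (1 - PowerSeries.C c * X ^ m) = 1 - PowerSeries.C (ι c * t ^ (2 * m)) * X ^ m := by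
  have hX : Φ ι X = PowerSeries.C (t ^ 2) * X := by
    simp [Φ, PowerSeries.map_X, PowerSeries.rescale_X]
  have hC : ∀ x : K, Φ ι (PowerSeries.C x) = PowerSeries.C (ι x) := by
    intro x
    ext n
    simp only [Φ, RingHom.comp_apply, PowerSeries.coeff_rescale, PowerSeries.coeff_map,
      PowerSeries.coeff_C, apply_ite ι, map_zero, mul_ite, mul_zero]
    split_ifs with h <;> simp [h]
  rw [map_sub, map_one, map_mul, map_pow, hX, hC, mul_pow, ← map_pow, ← pow_mul,
    ← mul_assoc, ← map_mul]

lemma Φ_inv (v : PowerSeries K) (hv : PowerSeries.constantCoeff v ≠ 0) :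
    Φ ι (v⁻¹) = (Φ ι v)⁻¹ := by
  have hv' : PowerSeries.constantCoeff (Φ ι v) ≠ 0 := by
    have : PowerSeries.constantCoeff (Φ ι v) = ι (PowerSeries.constantCoeff v) := by
      have := coeff_Φ ι v 0
      simpa [PowerSeries.coeff_zero_eq_constantCoeff] using this
    rw [this]
    exact fun h => hv (ι.injective (by simpa using h))
  rw [PowerSeries.eq_inv_iff_mul_eq_one hv', ← map_mul,
    PowerSeries.inv_mul_cancel v hv, map_one]

end Phi

open PowerSeries in
/-- If `∑_n aₙ qⁿ = ∏_{d=1}^∞ (1 - t^{d-1} q^d)(1 - t^{d+1} q^d)⁻¹` (the generating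
function of the E-polynomials of the Hilbert schemes of points on `ℂ² ∖ {0}`), and
`ι : ℚ(t) → ℚ(t)` is the field homomorphism with `ι(t) = t⁻¹`, then
`∑_n t^{2n} ι(aₙ) qⁿ = ∏_{d=1}^∞ (1 - t^{d+1} q^d)(1 - t^{d-1} q^d)⁻¹`. -/
theorem stmt10 (ι : K →+* K) (hι : ι t = t⁻¹) (a : ℕ → K)
    (ha : PowerSeries.mk a =
      ∏' d : ℕ, (1 - C (t ^ d) * X ^ (d + 1)) * (1 - C (t ^ (d + 2)) * X ^ (d + 1))⁻¹) :
    PowerSeries.mk (fun n => t ^ (2 * n) * ι (a n)) =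
      ∏' d : ℕ, (1 - C (t ^ (d + 2)) * X ^ (d + 1)) * (1 - C (t ^ d) * X ^ (d + 1))⁻¹ := by
  have hmk : PowerSeries.mk (fun n => t ^ (2 * n) * ι (a n)) = Φ ι (PowerSeries.mk a) := by
    ext n
    rw [coeff_Φ]
    simp
  rw [hmk, ha, Φ_tprod ι hι]
  refine tprod_congr fun d => ?_
  rw [map_mul, Φ_factor ι hι, Φ_inv ι hι _ (by simp), Φ_factor ι hι]
  have e1 : ι (t ^ d) * t ^ (2 * (d + 1)) = t ^ (d + 2) := by
    rw [map_pow, hι, inv_pow]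
    rw [inv_mul_eq_iff_eq_mul₀ (pow_ne_zero _ t_ne_zero), ← pow_add]
    ring_nf
  have e2 : ι (t ^ (d + 2)) * t ^ (2 * (d + 1)) = t ^ d := by
    rw [map_pow, hι, inv_pow]
    rw [inv_mul_eq_iff_eq_mul₀ (pow_ne_zero _ t_ne_zero), ← pow_add]
    ring_nf
  rw [e1, e2]
end
end

section
/- For every m ≥ 1, the following identity holds in ℚ[[q]]: ∑_{n=0}^{∞} c_m(n) q^n = ∏_{d=1}^{∞} (1 − q^d)^{−1} · ∑_{k=0}^{∞} (−1)^{k−m} · q^{k(k−1)/2} · binom(k, m) · ∏_{d=1}^{k} (1 − q^d)^{−1}, where c_m(n) is the number of partitions of n having exactly m−1 distinct part sizes (the empty partition of 0 has 0 distinct part sizes), and binom(k,m) is the ordinary binomial coefficient. -/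
noncomputable section

/-- `ℚ[[q]]` is given the topology of coefficientwise convergence, under which the
infinite product and sum below converge. -/
instance : TopologicalSpace (PowerSeries ℚ) :=
  TopologicalSpace.induced (fun f n => PowerSeries.coeff (R := ℚ) n f) Pi.topologicalSpace

namespace Stmt11Aux

open PowerSeries Finset Filter

lemma coeffMap_inducing : Topology.IsInducing
    (fun (f : PowerSeries ℚ) n => PowerSeries.coeff (R := ℚ) n f) := ⟨rfl⟩

lemma coeffMap_injective :
    Function.Injective (fun (f : PowerSeries ℚ) n => PowerSeries.coeff (R := ℚ) n f) :=
  fun _ _ h => PowerSeries.ext fun n => congrFun h n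

instance : T2Space (PowerSeries ℚ) :=
  Topology.IsEmbedding.t2Space ⟨coeffMap_inducing, coeffMap_injective⟩

lemma tendsto_iff_coeff {ι : Type*} {l : Filter ι} (g : ι → PowerSeries ℚ) (P : PowerSeries ℚ) :
    Tendsto g l (nhds P) ↔ ∀ n, Tendsto (fun i => PowerSeries.coeff (R := ℚ) n (g i)) l
      (nhds (PowerSeries.coeff (R := ℚ) n P)) := by
  rw [coeffMap_inducing.tendsto_nhds_iff, tendsto_pi_nhds]
  rfl

lemma coeff_eq_zero_of_dvd {N j : ℕ} {g : PowerSeries ℚ} (h : (X : PowerSeries ℚ) ^ N ∣ g)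
    (hj : j < N) : PowerSeries.coeff (R := ℚ) j g = 0 :=
  (PowerSeries.X_pow_dvd_iff.mp h) j hj

lemma prod_sub_one_dvd {t : Finset ℕ} {N : ℕ} {f : ℕ → PowerSeries ℚ}
    (h : ∀ d ∈ t, (X : PowerSeries ℚ) ^ N ∣ (f d - 1)) :
    (X : PowerSeries ℚ) ^ N ∣ (∏ d ∈ t, f d - 1) := by
  induction t using Finset.induction_on with
  | empty => simp
  | insert a s hnotmem ih =>
    rw [Finset.prod_insert hnotmem]
    have : f a * ∏ d ∈ s, f d - 1 = f a * (∏ d ∈ s, f d - 1) + (f a - 1) := by ring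
    rw [this]
    exact dvd_add (Dvd.dvd.mul_left (ih fun d hd => h d (Finset.mem_insert_of_mem hd)) _)
      (h a (Finset.mem_insert_self a s))

lemma coeff_prod_stab (j : ℕ) (s : Finset ℕ) (hs : Finset.range (j + 1) ⊆ s) :
    PowerSeries.coeff (R := ℚ) j (∏ d ∈ s, (1 - X ^ (d + 1) : PowerSeries ℚ)) =
      PowerSeries.coeff (R := ℚ) j (∏ d ∈ Finset.range (j + 1), (1 - X ^ (d + 1) : PowerSeries ℚ)) := by
  rw [← Finset.prod_sdiff hs]
  have hdvd : (X : PowerSeries ℚ) ^ (j + 1) ∣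
      (∏ d ∈ s \ Finset.range (j + 1), (1 - X ^ (d + 1) : PowerSeries ℚ)) - 1 := by
    apply prod_sub_one_dvd
    intro d hd
    have hd' : j + 1 ≤ d + 1 := by
      have := (Finset.mem_sdiff.mp hd).2
      simp only [Finset.mem_range, not_lt] at this
      omega
    have : (1 - X ^ (d + 1) : PowerSeries ℚ) - 1 = -(X ^ (d + 1)) := by ring
    rw [this]
    exact (pow_dvd_pow _ hd').neg_right
  set A := ∏ d ∈ s \ Finset.range (j + 1), (1 - X ^ (d + 1) : PowerSeries ℚ)
  set B := ∏ d ∈ Finset.range (j + 1), (1 - X ^ (d + 1) : PowerSeries ℚ)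
  have : A * B = B + (A - 1) * B := by ring
  rw [this, map_add]
  have : PowerSeries.coeff (R := ℚ) j ((A - 1) * B) = 0 :=
    coeff_eq_zero_of_dvd (hdvd.mul_right B) (by omega)
  rw [this, add_zero]

/-- The limit of the infinite product. -/
def Pprod : PowerSeries ℚ :=
  PowerSeries.mk fun j =>
    PowerSeries.coeff (R := ℚ) j (∏ d ∈ Finset.range (j + 1), (1 - X ^ (d + 1) : PowerSeries ℚ))

lemma hasProd_P : HasProd (fun d : ℕ => (1 - X ^ (d + 1) : PowerSeries ℚ)) Pprod := by
  rw [HasProd, tendsto_iff_coeff]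
  intro n
  apply Tendsto.congr' _ tendsto_const_nhds
  filter_upwards [Filter.eventually_ge_atTop (Finset.range (n + 1))] with s hs
  rw [coeff_prod_stab n s hs, Pprod, PowerSeries.coeff_mk]

lemma tprod_eq : (∏' d : ℕ, (1 - X ^ (d + 1) : PowerSeries ℚ)) = Pprod :=
  hasProd_P.tprod_eq

/-- the k-th term of the series -/
def term (m k : ℕ) : PowerSeries ℚ :=
  PowerSeries.C (R := ℚ) ((-1 : ℚ) ^ ((k : ℤ) - (m : ℤ)) * (k.choose m : ℚ)) * X ^ (k * (k - 1) / 2) *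
    (∏ d ∈ Finset.range k, (1 - X ^ (d + 1) : PowerSeries ℚ))⁻¹

lemma X_dvd_term {j k m : ℕ} (hk : j + 2 ≤ k) : (X : PowerSeries ℚ) ^ (j + 1) ∣ term m k := by
  have h1 : j + 1 ≤ k * (k - 1) / 2 := by
    have h2 : (k - 1) * 2 ≤ (k - 1) * k := by
      apply Nat.mul_le_mul_left
      omega
    have h3 : k - 1 ≤ k * (k - 1) / 2 :=
      (Nat.le_div_iff_mul_le two_pos).mpr (by rw [mul_comm k (k-1)]; exact h2)
    omega
  have : (X : PowerSeries ℚ) ^ (j + 1) ∣ X ^ (k * (k - 1) / 2) := pow_dvd_pow _ h1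
  apply this.trans
  rw [term]
  exact (dvd_mul_left _ _).mul_right _

lemma coeff_sum_stab (m j : ℕ) (s : Finset ℕ) (hs : Finset.range (j + 2) ⊆ s) :
    PowerSeries.coeff (R := ℚ) j (∑ k ∈ s, term m k) =
      PowerSeries.coeff (R := ℚ) j (∑ k ∈ Finset.range (j + 2), term m k) := by
  rw [← Finset.sum_sdiff hs, map_add]
  have : PowerSeries.coeff (R := ℚ) j (∑ k ∈ s \ Finset.range (j + 2), term m k) = 0 := by
    rw [map_sum]
    apply Finset.sum_eq_zero
    intro k hk
    have hk2 : j + 2 ≤ k := by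
      have := (Finset.mem_sdiff.mp hk).2
      simp only [Finset.mem_range, not_lt] at this
      omega
    exact coeff_eq_zero_of_dvd (X_dvd_term hk2) (by omega)
  rw [this, zero_add]

/-- The limit of the infinite sum. -/
def Ssum (m : ℕ) : PowerSeries ℚ :=
  PowerSeries.mk fun j => PowerSeries.coeff (R := ℚ) j (∑ k ∈ Finset.range (j + 2), term m k)

lemma hasSum_S (m : ℕ) : HasSum (term m) (Ssum m) := by
  rw [HasSum, tendsto_iff_coeff]
  intro n
  apply Tendsto.congr' _ tendsto_const_nhds
  filter_upwards [Filter.eventually_ge_atTop (Finset.range (n + 2))] with s hs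
  rw [coeff_sum_stab m n s hs, Ssum, PowerSeries.coeff_mk]

lemma tsum_eq (m : ℕ) : ∑' k, term m k = Ssum m := (hasSum_S m).tsum_eq

lemma constantCoeff_P : PowerSeries.constantCoeff (R := ℚ) Pprod = 1 := by
  have : PowerSeries.constantCoeff (R := ℚ) Pprod = PowerSeries.coeff (R := ℚ) 0 Pprod := by
    rw [PowerSeries.coeff_zero_eq_constantCoeff]
  rw [this, Pprod, PowerSeries.coeff_mk, Finset.prod_range_one]
  simp

-- geometric series
lemma inv_one_sub_X_pow (i : ℕ) :
    ((1 - X ^ (i + 1) : PowerSeries ℚ))⁻¹ =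
      PowerSeries.mk fun n => if (i + 1) ∣ n then (1 : ℚ) else 0 := by
  have hc : PowerSeries.constantCoeff (R := ℚ) (1 - X ^ (i + 1)) ≠ 0 := by
    simp [zero_pow]
  rw [PowerSeries.inv_eq_iff_mul_eq_one hc]
  ext n
  rw [mul_sub, mul_one, map_sub, PowerSeries.coeff_mul_X_pow']
  rcases n with _ | n
  · simp
  · rw [PowerSeries.coeff_mk, PowerSeries.coeff_mk, PowerSeries.coeff_one, if_neg (Nat.succ_ne_zero n)]
    by_cases h1 : (i + 1) ∣ (n + 1)
    · rw [if_pos h1, if_pos (Nat.le_of_dvd (by omega) h1),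
        if_pos (Nat.dvd_sub h1 dvd_rfl), sub_self]
    · rw [if_neg h1]
      by_cases h2 : i + 1 ≤ n + 1
      · rw [if_pos h2, if_neg, sub_zero]
        intro hd
        exact h1 (by have := Nat.dvd_add hd (dvd_refl (i+1)); rwa [Nat.sub_add_cancel h2] at this)
      · rw [if_neg h2, sub_zero]

/-- number of `k`-element subsets of `ℕ` with sum `b` -/
def countA (k b : ℕ) : ℕ :=
  (((Finset.range (b + 1)).powersetCard k).filter fun A => ∑ x ∈ A, x = b).card

lemma mem_countA_set {k b : ℕ} {A : Finset ℕ} :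
    A ∈ ((Finset.range (b + 1)).powersetCard k).filter (fun A => ∑ x ∈ A, x = b) ↔
      A.card = k ∧ ∑ x ∈ A, x = b := by
  constructor
  · intro h
    rw [Finset.mem_filter, Finset.mem_powersetCard] at h
    exact ⟨h.1.2, h.2⟩
  · intro ⟨h1, h2⟩
    rw [Finset.mem_filter, Finset.mem_powersetCard]
    refine ⟨⟨fun x hx => ?_, h1⟩, h2⟩
    rw [Finset.mem_range]
    have : x ≤ ∑ y ∈ A, y := Finset.single_le_sum (fun i _ => Nat.zero_le i) hx
    omega

lemma countA_zero (b : ℕ) : countA 0 b = if b = 0 then 1 else 0 := by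
  rw [countA, Finset.powersetCard_zero]
  rcases Nat.eq_zero_or_pos b with rfl | hb
  · rw [if_pos rfl]
    simp [Finset.filter_singleton]
  · rw [if_neg (by omega)]
    rw [Finset.card_eq_zero, Finset.filter_eq_empty_iff]
    intro A hA
    rw [Finset.mem_singleton] at hA
    subst hA
    simp
    omega

lemma countA_succ (k b : ℕ) :
    countA (k + 1) b = ∑ p ∈ Finset.HasAntidiagonal.antidiagonal b,
      countA k p.1 * (if k ≤ p.2 ∧ (k + 1) ∣ (p.2 - k) then 1 else 0) := by
  classical
  have hrhs : ∑ p ∈ Finset.HasAntidiagonal.antidiagonal b,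
      countA k p.1 * (if k ≤ p.2 ∧ (k + 1) ∣ (p.2 - k) then 1 else 0) =
      ∑ p ∈ (Finset.HasAntidiagonal.antidiagonal b).filter (fun p => k ≤ p.2 ∧ (k + 1) ∣ (p.2 - k)),
        countA k p.1 := by
    rw [Finset.sum_filter]
    apply Finset.sum_congr rfl
    intro p _
    split_ifs <;> simp
  rw [hrhs]
  set S := (Finset.HasAntidiagonal.antidiagonal b).filter (fun p => k ≤ p.2 ∧ (k + 1) ∣ (p.2 - k)) with hS
  set T : ℕ × ℕ → Finset (Finset ℕ) := fun p =>
    ((Finset.range (p.1 + 1)).powersetCard k).filter (fun A => ∑ x ∈ A, x = p.1) with hT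
  have hsig : ∑ p ∈ S, countA k p.1 = (S.sigma T).card := by
    rw [Finset.card_sigma]
    rfl
  rw [countA, hsig]
  symm
  apply Finset.card_bij (fun (x : Σ _ : ℕ × ℕ, Finset ℕ) _ =>
    insert ((x.1.2 - k) / (k + 1)) (x.2.image (fun y => y + ((x.1.2 - k) / (k + 1) + 1))))
  -- membership
  · rintro ⟨⟨u, v⟩, A⟩ hx
    rw [Finset.mem_sigma] at hx
    obtain ⟨hp, hA⟩ := hx
    dsimp only at hp hA
    rw [hS, Finset.mem_filter, Finset.HasAntidiagonal.mem_antidiagonal] at hp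
    dsimp only at hp
    obtain ⟨huv, hkv, hdvd⟩ := hp
    rw [hT] at hA
    rw [mem_countA_set] at hA
    obtain ⟨hcard, hsum⟩ := hA
    dsimp only
    set a := (v - k) / (k + 1) with ha
    have hav : a * (k + 1) = v - k := Nat.div_mul_cancel hdvd
    have hinj : Function.Injective (fun y => y + (a + 1)) := fun x y h => by
      simpa using h
    have hnotmem : a ∉ A.image (fun y => y + (a + 1)) := by
      rw [Finset.mem_image]
      rintro ⟨y, _, hy⟩
      omega
    rw [mem_countA_set]
    constructor
    · rw [Finset.card_insert_of_notMem hnotmem, Finset.card_image_of_injective _ hinj, hcard]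
    · rw [Finset.sum_insert hnotmem, Finset.sum_image (fun x _ y _ h => hinj h)]
      rw [Finset.sum_add_distrib, hsum, Finset.sum_const, hcard, smul_eq_mul]
      have hmul : k * (a + 1) + a = a * (k + 1) + k := by ring
      omega
  -- injectivity
  · rintro ⟨⟨u₁, v₁⟩, A₁⟩ hx₁ ⟨⟨u₂, v₂⟩, A₂⟩ hx₂ heq
    rw [Finset.mem_sigma] at hx₁ hx₂
    obtain ⟨hp₁, hA₁⟩ := hx₁
    obtain ⟨hp₂, hA₂⟩ := hx₂
    dsimp only at hp₁ hp₂ hA₁ hA₂ heq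
    rw [hS, Finset.mem_filter, Finset.HasAntidiagonal.mem_antidiagonal] at hp₁ hp₂
    rw [hT, mem_countA_set] at hA₁ hA₂
    dsimp only at hp₁ hp₂ hA₁ hA₂
    set a₁ := (v₁ - k) / (k + 1) with ha₁
    set a₂ := (v₂ - k) / (k + 1) with ha₂
    have hmem₁ : ∀ y ∈ A₁.image (fun y => y + (a₁ + 1)), a₁ + 1 ≤ y := by
      intro y hy
      rw [Finset.mem_image] at hy
      obtain ⟨z, _, rfl⟩ := hy
      omega
    have hmem₂ : ∀ y ∈ A₂.image (fun y => y + (a₂ + 1)), a₂ + 1 ≤ y := by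
      intro y hy
      rw [Finset.mem_image] at hy
      obtain ⟨z, _, rfl⟩ := hy
      omega
    have haa : a₁ = a₂ := by
      by_contra hne
      have h₁ : a₁ ∈ insert a₂ (A₂.image (fun y => y + (a₂ + 1))) := by
        rw [← heq]; exact Finset.mem_insert_self _ _
      have h₂ : a₂ ∈ insert a₁ (A₁.image (fun y => y + (a₁ + 1))) := by
        rw [heq]; exact Finset.mem_insert_self _ _
      rw [Finset.mem_insert] at h₁ h₂
      rcases h₁ with h | h
      · exact hne h
      · have := hmem₂ _ h
        rcases h₂ with h' | h'
        · exact hne h'.symm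
        · have := hmem₁ _ h'
          omega
    have hnm₁ : a₁ ∉ A₁.image (fun y => y + (a₁ + 1)) := fun h => by have := hmem₁ _ h; omega
    have hnm₂ : a₂ ∉ A₂.image (fun y => y + (a₂ + 1)) := fun h => by have := hmem₂ _ h; omega
    rw [haa] at heq hnm₁
    have hsets : A₁.image (fun y => y + (a₂ + 1)) = A₂.image (fun y => y + (a₂ + 1)) := by
      have h' := congrArg (fun (s : Finset ℕ) => s.erase a₂) heq
      rwa [Finset.erase_insert hnm₁, Finset.erase_insert hnm₂] at h'
    have hAA : A₁ = A₂ :=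
      Finset.image_injective (fun x y h => by simpa using h) hsets
    have hu : u₁ = u₂ := by rw [← hA₁.2, ← hA₂.2, hAA]
    have hv : v₁ = v₂ := by
      have h1 := hp₁.1; have h2 := hp₂.1
      omega
    subst hAA hu hv
    rfl
  -- surjectivity
  · intro A' hA'
    rw [mem_countA_set] at hA'
    obtain ⟨hcard, hsum⟩ := hA'
    have hne : A'.Nonempty := Finset.card_pos.mp (by omega)
    set a := A'.min' hne with ha
    have hamem : a ∈ A' := A'.min'_mem hne
    have hlow : ∀ x ∈ A'.erase a, a + 1 ≤ x := by
      intro x hx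
      rw [Finset.mem_erase] at hx
      have := A'.min'_le x hx.2
      have hxa := hx.1
      omega
    set A := (A'.erase a).image (fun x => x - (a + 1)) with hA
    have hinjOn : Set.InjOn (fun x => x - (a + 1)) (A'.erase a) := by
      intro x hx y hy h
      have := hlow x hx; have := hlow y hy
      dsimp at h
      omega
    have hcardA : A.card = k := by
      rw [hA, Finset.card_image_of_injOn hinjOn, Finset.card_erase_of_mem hamem, hcard]
      omega
    set u := ∑ x ∈ A, x with hu
    have hsplit : ∑ x ∈ A'.erase a, x = u + k * (a + 1) := by
      have : ∀ x ∈ A'.erase a, x = (x - (a + 1)) + (a + 1) := fun x hx => by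
        have := hlow x hx; omega
      rw [Finset.sum_congr rfl this, Finset.sum_add_distrib, Finset.sum_const,
        Finset.card_erase_of_mem hamem, hcard]
      simp only [smul_eq_mul]
      congr 1
      rw [hu, hA, Finset.sum_image hinjOn]
    have h0 : ∑ x ∈ A'.erase a, x + a = ∑ x ∈ A', x :=
      Finset.sum_erase_add A' _ hamem
    have hsum' : a + (u + k * (a + 1)) = b := by omega
    set v := a * (k + 1) + k with hv
    have hmul : k * (a + 1) + a = a * (k + 1) + k := by ring
    have huv : u + v = b := by omega
    have hdvd : (k + 1) ∣ (v - k) := ⟨a, by rw [hv, Nat.add_sub_cancel, mul_comm]⟩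
    have hva : (v - k) / (k + 1) = a := by
      rw [hv, Nat.add_sub_cancel, Nat.mul_div_cancel _ (Nat.succ_pos k)]
    refine ⟨⟨(u, v), A⟩, ?_, ?_⟩
    · rw [Finset.mem_sigma]
      constructor
      · rw [hS, Finset.mem_filter, Finset.HasAntidiagonal.mem_antidiagonal]
        dsimp only
        exact ⟨huv, by omega, hdvd⟩
      · rw [hT, mem_countA_set]
        dsimp only
        exact ⟨hcardA, rfl⟩
    · dsimp only
      rw [hva]
      have himg : A.image (fun y => y + (a + 1)) = A'.erase a := by
        rw [hA, Finset.image_image]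
        have : ∀ x ∈ A'.erase a, (x - (a + 1)) + (a + 1) = x := fun x hx => by
          have := hlow x hx; omega
        calc (A'.erase a).image (fun x => (x - (a + 1)) + (a + 1))
            = (A'.erase a).image id := Finset.image_congr (fun x hx => this x hx)
          _ = A'.erase a := Finset.image_id
      rw [himg, Finset.insert_erase hamem]


lemma GF1 (k : ℕ) :
    (X : PowerSeries ℚ) ^ (k * (k - 1) / 2) *
        (∏ d ∈ Finset.range k, (1 - X ^ (d + 1) : PowerSeries ℚ))⁻¹ =
      PowerSeries.mk fun b => (countA k b : ℚ) := by
  induction k with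
  | zero =>
    rw [Nat.zero_mul, Nat.zero_div, pow_zero, one_mul, Finset.range_zero, Finset.prod_empty,
      inv_one]
    ext b
    rw [PowerSeries.coeff_one, PowerSeries.coeff_mk, countA_zero]
    split_ifs <;> simp
  | succ k ih =>
    have hpow : (X : PowerSeries ℚ) ^ ((k + 1) * ((k + 1) - 1) / 2) =
        X ^ (k * (k - 1) / 2) * X ^ k := by
      rw [← pow_add, Nat.triangle_succ]
    rw [hpow, Finset.prod_range_succ, PowerSeries.mul_inv_rev]
    have hre : (X : PowerSeries ℚ) ^ (k * (k - 1) / 2) * X ^ k *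
        ((1 - X ^ (k + 1) : PowerSeries ℚ)⁻¹ *
          (∏ d ∈ Finset.range k, (1 - X ^ (d + 1) : PowerSeries ℚ))⁻¹) =
        (X ^ (k * (k - 1) / 2) * (∏ d ∈ Finset.range k, (1 - X ^ (d + 1) : PowerSeries ℚ))⁻¹) *
          ((1 - X ^ (k + 1) : PowerSeries ℚ)⁻¹ * X ^ k) := by ring
    rw [hre, ih, inv_one_sub_X_pow]
    ext b
    rw [PowerSeries.coeff_mk, PowerSeries.coeff_mul, countA_succ]
    push_cast
    apply Finset.sum_congr rfl
    intro p _
    rw [PowerSeries.coeff_mk, PowerSeries.coeff_mul_X_pow', PowerSeries.coeff_mk]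
    congr 1
    split_ifs <;> simp_all <;> omega

section PGF

open scoped Classical

variable {α : Type*}

/-- A convenience constructor for the power series whose coefficients indicate a subset. -/
def indicatorSeries (α : Type*) [Semiring α] (s : Set ℕ) : PowerSeries α :=
  PowerSeries.mk fun n => if n ∈ s then 1 else 0

theorem coeff_indicator (s : Set ℕ) [Semiring α] (n : ℕ) :
    coeff (R := α) n (indicatorSeries _ s) = if n ∈ s then 1 else 0 :=
  coeff_mk _ _

-- The main workhorse, copied from Archive/Wiedijk100Theorems/Partition.lean
theorem partialGF_prop (α : Type*) [CommSemiring α] (n : ℕ) (s : Finset ℕ) (hs : ∀ i ∈ s, 0 < i)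
    (c : ℕ → Set ℕ) (hc : ∀ i, i ∉ s → 0 ∈ c i) :
    #{p : n.Partition | (∀ j, p.parts.count j ∈ c j) ∧ ∀ j ∈ p.parts, j ∈ s} =
      coeff (R := α) n (∏ i ∈ s, indicatorSeries α ((· * i) '' c i)) := by
  simp_rw [coeff_prod, coeff_indicator, prod_boole, sum_boole]
  apply congr_arg
  simp only [mem_univ, forall_true_left, not_and, not_forall, exists_prop,
    Set.mem_image, not_exists]
  set φ : (a : Nat.Partition n) →
    a ∈ filter (fun p ↦ (∀ (j : ℕ), Multiset.count j p.parts ∈ c j) ∧ ∀ j ∈ p.parts, j ∈ s) univ →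
    ℕ →₀ ℕ := fun p _ => {
      toFun := fun i => Multiset.count i p.parts • i
      support := Finset.filter (fun i => i ≠ 0) p.parts.toFinset
      mem_support_toFun := fun a => by
        simp only [smul_eq_mul, ne_eq, mul_eq_zero, Multiset.count_eq_zero]
        rw [not_or, not_not]
        simp only [Multiset.mem_toFinset, not_not, mem_filter] }
  refine Finset.card_bij φ ?_ ?_ ?_
  · intro a ha
    simp only [φ, not_forall, not_exists, not_and, exists_prop, mem_filter]
    rw [mem_finsuppAntidiag]
    dsimp only [ne_eq, smul_eq_mul, id_eq, eq_mpr_eq_cast, le_eq_subset, Finsupp.coe_mk]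
    simp only [mem_univ, forall_true_left, not_and, not_forall, exists_prop,
      mem_filter, true_and] at ha
    refine ⟨⟨?_, fun i ↦ ?_⟩, fun i _ ↦ ⟨a.parts.count i, ha.1 i, rfl⟩⟩
    · conv_rhs => simp [← a.parts_sum]
      rw [sum_multiset_count_of_subset _ s]
      · simp only [smul_eq_mul]
      · intro i
        simp only [Multiset.mem_toFinset, not_not, mem_filter]
        apply ha.2
    · simp only [ne_eq, Multiset.mem_toFinset, not_not, mem_filter, and_imp]
      exact fun hi _ ↦ ha.2 i hi
  · intro p₁ hp₁ p₂ hp₂ h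
    apply Nat.Partition.ext
    simp only [true_and, mem_univ, mem_filter] at hp₁ hp₂
    ext i
    simp only [φ, ne_eq, Multiset.mem_toFinset, not_not, smul_eq_mul, Finsupp.mk.injEq] at h
    by_cases hi : i = 0
    · rw [hi]
      rw [Multiset.count_eq_zero_of_notMem]
      · rw [Multiset.count_eq_zero_of_notMem]
        intro a; exact Nat.lt_irrefl 0 (hs 0 (hp₂.2 0 a))
      intro a; exact Nat.lt_irrefl 0 (hs 0 (hp₁.2 0 a))
    · rw [← mul_left_inj' hi]
      rw [funext_iff] at h
      exact h.2 i
  · simp only [φ, mem_filter, mem_finsuppAntidiag, mem_univ, exists_prop, true_and, and_assoc]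
    rintro f ⟨hf, hf₃, hf₄⟩
    have hf' : f ∈ finsuppAntidiag s n := mem_finsuppAntidiag.mpr ⟨hf, hf₃⟩
    simp only [mem_finsuppAntidiag] at hf'
    refine ⟨⟨∑ i ∈ s, Multiset.replicate (f i / i) i, ?_, ?_⟩, ?_, ?_, ?_⟩
    · intro i hi
      simp only [exists_prop, Multiset.mem_sum, Finset.mem_map, Function.Embedding.coeFn_mk] at hi
      rcases hi with ⟨t, ht, z⟩
      apply hs
      rwa [Multiset.eq_of_mem_replicate z]
    · simp_rw [Multiset.sum_sum, Multiset.sum_replicate, Nat.nsmul_eq_mul]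
      rw [← hf'.1]
      refine sum_congr rfl fun i hi => Nat.div_mul_cancel ?_
      rcases hf₄ i hi with ⟨w, _, hw₂⟩
      rw [← hw₂]
      exact dvd_mul_left _ _
    · intro i
      simp_rw [Multiset.count_sum', Multiset.count_replicate, sum_ite_eq']
      split_ifs with h
      · rcases hf₄ i h with ⟨w, hw₁, hw₂⟩
        rwa [← hw₂, Nat.mul_div_cancel _ (hs i h)]
      · exact hc _ h
    · intro i hi
      rw [Multiset.mem_sum] at hi
      rcases hi with ⟨j, hj₁, hj₂⟩
      rwa [Multiset.eq_of_mem_replicate hj₂]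
    · ext i
      simp_rw [Multiset.count_sum', Multiset.count_replicate, sum_ite_eq']
      simp only [ne_eq, Multiset.mem_toFinset, not_not, smul_eq_mul, ite_mul,
        zero_mul, Finsupp.coe_mk]
      split_ifs with h
      · apply Nat.div_mul_cancel
        rcases hf₄ i h with ⟨w, _, hw₂⟩
        apply Dvd.intro_left _ hw₂
      · apply symm
        rw [← Finsupp.notMem_support_iff]
        exact notMem_mono hf'.2 h


lemma coeff_FI (n a : ℕ) (ha : a ≤ n) :
    PowerSeries.coeff (R := ℚ) a (∏ d ∈ Finset.range (n + 1), (1 - X ^ (d + 1) : PowerSeries ℚ)⁻¹) =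
      (Fintype.card (Nat.Partition a) : ℚ) := by
  have hprod : (∏ d ∈ Finset.range (n + 1), (1 - X ^ (d + 1) : PowerSeries ℚ)⁻¹) =
      ∏ i ∈ (Finset.range (n + 1)).map ⟨Nat.succ, Nat.succ_injective⟩,
        indicatorSeries ℚ ((· * i) '' Set.univ) := by
    rw [Finset.prod_map]
    apply Finset.prod_congr rfl
    intro d _
    rw [inv_one_sub_X_pow, indicatorSeries]
    refine congrArg PowerSeries.mk (funext fun b => if_congr ?_ rfl rfl)
    simp only [Function.Embedding.coeFn_mk, Set.image_univ, Set.mem_range]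
    constructor
    · rintro ⟨c, hc⟩
      exact ⟨c, by rw [hc, Nat.succ_eq_add_one]; ring⟩
    · rintro ⟨y, hy⟩
      exact ⟨y, by rw [← hy, Nat.succ_eq_add_one]; ring⟩
  have hpos : ∀ i ∈ (Finset.range (n + 1)).map ⟨Nat.succ, Nat.succ_injective⟩, 0 < i := by
    simp only [Finset.mem_map, Function.Embedding.coeFn_mk]
    rintro i ⟨_, _, rfl⟩
    exact Nat.succ_pos _
  rw [hprod, ← partialGF_prop ℚ a ((Finset.range (n + 1)).map ⟨Nat.succ, Nat.succ_injective⟩)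
    hpos (fun _ => Set.univ) (fun _ _ => trivial)]
  congr 1
  rw [← Finset.card_univ]
  congr 1
  rw [Finset.eq_univ_iff_forall]
  intro p
  simp only [Finset.mem_filter, Finset.mem_univ, true_and, Set.mem_univ, forall_const,
    Finset.mem_map, Function.Embedding.coeFn_mk, true_and]
  intro j hj
  have hj1 : 0 < j := p.parts_pos hj
  have hj2 : j ≤ a := by
    simpa [p.parts_sum] using Multiset.single_le_sum (fun _ _ => Nat.zero_le _) _ hj
  exact ⟨j - 1, Finset.mem_range.mpr (by omega), by omega⟩

end PGF

lemma erase_val_le {A : Finset ℕ} {M : Multiset ℕ} : ((A.erase 0).val ≤ M + (A.erase 0).val) :=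
  le_add_self

lemma sum_erase_zero (A : Finset ℕ) : ∑ x ∈ A.erase 0, x = ∑ x ∈ A, x :=
  Finset.sum_erase A rfl

lemma val_sum (A : Finset ℕ) : A.val.sum = ∑ x ∈ A, x := by
  conv_rhs => rw [Finset.sum]
  rw [Multiset.map_id']

lemma merge (n k : ℕ) :
    ∑ p ∈ Finset.HasAntidiagonal.antidiagonal n, Fintype.card (Nat.Partition p.1) * countA k p.2 =
      ∑ ν ∈ (Finset.univ : Finset (Nat.Partition n)),
        (ν.parts.toFinset.card + 1).choose k := by
  classical
  -- RHS as card of a sigma set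
  have h0notin : ∀ ν : Nat.Partition n, (0 : ℕ) ∉ ν.parts.toFinset := by
    intro ν h
    rw [Multiset.mem_toFinset] at h
    exact Nat.lt_irrefl 0 (ν.parts_pos h)
  have hrhs : ∑ ν ∈ (Finset.univ : Finset (Nat.Partition n)),
      (ν.parts.toFinset.card + 1).choose k =
      ((Finset.univ : Finset (Nat.Partition n)).sigma
        (fun ν => (insert 0 ν.parts.toFinset).powersetCard k)).card := by
    rw [Finset.card_sigma]
    apply Finset.sum_congr rfl
    intro ν _
    rw [Finset.card_powersetCard, Finset.card_insert_of_notMem (h0notin ν)]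
  -- LHS as card of a sigma set
  set T : ℕ × ℕ → Finset (Multiset ℕ × Finset ℕ) := fun p =>
    ((Finset.univ : Finset (Nat.Partition p.1)).image Nat.Partition.parts) ×ˢ
      (((Finset.range (p.2 + 1)).powersetCard k).filter fun A => ∑ x ∈ A, x = p.2) with hT
  have hlhs : ∑ p ∈ Finset.HasAntidiagonal.antidiagonal n, Fintype.card (Nat.Partition p.1) * countA k p.2 =
      ((Finset.HasAntidiagonal.antidiagonal n).sigma T).card := by
    rw [Finset.card_sigma]
    apply Finset.sum_congr rfl
    intro p _
    rw [hT]
    rw [Finset.card_product, Finset.card_image_of_injective _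
      (fun p q h => Nat.Partition.ext h), Finset.card_univ]
    rfl
  rw [hlhs, hrhs]
  apply Finset.card_bij (fun (x : Σ _ : ℕ × ℕ, Multiset ℕ × Finset ℕ) hx =>
    Sigma.mk (β := fun _ : Nat.Partition n => Finset ℕ) (⟨x.2.1 + (x.2.2.erase 0).val, by
      intro j hj
      rw [Multiset.mem_add] at hj
      rcases hj with hj | hj
      · rw [Finset.mem_sigma, hT, Finset.mem_product, Finset.mem_image] at hx
        obtain ⟨q, _, hq⟩ := hx.2.1
        exact q.parts_pos (hq ▸ hj)
      · have : j ∈ x.2.2.erase 0 := hj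
        rw [Finset.mem_erase] at this
        omega, by
      rw [Multiset.sum_add]
      rw [Finset.mem_sigma, hT, Finset.mem_product, Finset.mem_image] at hx
      obtain ⟨⟨q, _, hq⟩, hA⟩ := hx.2
      rw [mem_countA_set] at hA
      have h1 : x.2.1.sum = x.1.1 := by rw [← hq]; exact q.parts_sum
      have h2 : (x.2.2.erase 0).val.sum = x.1.2 := by
        rw [val_sum, sum_erase_zero, hA.2]
      have h3 := Finset.HasAntidiagonal.mem_antidiagonal.mp hx.1
      rw [h1, h2, h3]⟩ : Nat.Partition n) x.2.2)
  · -- membership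
    rintro ⟨⟨a, b⟩, M, A⟩ hx
    rw [Finset.mem_sigma]
    refine ⟨Finset.mem_univ _, ?_⟩
    rw [Finset.mem_powersetCard]
    rw [Finset.mem_sigma, hT, Finset.mem_product, Finset.mem_filter,
      Finset.mem_powersetCard] at hx
    dsimp only at hx ⊢
    constructor
    · intro x hxA
      rcases Nat.eq_zero_or_pos x with rfl | hpos
      · exact Finset.mem_insert_self _ _
      · apply Finset.mem_insert_of_mem
        rw [Multiset.mem_toFinset, Multiset.mem_add]
        right
        exact Finset.mem_erase.mpr ⟨by omega, hxA⟩
    · exact hx.2.2.1.2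
  · -- injectivity
    rintro ⟨⟨a₁, b₁⟩, M₁, A₁⟩ hx₁ ⟨⟨a₂, b₂⟩, M₂, A₂⟩ hx₂ heq
    rw [Finset.mem_sigma, hT, Finset.mem_product, Finset.mem_filter] at hx₁ hx₂
    dsimp only at hx₁ hx₂
    have hν := congrArg Sigma.fst heq
    have hAA : A₁ = A₂ := congrArg Sigma.snd heq
    dsimp only at hν hAA
    have hparts : M₁ + (A₁.erase 0).val = M₂ + (A₂.erase 0).val :=
      congrArg Nat.Partition.parts hν
    rw [hAA] at hparts
    have hMM : M₁ = M₂ := add_right_cancel hparts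
    have hb : b₁ = b₂ := by
      have h1 := hx₁.2.2.2
      have h2 := hx₂.2.2.2
      rw [hAA] at h1
      omega
    have ha : a₁ = a₂ := by
      have h1 := Finset.HasAntidiagonal.mem_antidiagonal.mp hx₁.1
      have h2 := Finset.HasAntidiagonal.mem_antidiagonal.mp hx₂.1
      dsimp only at h1 h2
      omega
    subst ha hb hMM hAA
    rfl
  · -- surjectivity
    rintro ⟨ν, A⟩ hy
    rw [Finset.mem_sigma, Finset.mem_powersetCard] at hy
    obtain ⟨-, hsub, hcard⟩ := hy
    have hBsub : (A.erase 0).val ≤ ν.parts := by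
      rw [Multiset.le_iff_subset (A.erase 0).nodup]
      intro x hx
      have hx' : x ∈ A.erase 0 := hx
      rw [Finset.mem_erase] at hx'
      have := hsub hx'.2
      rw [Finset.mem_insert] at this
      rcases this with h | h
      · exact absurd h hx'.1
      · rwa [Multiset.mem_toFinset] at h
    set M := ν.parts - (A.erase 0).val with hM
    have hMadd : M + (A.erase 0).val = ν.parts := by
      rw [hM]
      exact tsub_add_cancel_of_le hBsub
    set b := ∑ x ∈ A, x with hb
    have hsums : M.sum + b = n := by
      have := congrArg Multiset.sum hMadd
      rw [Multiset.sum_add, val_sum, sum_erase_zero, ← hb, ν.parts_sum] at this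
      exact this
    refine ⟨⟨(M.sum, b), M, A⟩, ?_, ?_⟩
    · rw [Finset.mem_sigma, hT, Finset.mem_product]
      refine ⟨Finset.HasAntidiagonal.mem_antidiagonal.mpr hsums, ?_, ?_⟩
      · dsimp only
        rw [Finset.mem_image]
        have hMle : M ≤ ν.parts := by rw [hM]; exact tsub_le_self
        exact ⟨⟨M, fun {j} hj => ν.parts_pos (Multiset.subset_of_le hMle hj), rfl⟩,
          Finset.mem_univ _, rfl⟩
      · dsimp only
        rw [mem_countA_set]
        exact ⟨hcard, rfl⟩
    · dsimp only
      exact congrArg (fun p : Nat.Partition n => (⟨p, A⟩ : (_ : Nat.Partition n) × Finset ℕ))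
        (Nat.Partition.ext hMadd)

lemma bid (μ d K : ℕ) (hdK : d < K) :
    ∑ k ∈ Finset.range K, (-1 : ℚ) ^ k * (k.choose μ) * (d.choose k) =
      if d = μ then (-1 : ℚ) ^ μ else 0 := by
  have hsub : Finset.range (d + 1) ⊆ Finset.range K :=
    Finset.range_subset_range.mpr (by omega)
  rw [← Finset.sum_subset hsub (fun x _ hx => by
    rw [Finset.mem_range, not_lt] at hx
    rw [Nat.choose_eq_zero_of_lt (by omega : d < x)]
    push_cast; ring)]
  by_cases hμd : d < μ
  · rw [if_neg (by omega)]
    apply Finset.sum_eq_zero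
    intro k hk
    rw [Finset.mem_range] at hk
    rw [Nat.choose_eq_zero_of_lt (by omega : k < μ)]
    push_cast; ring
  · have hμ : μ ≤ d := by omega
    have hsub2 : Finset.Ico μ (d + 1) ⊆ Finset.range (d + 1) := by
      rw [Finset.range_eq_Ico]
      exact Finset.Ico_subset_Ico (Nat.zero_le μ) le_rfl
    rw [← Finset.sum_subset hsub2 (fun x hx hx2 => by
      rw [Finset.mem_range] at hx
      rw [Finset.mem_Ico, not_and, not_lt] at hx2
      have : x < μ := by
        by_contra h
        have := hx2 (by omega)
        omega
      rw [Nat.choose_eq_zero_of_lt this]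
      push_cast; ring)]
    rw [Finset.sum_Ico_eq_sum_range]
    have hdm : d + 1 - μ = (d - μ) + 1 := by omega
    rw [hdm]
    have key : ∀ j ∈ Finset.range ((d - μ) + 1),
        (-1 : ℚ) ^ (μ + j) * ((μ + j).choose μ) * (d.choose (μ + j)) =
        ((-1 : ℚ) ^ μ * (d.choose μ)) * ((-1 : ℚ) ^ j * ((d - μ).choose j)) := by
      intro j hj
      rw [Finset.mem_range] at hj
      have h1 : d.choose (μ + j) * (μ + j).choose μ = d.choose μ * (d - μ).choose j := by
        have h := Nat.choose_mul (n := d) (k := μ + j) (s := μ) (by omega)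
        simpa using h
      have h1q : (d.choose (μ + j) : ℚ) * ((μ + j).choose μ : ℚ) =
          (d.choose μ : ℚ) * ((d - μ).choose j : ℚ) := by exact_mod_cast h1
      rw [pow_add]
      linear_combination ((-1 : ℚ) ^ μ * (-1 : ℚ) ^ j) * h1q
    rw [Finset.sum_congr rfl key, ← Finset.mul_sum]
    have halt : ∑ j ∈ Finset.range ((d - μ) + 1), (-1 : ℚ) ^ j * ((d - μ).choose j) =
        if (d - μ) = 0 then (1 : ℚ) else 0 := by
      have h2 := congrArg (fun z : ℤ => (z : ℚ)) (Int.alternating_sum_range_choose (n := d - μ))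
      push_cast at h2
      exact h2
    rw [halt]
    by_cases hd : d = μ
    · subst hd
      simp
    · rw [if_neg (by omega : ¬(d - μ = 0)), mul_zero, if_neg hd]


lemma sign_eq (m k : ℕ) : (-1 : ℚ) ^ ((k : ℤ) - (m : ℤ)) = (-1 : ℚ) ^ k * (-1 : ℚ) ^ m := by
  rw [zpow_sub₀ (by norm_num : (-1 : ℚ) ≠ 0), zpow_natCast, zpow_natCast, div_eq_mul_inv]
  congr 1
  rw [← inv_pow]
  norm_num

lemma distinct_le (n : ℕ) (ν : Nat.Partition n) : ν.parts.toFinset.card ≤ n := by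
  have h1 : ν.parts.toFinset.card ≤ Multiset.card ν.parts := Multiset.toFinset_card_le _
  have h2 : Multiset.card ν.parts • 1 ≤ ν.parts.sum :=
    Multiset.card_nsmul_le_sum fun x hx => ν.parts_pos hx
  rw [ν.parts_sum, smul_eq_mul, mul_one] at h2
  omega

lemma coeff_red (m n : ℕ) :
    PowerSeries.coeff (R := ℚ) n (Pprod⁻¹ * Ssum m) =
      PowerSeries.coeff (R := ℚ) n ((∏ d ∈ Finset.range (n + 1), (1 - X ^ (d + 1) : PowerSeries ℚ)⁻¹) *
        ∑ k ∈ Finset.range (n + 2), term m k) := by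
  set F := ∏ d ∈ Finset.range (n + 1), (1 - X ^ (d + 1) : PowerSeries ℚ) with hF
  set FI := ∏ d ∈ Finset.range (n + 1), (1 - X ^ (d + 1) : PowerSeries ℚ)⁻¹ with hFI
  set SP := ∑ k ∈ Finset.range (n + 2), term m k with hSP
  have hFFI : F * FI = 1 := by
    rw [hF, hFI, ← Finset.prod_mul_distrib]
    apply Finset.prod_eq_one
    intro d _
    exact PowerSeries.mul_inv_cancel _ (by simp [zero_pow])
  have hP0 : PowerSeries.constantCoeff (R := ℚ) Pprod ≠ 0 := by
    rw [constantCoeff_P]; exact one_ne_zero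
  have h2 : (X : PowerSeries ℚ) ^ (n + 1) ∣ F - Pprod := by
    rw [PowerSeries.X_pow_dvd_iff]
    intro j hj
    rw [map_sub, hF, coeff_prod_stab j _ (Finset.range_subset_range.mpr (by omega)), Pprod,
      PowerSeries.coeff_mk, sub_self]
  have h3 : (X : PowerSeries ℚ) ^ (n + 1) ∣ Ssum m - SP := by
    rw [PowerSeries.X_pow_dvd_iff]
    intro j hj
    rw [map_sub, hSP, coeff_sum_stab m j _ (Finset.range_subset_range.mpr (by omega)), Ssum,
      PowerSeries.coeff_mk, sub_self]
  have h4 : Pprod⁻¹ * Pprod = 1 := PowerSeries.inv_mul_cancel _ hP0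
  have hsubinv : Pprod⁻¹ - FI = Pprod⁻¹ * ((F - Pprod) * FI) := by
    have expand : Pprod⁻¹ * ((F - Pprod) * FI) =
        Pprod⁻¹ * (F * FI) - Pprod⁻¹ * Pprod * FI := by ring
    rw [expand, hFFI, h4, mul_one, one_mul]
  have key : (X : PowerSeries ℚ) ^ (n + 1) ∣ (Pprod⁻¹ * Ssum m - FI * SP) := by
    have e : Pprod⁻¹ * Ssum m - FI * SP =
        Pprod⁻¹ * (Ssum m - SP) + (Pprod⁻¹ - FI) * SP := by ring
    rw [e, hsubinv]
    exact dvd_add (h3.mul_left _) (((h2.mul_right FI).mul_left Pprod⁻¹).mul_right SP)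
  have hz := coeff_eq_zero_of_dvd key (by omega : n < n + 1)
  rw [map_sub] at hz
  linarith

lemma coeff_main (m n : ℕ) (hm : 1 ≤ m) :
    PowerSeries.coeff (R := ℚ) n ((∏ d ∈ Finset.range (n + 1), (1 - X ^ (d + 1) : PowerSeries ℚ)⁻¹) *
        ∑ k ∈ Finset.range (n + 2), term m k) =
      (Fintype.card {l : Nat.Partition n // l.parts.toFinset.card = m - 1} : ℚ) := by
  classical
  set FI := ∏ d ∈ Finset.range (n + 1), (1 - X ^ (d + 1) : PowerSeries ℚ)⁻¹ with hFI
  rw [Finset.mul_sum, map_sum]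
  have hterm : ∀ k ∈ Finset.range (n + 2), PowerSeries.coeff (R := ℚ) n (FI * term m k) =
      ∑ ν ∈ (Finset.univ : Finset (Nat.Partition n)),
        (-1 : ℚ) ^ m * ((-1 : ℚ) ^ k * (k.choose m : ℚ) *
          ((ν.parts.toFinset.card + 1).choose k : ℚ)) := by
    intro k _
    have e1 : FI * term m k =
        PowerSeries.C (R := ℚ) ((-1 : ℚ) ^ ((k : ℤ) - (m : ℤ)) * (k.choose m : ℚ)) *
          (FI * ((X : PowerSeries ℚ) ^ (k * (k - 1) / 2) *
            (∏ d ∈ Finset.range k, (1 - X ^ (d + 1) : PowerSeries ℚ))⁻¹)) := by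
      rw [term]; ring
    rw [e1, GF1 k, PowerSeries.coeff_C_mul, PowerSeries.coeff_mul]
    have e2 : ∀ p ∈ Finset.HasAntidiagonal.antidiagonal n,
        PowerSeries.coeff (R := ℚ) p.1 FI *
          PowerSeries.coeff (R := ℚ) p.2 (PowerSeries.mk fun b => (countA k b : ℚ)) =
        ((Fintype.card (Nat.Partition p.1) * countA k p.2 : ℕ) : ℚ) := by
      intro p hp
      have hple : p.1 ≤ n := by
        have := Finset.HasAntidiagonal.mem_antidiagonal.mp hp
        omega
      rw [PowerSeries.coeff_mk, hFI, coeff_FI n p.1 hple]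
      push_cast
      ring
    rw [Finset.sum_congr rfl e2, ← Nat.cast_sum, merge n k, sign_eq, Nat.cast_sum,
      Finset.mul_sum]
    apply Finset.sum_congr rfl
    intro ν _
    push_cast
    ring
  rw [Finset.sum_congr rfl hterm, Finset.sum_comm]
  have hν : ∀ ν ∈ (Finset.univ : Finset (Nat.Partition n)),
      ∑ k ∈ Finset.range (n + 2), (-1 : ℚ) ^ m * ((-1 : ℚ) ^ k * (k.choose m : ℚ) *
          ((ν.parts.toFinset.card + 1).choose k : ℚ)) =
      (if ν.parts.toFinset.card = m - 1 then (1 : ℚ) else 0) := by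
    intro ν _
    rw [← Finset.mul_sum]
    have hb := bid m (ν.parts.toFinset.card + 1) (n + 2) (by have := distinct_le n ν; omega)
    rw [hb]
    split_ifs with h1 h2 h3
    · rw [← mul_pow]; norm_num
    · omega
    · omega
    · rw [mul_zero]
  rw [Finset.sum_congr rfl hν, Fintype.card_subtype, Finset.card_filter, Nat.cast_sum]
  apply Finset.sum_congr rfl
  intro ν _
  split_ifs <;> simp

end Stmt11Aux

open Stmt11Aux

open PowerSeries in
/-- For `m ≥ 1`, the generating function of the number `c_m(n)` of partitions of `n`
with exactly `m - 1` distinct part sizes (equivalently, the Euler characteristics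
`χ(B^{[n]}_m)`) satisfies
`∑_n c_m(n) qⁿ = ∏_{d=1}^∞ (1 - q^d)⁻¹ ·
   ∑_{k=0}^∞ (-1)^{k-m} q^{k(k-1)/2} binom(k,m) ∏_{d=1}^{k} (1 - q^d)⁻¹`. -/
theorem stmt11 (m : ℕ) (hm : 1 ≤ m) :
    PowerSeries.mk
        (fun n => (Fintype.card {l : n.Partition // l.parts.toFinset.card = m - 1} : ℚ)) =
      (∏' d : ℕ, (1 - X ^ (d + 1) : PowerSeries ℚ))⁻¹ *
        ∑' k : ℕ,
          C (R := ℚ) ((-1 : ℚ) ^ ((k : ℤ) - (m : ℤ)) * (k.choose m : ℚ)) * X ^ (k * (k - 1) / 2) *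
            (∏ d ∈ Finset.range k, (1 - X ^ (d + 1) : PowerSeries ℚ))⁻¹ := by
  have htp : (∏' d : ℕ, (1 - X ^ (d + 1) : PowerSeries ℚ)) = Pprod := tprod_eq
  have hts : (∑' k : ℕ,
      C (R := ℚ) ((-1 : ℚ) ^ ((k : ℤ) - (m : ℤ)) * (k.choose m : ℚ)) * X ^ (k * (k - 1) / 2) *
        (∏ d ∈ Finset.range k, (1 - X ^ (d + 1) : PowerSeries ℚ))⁻¹) = Ssum m := tsum_eq m
  rw [htp, hts]
  ext n
  rw [PowerSeries.coeff_mk, coeff_red m n, coeff_main m n hm]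

end
end

section
/- For every r ≥ 1, the following identity holds in ℚ[[q]]: ∑_{n=0}^{∞} ( ∑_{λ partition of n+r} binom(d(λ), r) ) q^n = q^{r(r−1)/2} · ∏_{d=1}^{∞} (1 − q^d)^{−1} · ∏_{d=1}^{r} (1 − q^d)^{−1}, where d(λ) is the number of distinct part sizes of λ and binom(d(λ), r) is the ordinary binomial coefficient. -/
noncomputable section

section


section
open scoped Classical

open Finset

/-- number of partitions of `n` with all parts at most `N` -/
noncomputable def Ecnt (N n : ℕ) : ℕ :=
  (Finset.univ.filter fun l : Nat.Partition n => ∀ i ∈ l.parts, i ≤ N).card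

noncomputable def pcnt (n : ℕ) : ℕ := Fintype.card (Nat.Partition n)

lemma part_le_sum {n : ℕ} (l : Nat.Partition n) {i : ℕ} (hi : i ∈ l.parts) : i ≤ n := by
  have := Multiset.single_le_sum (fun x _ => Nat.zero_le x) i hi
  simpa [l.parts_sum] using this

lemma Ecnt_eq_pcnt {N n : ℕ} (h : n ≤ N) : Ecnt N n = pcnt n := by
  rw [Ecnt, pcnt, Fintype.card, Finset.filter_true_of_mem]
  intro l _ i hi
  exact le_trans (part_le_sum l hi) h

lemma Ecnt_zero_right (N : ℕ) : Ecnt N 0 = 1 := by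
  rw [Ecnt_eq_pcnt (Nat.zero_le N), pcnt]
  exact Fintype.card_eq_one_iff.2 ⟨⟨0, by simp, by simp⟩, fun l => by
    ext1
    have : l.parts = 0 := by
      have h0 := l.parts_sum
      rw [Multiset.sum_eq_zero_iff] at h0
      by_contra hne
      obtain ⟨i, hi⟩ := Multiset.exists_mem_of_ne_zero hne
      exact (l.parts_pos hi).ne' (h0 i hi)
    simp [this]⟩

lemma Ecnt_zero (n : ℕ) (hn : n ≠ 0) : Ecnt 0 n = 0 := by
  rw [Ecnt, Finset.card_eq_zero, Finset.filter_eq_empty_iff]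
  intro l _
  intro h
  have hne : l.parts ≠ 0 := by
    intro h0
    exact hn (by rw [← l.parts_sum, h0]; simp)
  obtain ⟨i, hi⟩ := Multiset.exists_mem_of_ne_zero hne
  exact absurd (h i hi) (by simpa using (l.parts_pos hi).ne')

end
noncomputable section
open Finset

lemma Ecnt_small {N n : ℕ} (h : n < N + 1) : Ecnt (N + 1) n = Ecnt N n := by
  unfold Ecnt
  congr 1
  apply Finset.filter_congr
  intro l _
  constructor
  · intro hl i hi
    have h1 := hl i hi
    have h2 := part_le_sum l hi
    omega
  · intro hl i hi; exact le_trans (hl i hi) (Nat.le_succ N)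

lemma Ecnt_rec (N m : ℕ) :
    Ecnt (N + 1) (m + (N + 1)) = Ecnt N (m + (N + 1)) + Ecnt (N + 1) m := by
  unfold Ecnt
  rw [← Finset.card_filter_add_card_filter_not
    (p := fun l : Nat.Partition (m + (N+1)) => (N+1) ∉ l.parts)]
  congr 1
  · rw [Finset.filter_filter]
    congr 1
    apply Finset.filter_congr
    intro l _
    constructor
    · rintro ⟨hl, hnot⟩ i hi
      have := hl i hi
      rcases Nat.lt_or_ge i (N+1) with h | h
      · omega
      · have hieq : i = N + 1 := by omega
        exact absurd (by rwa [hieq] at hi) hnot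
    · intro hl
      exact ⟨fun i hi => le_trans (hl i hi) (Nat.le_succ N),
        fun hmem => by have := hl _ hmem; omega⟩
  · rw [Finset.filter_filter]
    apply Finset.card_bij
      (i := fun (l : Nat.Partition (m + (N+1))) hl =>
        (⟨l.parts.erase (N+1), fun hi => l.parts_pos (Multiset.mem_of_mem_erase hi), by
          have hmem : (N+1) ∈ l.parts := not_not.1 (Finset.mem_filter.1 hl).2.2
          have h1 : l.parts = (N+1) ::ₘ l.parts.erase (N+1) := (Multiset.cons_erase hmem).symm
          have h2 := l.parts_sum
          rw [h1, Multiset.sum_cons] at h2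
          omega⟩ : Nat.Partition m))
    · intro l hl
      simp only [Finset.mem_filter, Finset.mem_univ, true_and]
      intro i hi
      exact (Finset.mem_filter.1 hl).2.1 i (Multiset.mem_of_mem_erase hi)
    · intro l1 h1 l2 h2 heq
      have hmem1 : (N+1) ∈ l1.parts := not_not.1 (Finset.mem_filter.1 h1).2.2
      have hmem2 : (N+1) ∈ l2.parts := not_not.1 (Finset.mem_filter.1 h2).2.2
      have he : l1.parts.erase (N+1) = l2.parts.erase (N+1) :=
        congrArg Nat.Partition.parts heq
      ext1
      rw [← Multiset.cons_erase hmem1, ← Multiset.cons_erase hmem2, he]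
    · intro μ hμ
      have hμ' := (Finset.mem_filter.1 hμ).2
      refine ⟨⟨(N+1) ::ₘ μ.parts, ?_, ?_⟩, ?_, ?_⟩
      · intro i hi
        rcases Multiset.mem_cons.1 hi with h | h
        · omega
        · exact μ.parts_pos h
      · rw [Multiset.sum_cons, μ.parts_sum]; omega
      · simp only [Finset.mem_filter, Finset.mem_univ, true_and]
        constructor
        · intro i hi
          rcases Multiset.mem_cons.1 hi with h | h
          · omega
          · exact hμ' i h
        · simp
      · ext1
        simp
end
noncomputable section
open Finset

/-- `r`-element sets of distinct positive integers with sum `s` -/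
noncomputable def Dset (r s : ℕ) : Finset (Finset ℕ) :=
  (Finset.range (s+1)).powerset.filter
    fun S => S.card = r ∧ (∀ x ∈ S, 0 < x) ∧ S.sum id = s

noncomputable def Dcnt (r s : ℕ) : ℕ := (Dset r s).card

lemma mem_Dset {r s : ℕ} {S : Finset ℕ} :
    S ∈ Dset r s ↔ S.card = r ∧ (∀ x ∈ S, 0 < x) ∧ S.sum id = s := by
  rw [Dset, Finset.mem_filter, Finset.mem_powerset]
  constructor
  · rintro ⟨-, h⟩; exact h
  · rintro ⟨h1, h2, h3⟩
    refine ⟨fun x hx => ?_, h1, h2, h3⟩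
    rw [Finset.mem_range]
    have : x ≤ S.sum id := Finset.single_le_sum (fun i _ => Nat.zero_le (id i)) hx
    omega

lemma Dcnt_zero (s : ℕ) : Dcnt 0 s = if s = 0 then 1 else 0 := by
  unfold Dcnt
  split_ifs with h
  · subst h
    rw [Finset.card_eq_one]
    refine ⟨∅, ?_⟩
    ext S
    rw [mem_Dset, Finset.mem_singleton, Finset.card_eq_zero]
    constructor
    · rintro ⟨h1, -, -⟩; exact h1
    · rintro rfl; simp
  · rw [Finset.card_eq_zero, Finset.eq_empty_iff_forall_notMem]
    intro S hS
    rw [mem_Dset] at hS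
    obtain ⟨h1, h2, h3⟩ := hS
    rw [Finset.card_eq_zero] at h1
    subst h1
    simp at h3
    omega

lemma Dcnt_small {r s : ℕ} (h : s < r) : Dcnt r s = 0 := by
  rw [Dcnt, Finset.card_eq_zero, Finset.eq_empty_iff_forall_notMem]
  intro S hS
  rw [mem_Dset] at hS
  obtain ⟨h1, h2, h3⟩ := hS
  have : S.card ≤ S.sum id := by
    calc S.card = ∑ _x ∈ S, 1 := by simp
    _ ≤ S.sum id := Finset.sum_le_sum fun i hi => h2 i hi
  omega

lemma Dcnt_rec (r m : ℕ) :
    Dcnt (r + 1) (m + (r + 1)) = Dcnt (r + 1) m + Dcnt r m := by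
  unfold Dcnt
  rw [← Finset.card_filter_add_card_filter_not
    (p := fun S : Finset ℕ => 1 ∉ S)]
  congr 1
  · apply Finset.card_bij (i := fun S _ => S.image (· - 1))
    · intro S hS
      rw [Finset.mem_filter, mem_Dset] at hS
      obtain ⟨⟨h1, h2, h3⟩, h4⟩ := hS
      have hinj : Set.InjOn (· - 1) S := by
        intro x hx y hy hxy
        have := h2 x hx; have := h2 y hy
        simp only at hxy
        omega
      rw [mem_Dset]
      refine ⟨by rw [Finset.card_image_of_injOn hinj, h1], ?_, ?_⟩
      · intro x hx
        rw [Finset.mem_image] at hx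
        obtain ⟨y, hy, rfl⟩ := hx
        have := h2 y hy
        have hy1 : y ≠ 1 := fun he => h4 (he ▸ hy)
        omega
      · rw [Finset.sum_image hinj]
        have e1 : ∑ y ∈ S, id (y - 1) + S.card = ∑ y ∈ S, (id (y - 1) + 1) := by
          rw [Finset.sum_add_distrib]; simp
        have e2 : ∑ y ∈ S, (id (y - 1) + 1) = ∑ y ∈ S, id y := by
          apply Finset.sum_congr rfl
          intro y hy
          have := h2 y hy
          simp only [id]
          omega
        have h3' : ∑ y ∈ S, id y = m + (r + 1) := h3
        have hc : S.card = r + 1 := h1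
        omega
    · intro S1 hS1 S2 hS2 heq
      rw [Finset.mem_filter, mem_Dset] at hS1 hS2
      have e1 : ∀ S : Finset ℕ, (∀ x ∈ S, 0 < x) → (S.image (· - 1)).image (· + 1) = S := by
        intro S hpos
        ext a
        simp only [Finset.mem_image, exists_exists_and_eq_and]
        constructor
        · rintro ⟨y, hy, rfl⟩
          have := hpos y hy
          have : y - 1 + 1 = y := by omega
          rwa [this]
        · intro ha
          exact ⟨a, ha, by have := hpos a ha; omega⟩
      rw [← e1 S1 hS1.1.2.1, ← e1 S2 hS2.1.2.1, heq]
    · intro T hT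
      rw [mem_Dset] at hT
      obtain ⟨h1, h2, h3⟩ := hT
      refine ⟨T.image (· + 1), ?_, ?_⟩
      · rw [Finset.mem_filter, mem_Dset]
        have hinj : Set.InjOn (· + 1) T := fun x _ y _ h => by simp only at h; omega
        refine ⟨⟨by rw [Finset.card_image_of_injOn hinj, h1], ?_, ?_⟩, ?_⟩
        · intro x hx
          rw [Finset.mem_image] at hx
          obtain ⟨y, -, rfl⟩ := hx
          omega
        · rw [Finset.sum_image hinj]
          have e2 : ∑ y ∈ T, id (y + 1) = ∑ y ∈ T, (id y + 1) := rfl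
          rw [e2, Finset.sum_add_distrib, h3, ← Finset.card_eq_sum_ones, h1]
        · intro hmem
          rw [Finset.mem_image] at hmem
          obtain ⟨y, hy, hy1⟩ := hmem
          have := h2 y hy
          omega
      · ext a
        simp only [Finset.mem_image, exists_exists_and_eq_and]
        constructor
        · rintro ⟨y, hy, rfl⟩
          simpa using hy
        · intro ha
          exact ⟨a, ha, by omega⟩
  · apply Finset.card_bij (i := fun S _ => (S.erase 1).image (· - 1))
    · intro S hS
      rw [Finset.mem_filter, mem_Dset, not_not] at hS
      obtain ⟨⟨h1, h2, h3⟩, h4⟩ := hS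
      have htwo : ∀ x ∈ S.erase 1, 2 ≤ x := by
        intro x hx
        have hne := Finset.ne_of_mem_erase hx
        have := h2 x (Finset.mem_of_mem_erase hx)
        omega
      have hinj : Set.InjOn (· - 1) (S.erase 1) := by
        intro x hx y hy hxy
        have := htwo x hx; have := htwo y hy
        simp only at hxy
        omega
      have hsume : ∑ y ∈ S.erase 1, id y = m + r := by
        have h5 := Finset.sum_erase_add S id h4
        have h3' : ∑ y ∈ S, id y = m + (r + 1) := h3
        have hid : id 1 = 1 := rfl
        omega
      have hcarde : (S.erase 1).card = r := by
        rw [Finset.card_erase_of_mem h4, h1]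
        omega
      rw [mem_Dset]
      refine ⟨by rw [Finset.card_image_of_injOn hinj, hcarde], ?_, ?_⟩
      · intro x hx
        rw [Finset.mem_image] at hx
        obtain ⟨y, hy, rfl⟩ := hx
        have := htwo y hy
        omega
      · rw [Finset.sum_image hinj]
        have e1 : ∑ y ∈ S.erase 1, id (y - 1) + (S.erase 1).card
            = ∑ y ∈ S.erase 1, (id (y - 1) + 1) := by
          rw [Finset.sum_add_distrib]; simp
        have e2 : ∑ y ∈ S.erase 1, (id (y - 1) + 1) = ∑ y ∈ S.erase 1, id y := by
          apply Finset.sum_congr rfl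
          intro y hy
          have := htwo y hy
          simp only [id]
          omega
        omega
    · intro S1 hS1 S2 hS2 heq
      rw [Finset.mem_filter, mem_Dset, not_not] at hS1 hS2
      have key : ∀ S : Finset ℕ, (∀ x ∈ S, 0 < x) → 1 ∈ S →
          insert 1 (((S.erase 1).image (· - 1)).image (· + 1)) = S := by
        intro S hpos h1S
        have him : ((S.erase 1).image (· - 1)).image (· + 1) = S.erase 1 := by
          ext a
          simp only [Finset.mem_image, exists_exists_and_eq_and]
          constructor
          · rintro ⟨y, hy, rfl⟩
            have hne := Finset.ne_of_mem_erase hy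
            have := hpos y (Finset.mem_of_mem_erase hy)
            have : y - 1 + 1 = y := by omega
            rwa [this]
          · intro ha
            have hne := Finset.ne_of_mem_erase ha
            have := hpos a (Finset.mem_of_mem_erase ha)
            exact ⟨a, ha, by omega⟩
        rw [him, Finset.insert_erase h1S]
      rw [← key S1 hS1.1.2.1 hS1.2, ← key S2 hS2.1.2.1 hS2.2, heq]
    · intro T hT
      rw [mem_Dset] at hT
      obtain ⟨h1, h2, h3⟩ := hT
      have hinj : Set.InjOn (· + 1) T := fun x _ y _ h => by simp only at h; omega
      have h1nm : 1 ∉ T.image (· + 1) := by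
        rw [Finset.mem_image]
        rintro ⟨y, hy, hy1⟩
        have := h2 y hy
        omega
      refine ⟨insert 1 (T.image (· + 1)), ?_, ?_⟩
      · rw [Finset.mem_filter, mem_Dset, not_not]
        refine ⟨⟨?_, ?_, ?_⟩, Finset.mem_insert_self 1 _⟩
        · rw [Finset.card_insert_of_notMem h1nm, Finset.card_image_of_injOn hinj, h1]
        · intro x hx
          rcases Finset.mem_insert.1 hx with h | h
          · omega
          · rw [Finset.mem_image] at h
            obtain ⟨y, -, rfl⟩ := h
            omega
        · rw [Finset.sum_insert h1nm, Finset.sum_image hinj]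
          have e2 : ∑ y ∈ T, id (y + 1) = ∑ y ∈ T, (id y + 1) := rfl
          rw [e2, Finset.sum_add_distrib, h3, ← Finset.card_eq_sum_ones, h1]
          simp only [id]
          omega
      · rw [Finset.erase_insert h1nm]
        ext a
        simp only [Finset.mem_image, exists_exists_and_eq_and]
        constructor
        · rintro ⟨y, hy, rfl⟩
          simpa using hy
        · intro ha
          exact ⟨a, ha, by omega⟩
end
noncomputable section
open Finset

lemma sum_id_eq_val_sum (S : Finset ℕ) : S.sum id = S.val.sum := by
  show (S.val.map id).sum = S.val.sum
  rw [Multiset.map_id]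

lemma count_le_parts {m : ℕ} {S : Finset ℕ} {l : Nat.Partition m}
    (h : ∀ x ∈ S, x ∈ l.parts) : S.val ≤ l.parts := by
  rw [Multiset.le_iff_count]
  intro a
  by_cases ha : a ∈ S
  · have h1 : S.val.count a = 1 := Multiset.count_eq_one_of_mem S.nodup ha
    rw [h1]
    exact Multiset.one_le_count_iff_mem.2 (h a ha)
  · have h1 : S.val.count a = 0 := by
      rw [Multiset.count_eq_zero]
      exact fun hc => ha hc
    omega

lemma fiber_card (m : ℕ) (S : Finset ℕ) (hpos : ∀ x ∈ S, 0 < x) (hsum : S.sum id ≤ m) :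
    (Finset.univ.filter fun l : Nat.Partition m => ∀ x ∈ S, x ∈ l.parts).card
      = pcnt (m - S.sum id) := by
  rw [pcnt, ← Finset.card_univ]
  refine Finset.card_bij'
    (i := fun (l : Nat.Partition m) hl =>
      (⟨l.parts - S.val, fun hi => l.parts_pos
          (Multiset.mem_of_le (Multiset.sub_le_self _ _) hi), by
        have hle : S.val ≤ l.parts :=
          count_le_parts (fun x hx => (Finset.mem_filter.1 hl).2 x hx)
        have h1 := tsub_add_cancel_of_le hle
        have h2 : (l.parts - S.val).sum + S.val.sum = m := by
          rw [← Multiset.sum_add, h1, l.parts_sum]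
        have h3 := sum_id_eq_val_sum S
        omega⟩ : Nat.Partition (m - S.sum id)))
    (j := fun (u : Nat.Partition (m - S.sum id)) _ =>
      (⟨u.parts + S.val, fun hi => by
        rcases Multiset.mem_add.1 hi with h | h
        · exact u.parts_pos h
        · exact hpos _ h, by
        rw [Multiset.sum_add, u.parts_sum, ← sum_id_eq_val_sum S]
        omega⟩ : Nat.Partition m)) ?_ ?_ ?_ ?_
  case refine_1 => intro l hl; exact Finset.mem_univ _
  case refine_2 =>
    intro u hu
    rw [Finset.mem_filter]
    refine ⟨Finset.mem_univ _, fun x hx => ?_⟩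
    exact Multiset.mem_add.2 (Or.inr hx)
  case refine_3 =>
    intro l hl
    ext1
    exact tsub_add_cancel_of_le
      (count_le_parts (fun x hx => (Finset.mem_filter.1 hl).2 x hx))
  case refine_4 =>
    intro u hu
    ext1
    exact add_tsub_cancel_right _ _
end
noncomputable section
open Finset

lemma cnt_S (m r : ℕ) (S : Finset ℕ) :
    (Finset.univ.filter fun l : Nat.Partition m =>
        S.card = r ∧ ∀ x ∈ S, x ∈ l.parts).card
      = if S.card = r ∧ (∀ x ∈ S, 0 < x) ∧ S.sum id ≤ m
        then pcnt (m - S.sum id) else 0 := by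
  by_cases hcard : S.card = r
  · by_cases hpos : ∀ x ∈ S, 0 < x
    · by_cases hsum : S.sum id ≤ m
      · rw [if_pos ⟨hcard, hpos, hsum⟩, ← fiber_card m S hpos hsum]
        congr 1
        apply Finset.filter_congr
        intro l _
        simp [hcard]
      · rw [if_neg (by tauto)]
        rw [Finset.card_eq_zero, Finset.filter_eq_empty_iff]
        rintro l - ⟨-, hall⟩
        have hle : S.val ≤ l.parts := count_le_parts hall
        have h1 := tsub_add_cancel_of_le hle
        have h2 : (l.parts - S.val).sum + S.val.sum = m := by
          rw [← Multiset.sum_add, h1, l.parts_sum]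
        have h3 := sum_id_eq_val_sum S
        omega
    · rw [if_neg (by tauto)]
      rw [Finset.card_eq_zero, Finset.filter_eq_empty_iff]
      rintro l - ⟨-, hall⟩
      push_neg at hpos
      obtain ⟨x, hx, hx0⟩ := hpos
      have : x = 0 := by omega
      subst this
      exact absurd (l.parts_pos (hall 0 hx)) (by simp)
  · rw [if_neg (by tauto)]
    rw [Finset.card_eq_zero, Finset.filter_eq_empty_iff]
    rintro l - ⟨h, -⟩
    exact hcard h

lemma C1 (r m : ℕ) :
    (∑ l : Nat.Partition m, (l.parts.toFinset.card).choose r)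
      = ∑ k ∈ Finset.range (m+1), Dcnt r k * pcnt (m - k) := by
  have step1 : ∀ l : Nat.Partition m,
      (l.parts.toFinset.card).choose r
        = ((Finset.range (m+1)).powerset.filter
            (fun S => S.card = r ∧ ∀ x ∈ S, x ∈ l.parts)).card := by
    intro l
    rw [← Finset.card_powersetCard]
    congr 1
    ext S
    rw [Finset.mem_powersetCard, Finset.mem_filter, Finset.mem_powerset]
    constructor
    · rintro ⟨hsub, hc⟩
      refine ⟨fun x hx => ?_, hc, fun x hx => Multiset.mem_toFinset.1 (hsub hx)⟩
      rw [Finset.mem_range]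
      have := part_le_sum l (Multiset.mem_toFinset.1 (hsub hx))
      omega
    · rintro ⟨-, hc, hall⟩
      exact ⟨fun x hx => Multiset.mem_toFinset.2 (hall x hx), hc⟩
  calc ∑ l : Nat.Partition m, (l.parts.toFinset.card).choose r
      = ∑ l : Nat.Partition m, ∑ S ∈ (Finset.range (m+1)).powerset,
          if S.card = r ∧ ∀ x ∈ S, x ∈ l.parts then 1 else 0 := by
        apply Finset.sum_congr rfl
        intro l _
        rw [step1 l, Finset.card_filter]
    _ = ∑ S ∈ (Finset.range (m+1)).powerset, ∑ l : Nat.Partition m,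
          if S.card = r ∧ ∀ x ∈ S, x ∈ l.parts then 1 else 0 := Finset.sum_comm
    _ = ∑ S ∈ (Finset.range (m+1)).powerset,
          if S.card = r ∧ (∀ x ∈ S, 0 < x) ∧ S.sum id ≤ m
          then pcnt (m - S.sum id) else 0 := by
        apply Finset.sum_congr rfl
        intro S _
        rw [← cnt_S m r S, Finset.card_filter]
    _ = ∑ S ∈ (Finset.range (m+1)).powerset.filter
          (fun S => S.card = r ∧ (∀ x ∈ S, 0 < x) ∧ S.sum id ≤ m),
          pcnt (m - S.sum id) := (Finset.sum_filter _ _).symm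
    _ = ∑ k ∈ Finset.range (m+1), Dcnt r k * pcnt (m - k) := by
        rw [← Finset.sum_fiberwise_of_maps_to (g := fun S => S.sum id)
          (t := Finset.range (m+1)) (fun S hS => by
            rw [Finset.mem_range]
            have h9 : S.sum id ≤ m := (Finset.mem_filter.1 hS).2.2.2
            show S.sum id < m + 1
            omega)]
        apply Finset.sum_congr rfl
        intro k hk
        rw [Finset.mem_range] at hk
        have hset : ((Finset.range (m+1)).powerset.filter
            (fun S => S.card = r ∧ (∀ x ∈ S, 0 < x) ∧ S.sum id ≤ m)).filter
              (fun S => S.sum id = k) = Dset r k := by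
          ext S
          rw [Finset.filter_filter, Finset.mem_filter, Finset.mem_powerset, mem_Dset]
          constructor
          · rintro ⟨-, ⟨h1, h2, -⟩, h4⟩
            exact ⟨h1, h2, h4⟩
          · rintro ⟨h1, h2, h3⟩
            refine ⟨fun x hx => ?_, ⟨h1, h2, by omega⟩, h3⟩
            rw [Finset.mem_range]
            have : x ≤ S.sum id := Finset.single_le_sum (fun i _ => Nat.zero_le (id i)) hx
            omega
        rw [hset]
        rw [Finset.sum_congr rfl (fun S hS => by
          rw [(mem_Dset.1 hS).2.2]), Finset.sum_const, Dcnt, smul_eq_mul]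
end
noncomputable section
open Finset PowerSeries

abbrev EulerFactor (d : ℕ) : PowerSeries ℚ := 1 - X ^ (d + 1)

lemma coeff_mul_one_sub_X_pow (φ : PowerSeries ℚ) (k n : ℕ) (hk : 0 < k) :
    (coeff (R := ℚ) n) (φ * (1 - X ^ k))
      = (coeff (R := ℚ) n) φ - if k ≤ n then (coeff (R := ℚ) (n - k)) φ else 0 := by
  rw [mul_sub, mul_one, map_sub, coeff_mul_X_pow']

lemma GE (N : ℕ) :
    (mk fun n => (Ecnt N n : ℚ)) * ∏ d ∈ Finset.range N, EulerFactor d = 1 := by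
  induction N with
  | zero =>
    simp only [Finset.range_zero, Finset.prod_empty, mul_one]
    ext n
    rw [coeff_mk, coeff_one]
    rcases Nat.eq_zero_or_pos n with rfl | hn
    · simp [Ecnt_zero_right]
    · rw [Ecnt_zero n (by omega), if_neg (by omega)]
      simp
  | succ N ih =>
    have key : (mk fun n => (Ecnt (N+1) n : ℚ)) * EulerFactor N
        = mk fun n => (Ecnt N n : ℚ) := by
      ext n
      rw [EulerFactor, coeff_mul_one_sub_X_pow _ _ _ (by omega)]
      simp only [coeff_mk]
      split_ifs with h
      · obtain ⟨m, rfl⟩ : ∃ m, n = m + (N + 1) := ⟨n - (N+1), by omega⟩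
        rw [show m + (N + 1) - (N + 1) = m from by omega]
        have h1 : (Ecnt (N+1) (m+(N+1)) : ℚ) = (Ecnt N (m+(N+1)) : ℚ) + Ecnt (N+1) m := by
          exact_mod_cast congrArg (Nat.cast : ℕ → ℚ) (Ecnt_rec N m)
        linarith
      · rw [Ecnt_small (by omega), sub_zero]
    rw [Finset.prod_range_succ, mul_comm (∏ d ∈ Finset.range N, EulerFactor d)
      (EulerFactor N), ← mul_assoc, key, ih]
end
noncomputable section
open Finset PowerSeries

lemma triangle_succ (r : ℕ) : (r+1) * (r+2) / 2 = (r+1) + r * (r+1) / 2 := by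
  have h1 : (r+1) * (r+2) = r * (r+1) + (r+1) * 2 := by ring
  rw [h1, Nat.add_mul_div_right _ _ (by omega : 0 < 2)]
  omega

lemma GD (r : ℕ) :
    (PowerSeries.mk fun n => (Dcnt r n : ℚ)) * ∏ d ∈ Finset.range r, EulerFactor d
      = X ^ (r * (r + 1) / 2) := by
  induction r with
  | zero =>
    simp only [Finset.range_zero, Finset.prod_empty, mul_one]
    ext n
    rw [coeff_mk]
    simp only [Nat.zero_mul, Nat.zero_div, pow_zero, coeff_one]
    rw [Dcnt_zero]
    split_ifs <;> simp_all
  | succ r ih =>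
    have key : (PowerSeries.mk fun n => (Dcnt (r+1) n : ℚ)) * EulerFactor r
        = X ^ (r + 1) * PowerSeries.mk fun n => (Dcnt r n : ℚ) := by
      ext n
      rw [EulerFactor, coeff_mul_one_sub_X_pow _ _ _ (by omega),
        mul_comm (X ^ (r+1) : PowerSeries ℚ), coeff_mul_X_pow']
      simp only [coeff_mk]
      split_ifs with h
      · obtain ⟨m, rfl⟩ : ∃ m, n = m + (r + 1) := ⟨n - (r+1), by omega⟩
        rw [show m + (r + 1) - (r + 1) = m from by omega]
        have h1 : (Dcnt (r+1) (m+(r+1)) : ℚ) = (Dcnt (r+1) m : ℚ) + Dcnt r m := by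
          exact_mod_cast congrArg (Nat.cast : ℕ → ℚ) (Dcnt_rec r m)
        linarith
      · rw [Dcnt_small (by omega), sub_zero]
        simp
    rw [Finset.prod_range_succ, mul_comm (∏ d ∈ Finset.range r, EulerFactor d)
      (EulerFactor r), ← mul_assoc, key, mul_assoc, ih, triangle_succ, pow_add]
    rw [← pow_add, ← pow_add]
end

noncomputable section
open Finset PowerSeries Filter

def PP : PowerSeries ℚ :=
  PowerSeries.mk fun n => coeff (R := ℚ) n (∏ d ∈ Finset.range (n+1), EulerFactor d)

lemma coeff_mul_prod_high (n : ℕ) (g : PowerSeries ℚ) :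
    ∀ t : Finset ℕ, (∀ d ∈ t, n < d + 1) →
    coeff (R := ℚ) n (g * ∏ d ∈ t, EulerFactor d) = coeff (R := ℚ) n g := by
  intro t
  induction t using Finset.induction_on with
  | empty => intro _; simp
  | @insert a s ha ih =>
    intro ht
    rw [Finset.prod_insert ha, show g * (EulerFactor a * ∏ d ∈ s, EulerFactor d)
        = (g * ∏ d ∈ s, EulerFactor d) * EulerFactor a from by ring,
      EulerFactor, coeff_mul_one_sub_X_pow _ _ _ (by omega),
      if_neg (by have := ht a (Finset.mem_insert_self a s); omega), sub_zero]
    exact ih (fun d hd => ht d (Finset.mem_insert_of_mem hd))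

lemma coeff_prod_stable {n : ℕ} {s : Finset ℕ} (h : Finset.range (n+1) ⊆ s) :
    coeff (R := ℚ) n (∏ d ∈ s, EulerFactor d)
      = coeff (R := ℚ) n (∏ d ∈ Finset.range (n+1), EulerFactor d) := by
  rw [← Finset.prod_sdiff h, mul_comm]
  exact coeff_mul_prod_high n _ _ (fun d hd => by
    have h2 := (Finset.mem_sdiff.1 hd).2
    rw [Finset.mem_range] at h2
    omega)

lemma coeff_PP (n k : ℕ) (hk : k ≤ n) :
    coeff (R := ℚ) k PP = coeff (R := ℚ) k (∏ d ∈ Finset.range (n+1), EulerFactor d) := by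
  rw [PP, coeff_mk,
    ← coeff_prod_stable (n := k) (s := Finset.range (n+1))
      (Finset.range_subset_range.2 (by omega)),
    coeff_prod_stable (n := k) (s := Finset.range (n+1))
      (Finset.range_subset_range.2 (by omega))]

lemma hasProd_Euler : HasProd EulerFactor PP := by
  rw [HasProd, SummationFilter.unconditional_filter]
  erw [nhds_induced]
  rw [Filter.tendsto_comap_iff]
  rw [tendsto_pi_nhds]
  intro n
  apply Filter.Tendsto.congr' (f₁ := fun _ => coeff (R := ℚ) n PP)
  · have : {s : Finset ℕ | Finset.range (n+1) ⊆ s} ∈ (Filter.atTop : Filter (Finset ℕ)) :=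
      Filter.mem_atTop (Finset.range (n+1))
    filter_upwards [this] with s hs
    simp only [Function.comp]
    rw [coeff_PP n n le_rfl, ← coeff_prod_stable hs]
  · exact tendsto_const_nhds
end
noncomputable section
open Finset PowerSeries Filter

instance : T2Space (PowerSeries ℚ) :=
  Topology.IsEmbedding.t2Space
    (f := fun (f : PowerSeries ℚ) (n : ℕ) => coeff (R := ℚ) n f)
    ⟨⟨rfl⟩, fun f g h => PowerSeries.ext fun n => congrFun h n⟩

lemma tprod_Euler : (∏' d : ℕ, (1 - X ^ (d + 1) : PowerSeries ℚ)) = PP :=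
  hasProd_Euler.tprod_eq

lemma pcnt_zero : pcnt 0 = 1 := by rw [← Ecnt_eq_pcnt (le_refl 0), Ecnt_zero_right]

lemma PP_mul_p : PP * (PowerSeries.mk fun n => (pcnt n : ℚ)) = 1 := by
  ext n
  have h : (∏ d ∈ Finset.range (n+1), EulerFactor d)
      * (PowerSeries.mk fun k => (Ecnt (n+1) k : ℚ)) = 1 := by
    rw [mul_comm]; exact GE (n+1)
  have h2 := congrArg (coeff (R := ℚ) n) h
  rw [coeff_mul] at h2 ⊢
  rw [← h2]
  apply Finset.sum_congr rfl
  intro ij hij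
  have h1 : ij.1 ≤ n := Finset.HasAntidiagonal.antidiagonal.fst_le hij
  have hj : ij.2 ≤ n := Finset.HasAntidiagonal.antidiagonal.snd_le hij
  rw [coeff_PP n ij.1 h1]
  congr 1
  rw [coeff_mk, coeff_mk, Ecnt_eq_pcnt (by omega)]

lemma constantCoeff_Q (r : ℕ) :
    constantCoeff (R := ℚ) (∏ d ∈ Finset.range r, EulerFactor d) = 1 := by
  rw [map_prod]
  apply Finset.prod_eq_one
  intro d _
  rw [EulerFactor, map_sub, map_one, map_pow, constantCoeff_X]
  simp

lemma constantCoeff_PP : constantCoeff (R := ℚ) PP = 1 := by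
  have : constantCoeff (R := ℚ) PP = coeff (R := ℚ) 0 PP := by rw [coeff_zero_eq_constantCoeff]
  rw [this, coeff_PP 0 0 le_rfl]
  simp only [Finset.range_one, Finset.prod_singleton, EulerFactor]
  rw [coeff_zero_eq_constantCoeff]
  simp
end
open PowerSeries in
/-- For `r ≥ 1`, counting pairs of a partition `λ` of `n + r` with an `r`-element set
of elbows (the torus-fixed points of the refined Hilbert scheme `H^{[n,n+r]}`):
`∑_{n=0}^∞ (∑_{λ ⊢ n+r} binom(d(λ), r)) qⁿ
   = q^{r(r-1)/2} ∏_{d=1}^∞ (1 - q^d)⁻¹ ∏_{d=1}^{r} (1 - q^d)⁻¹`,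
where `d(λ)` is the number of distinct part sizes of `λ`. -/
theorem stmt12 (r : ℕ) (hr : 1 ≤ r) :
    PowerSeries.mk
        (fun n => ∑ l : (n + r).Partition, ((l.parts.toFinset.card).choose r : ℚ)) =
      X ^ (r * (r - 1) / 2) * (∏' d : ℕ, (1 - X ^ (d + 1) : PowerSeries ℚ))⁻¹ *
        (∏ d ∈ Finset.range r, (1 - X ^ (d + 1) : PowerSeries ℚ))⁻¹ := by
  set Qr : PowerSeries ℚ := ∏ d ∈ Finset.range r, EulerFactor d with hQr
  have hQc : constantCoeff (R := ℚ) Qr ≠ 0 := by rw [constantCoeff_Q]; norm_num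
  have hPc : constantCoeff (R := ℚ) PP ≠ 0 := by rw [constantCoeff_PP]; norm_num
  have hmkp : (PowerSeries.mk fun n => (pcnt n : ℚ)) = PP⁻¹ :=
    (PowerSeries.eq_inv_iff_mul_eq_one hPc).2 (by rw [mul_comm]; exact PP_mul_p)
  have hmkD : (PowerSeries.mk fun n => (Dcnt r n : ℚ))
      = X ^ (r * (r + 1) / 2) * Qr⁻¹ := by
    calc (PowerSeries.mk fun n => (Dcnt r n : ℚ))
        = (PowerSeries.mk fun n => (Dcnt r n : ℚ)) * (Qr * Qr⁻¹) := by
          rw [PowerSeries.mul_inv_cancel _ hQc, mul_one]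
      _ = ((PowerSeries.mk fun n => (Dcnt r n : ℚ)) * Qr) * Qr⁻¹ := by ring
      _ = X ^ (r * (r + 1) / 2) * Qr⁻¹ := by rw [hQr, GD r]
  have hXA : X ^ r * (PowerSeries.mk
        (fun n => ∑ l : (n + r).Partition, ((l.parts.toFinset.card).choose r : ℚ)))
      = (PowerSeries.mk fun n => (Dcnt r n : ℚ))
        * (PowerSeries.mk fun n => (pcnt n : ℚ)) := by
    ext n
    rw [mul_comm ((X : PowerSeries ℚ) ^ r), coeff_mul_X_pow', coeff_mul,
      Finset.Nat.sum_antidiagonal_eq_sum_range_succ_mk]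
    simp only [coeff_mk]
    split_ifs with h
    · have hn : n - r + r = n := by omega
      rw [hn]
      have h2 := congrArg (Nat.cast : ℕ → ℚ) (C1 r n)
      push_cast at h2
      rw [Nat.succ_eq_add_one]
      exact h2
    · symm
      apply Finset.sum_eq_zero
      intro k hk
      rw [Finset.mem_range] at hk
      rw [Dcnt_small (by omega)]
      simp
  have htri : r * (r + 1) / 2 = r + r * (r - 1) / 2 := by
    obtain ⟨s, rfl⟩ : ∃ s, r = s + 1 := ⟨r - 1, by omega⟩
    have := triangle_succ s
    rw [show s + 1 + 1 = s + 2 from by omega] at *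
    rw [show s + 1 - 1 = s from by omega, mul_comm (s+1) s]
    omega
  have key : X ^ r * (PowerSeries.mk
        (fun n => ∑ l : (n + r).Partition, ((l.parts.toFinset.card).choose r : ℚ)))
      = X ^ r * (X ^ (r * (r - 1) / 2)
          * (∏' d : ℕ, (1 - X ^ (d + 1) : PowerSeries ℚ))⁻¹ * Qr⁻¹) := by
    rw [hXA, hmkD, hmkp, tprod_Euler, htri, pow_add]
    ring
  have hX : (X : PowerSeries ℚ) ^ r ≠ 0 := pow_ne_zero r PowerSeries.X_ne_zero
  exact mul_left_cancel₀ hX key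

end
end
end

section
/- For every m ≥ 1, the following identity holds in K[[q]] with K = ℚ(t): ∏_{d=1}^{∞} (1 − t^{d+1} q^d)^{−1} · ∑_{k=0}^{∞} (−1)^{k−m} · t^{(k−m)(k−m−1)/2} · [k choose m]_t · q^{k(k−1)/2} · ∏_{d=1}^{k} (1 − t^{d} q^{d})^{−1} = ∏_{i=1}^{m−1} (1 − t^{i+1})^{−1} · ∑_{a=1}^{m} (−1)^{a} · t^{a(a−1)/2 + m} · [m choose a]_t · ∏_{k=0}^{∞} (1 − t^{k−a} q^{k}) · (1 − t^{k+1} q^{k})^{−1}. (The left-hand side is the generating function ∑_n E(H^{[n]}_m; t) q^n of the E-polynomials of the strata of the Hilbert scheme of points on ℂ² by number of generators at the origin, and the right-hand side is its closed form.) -/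
noncomputable section

namespace Aux2
variable {A : Type*} [CommRing A]

/-- Gaussian binomial via Pascal recursion. -/
def G (q : A) : ℕ → ℕ → A
  | _, 0 => 1
  | 0, _ + 1 => 0
  | N + 1, a + 1 => G q N (a + 1) + q ^ (N - a) * G q N a

@[simp] lemma G_zero (q : A) (N : ℕ) : G q N 0 = 1 := by cases N <;> rfl

lemma G_eq_zero (q : A) : ∀ {N a : ℕ}, N < a → G q N a = 0 := by
  intro N
  induction N with
  | zero => intro a h; match a, h with | a+1, _ => rfl
  | succ N ih =>
    intro a h
    match a, h with
    | a+1, h =>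
      show G q N (a+1) + q ^ (N-a) * G q N a = 0
      rw [ih (by omega), ih (by omega), mul_zero, add_zero]

lemma choose2_succ (b : ℕ) : (b + 1) * b / 2 = b * (b - 1) / 2 + b := by
  have h1 : 2 ∣ b * (b - 1) := by
    rcases b with _ | c
    · simp
    · simpa [Nat.succ_sub_one, mul_comm] using (Nat.even_mul_succ_self c).two_dvd
  have h2 : (b + 1) * b = b * (b - 1) + 2 * b := by
    rcases b with _ | c
    · simp
    · simp [Nat.succ_sub_one]; ring
  omega

/-- finite q-binomial theorem -/
lemma qbinom (q x : A) (N : ℕ) :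
    ∏ i ∈ Finset.range N, (1 - x * q ^ i) =
      ∑ a ∈ Finset.range (N + 1), (-1) ^ a * q ^ (a * (a - 1) / 2) * G q N a * x ^ a := by
  induction N with
  | zero => simp
  | succ N ih =>
    have hG0 : G q N (N + 1) = 0 := G_eq_zero q (Nat.lt_succ_self N)
    set T : ℕ → ℕ → A := fun M a => (-1) ^ a * q ^ (a * (a - 1) / 2) * G q M a * x ^ a with hT
    have peel : ∀ M : ℕ, ∑ a ∈ Finset.range (N + 2), T M a
        = (∑ b ∈ Finset.range (N + 1), T M (b + 1)) + 1 := by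
      intro M
      rw [Finset.sum_range_succ' (T M) (N + 1)]
      simp [hT]
    have key : ∀ b ∈ Finset.range (N + 1), T (N + 1) (b + 1)
        = T N (b + 1) + T N b * (-(x * q ^ N)) := by
      intro b hb
      rw [Finset.mem_range] at hb
      have hrec : G q (N + 1) (b + 1) = G q N (b + 1) + q ^ (N - b) * G q N b := rfl
      have e1 : q ^ ((b + 1) * b / 2) * q ^ (N - b) = q ^ (b * (b - 1) / 2) * q ^ N := by
        rw [← pow_add, ← pow_add]
        congr 1
        have := choose2_succ b
        omega
      simp only [hT]
      rw [hrec]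
      have hc : (b + 1) * ((b + 1) - 1) / 2 = (b + 1) * b / 2 := by simp
      rw [hc]
      linear_combination (-(-1 : A) ^ b * G q N b * x ^ b * x) * e1
    rw [Finset.prod_range_succ, ih]
    show (∑ a ∈ Finset.range (N + 1), T N a) * (1 - x * q ^ N)
        = ∑ a ∈ Finset.range (N + 2), T (N + 1) a
    have h4 : ∑ a ∈ Finset.range (N + 2), T N a = ∑ a ∈ Finset.range (N + 1), T N a := by
      rw [Finset.sum_range_succ (T N) (N + 1)]
      have hz : T N (N + 1) = 0 := by simp [hT, hG0]
      rw [hz, add_zero]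
    rw [peel (N + 1), Finset.sum_congr rfl key, Finset.sum_add_distrib, ← Finset.sum_mul,
      add_right_comm, ← peel N, h4]
    ring

/-- `(q;q)_a * G q N a = ∏_{i<a} (1 - q^{N-i})` for `a ≤ N+1`. -/
lemma G_mul (q : A) : ∀ N a : ℕ, a ≤ N + 1 →
    (∏ i ∈ Finset.range a, (1 - q ^ (i + 1))) * G q N a
      = ∏ i ∈ Finset.range a, (1 - q ^ (N - i)) := by
  intro N
  induction N with
  | zero =>
    intro a ha
    interval_cases a
    · simp
    · show (∏ i ∈ Finset.range 1, (1 - q ^ (i+1))) * G q 0 1 = _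
      simp [G]
  | succ N ih =>
    intro a ha
    match a, ha with
    | 0, _ => simp
    | a + 1, ha =>
      have hrec : G q (N + 1) (a + 1) = G q N (a + 1) + q ^ (N - a) * G q N a := rfl
      rcases Nat.lt_or_ge a (N + 1) with hlt | hge
      · have h1 := ih (a + 1) (by omega)
        have h2 := ih a (by omega)
        have hs : (∏ i ∈ Finset.range (a + 1), (1 - q ^ (i + 1)))
            = (∏ i ∈ Finset.range a, (1 - q ^ (i + 1))) * (1 - q ^ (a + 1)) :=
          Finset.prod_range_succ _ a
        have hsW : (∏ i ∈ Finset.range (a + 1), (1 - q ^ (N - i)))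
            = (∏ i ∈ Finset.range a, (1 - q ^ (N - i))) * (1 - q ^ (N - a)) :=
          Finset.prod_range_succ _ a
        have hq : q ^ (N - a) * q ^ (a + 1) = q ^ (N + 1) := by
          rw [← pow_add]; congr 1; omega
        have h3 : (∏ i ∈ Finset.range (a + 1), (1 - q ^ (N + 1 - i)))
            = (∏ i ∈ Finset.range a, (1 - q ^ (N - i))) * (1 - q ^ (N + 1)) := by
          rw [Finset.prod_range_succ' (fun i => (1 - q ^ (N + 1 - i))) a]
          congr 1
          refine Finset.prod_congr rfl fun i _ => ?_
          congr 2
          omega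
        rw [hrec, mul_add, h1, hs, h3, hsW]
        linear_combination ((1 - q ^ (a + 1)) * q ^ (N - a)) * h2
          - (∏ i ∈ Finset.range a, (1 - q ^ (N - i))) * hq
      · have haN : a = N + 1 := by omega
        subst haN
        have hz1 : G q N (N + 2) = 0 := G_eq_zero q (by omega)
        have hz2 : G q N (N + 1) = 0 := G_eq_zero q (by omega)
        rw [hrec, hz1, hz2]
        refine Eq.trans (by ring) (Finset.prod_eq_zero
          (Finset.mem_range.2 (Nat.lt_succ_self (N + 1))) ?_).symm
        simp

end Aux2

namespace Aux
open PowerSeries Filter Finset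

instance : DiscreteTopology K := ⟨rfl⟩

local notation "R" => PowerSeries K

lemma inducing_coeff : Topology.IsInducing (fun (f : R) n => @coeff K _ n f) := ⟨rfl⟩

instance : T2Space R :=
  Topology.IsEmbedding.t2Space ⟨inducing_coeff, fun f g h => PowerSeries.ext fun n => congrFun h n⟩

lemma tendsto_iff_coeff {ι : Type*} {l : Filter ι} {f : ι → R} {P : R} :
    Filter.Tendsto f l (nhds P) ↔ ∀ n, ∀ᶠ i in l, @coeff K _ n (f i) = @coeff K _ n P := by
  rw [inducing_coeff.tendsto_nhds_iff, tendsto_pi_nhds]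
  refine forall_congr' fun n => ?_
  rw [nhds_discrete, Filter.tendsto_pure]
  rfl

lemma hasProd_iff {f : ℕ → R} {P : R} :
    HasProd f P ↔ ∀ n, ∀ᶠ S : Finset ℕ in Filter.atTop,
      @coeff K _ n (∏ k ∈ S, f k) = @coeff K _ n P := tendsto_iff_coeff

lemma hasSum_iff {f : ℕ → R} {P : R} :
    HasSum f P ↔ ∀ n, ∀ᶠ S : Finset ℕ in Filter.atTop,
      @coeff K _ n (∑ k ∈ S, f k) = @coeff K _ n P := tendsto_iff_coeff

lemma coeff_eq_zero_of_dvd {n N : ℕ} (h : n < N) {f : R} (hf : X ^ N ∣ f) :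
    @coeff K _ n f = 0 := (PowerSeries.X_pow_dvd_iff.mp hf) n h

lemma continuous_coeff (n : ℕ) : Continuous (@coeff K _ n : R → K) :=
  by exact (continuous_apply n).comp inducing_coeff.continuous

lemma continuous_of_coeff {Y : Type*} [TopologicalSpace Y] {f : Y → R}
    (h : ∀ n, Continuous fun x => @coeff K _ n (f x)) : Continuous f :=
  continuous_induced_rng.2 (continuous_pi h)

instance : ContinuousAdd K := ⟨continuous_of_discreteTopology⟩
instance : ContinuousMul K := ⟨continuous_of_discreteTopology⟩

instance : ContinuousAdd R := ⟨continuous_of_coeff fun n => by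
  simp only [map_add]
  exact (((continuous_coeff n).comp continuous_fst).add
    ((continuous_coeff n).comp continuous_snd))⟩

instance : ContinuousMul R := ⟨continuous_of_coeff fun n => by
  simp only [PowerSeries.coeff_mul]
  exact continuous_finset_sum _ fun p _ =>
    (((continuous_coeff p.1).comp continuous_fst).mul
      ((continuous_coeff p.2).comp continuous_snd))⟩


lemma prod_sub_one_dvd {N : ℕ} {s : Finset ℕ} {f : ℕ → R}
    (h : ∀ k ∈ s, X ^ N ∣ (f k - 1)) : X ^ N ∣ ((∏ k ∈ s, f k) - 1) := by
  classical
  induction s using Finset.induction_on with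
  | empty => simp
  | @insert a s' hk ih =>
    rw [Finset.prod_insert hk]
    have h1 : X ^ N ∣ (f a - 1) := h a (Finset.mem_insert_self a s')
    have h2 : X ^ N ∣ ((∏ k ∈ s', f k) - 1) :=
      ih fun k hks => h k (Finset.mem_insert_of_mem hks)
    have h3 : f a * (∏ k ∈ s', f k) - 1
        = f a * ((∏ k ∈ s', f k) - 1) + (f a - 1) := by ring
    rw [h3]
    exact dvd_add (Dvd.dvd.mul_left h2 _) h1

lemma coeff_mul_sub_one {n N : ℕ} (hn : n < N) {A g : R} (hg : X ^ N ∣ (g - 1)) :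
    @coeff K _ n (A * g) = @coeff K _ n A := by
  have h1 : A * g - A = A * (g - 1) := by ring
  have hd : X ^ N ∣ (A * g - A) := h1 ▸ Dvd.dvd.mul_left hg A
  have h0 := coeff_eq_zero_of_dvd hn hd
  rw [map_sub, sub_eq_zero] at h0
  exact h0

/-- `hyp f`: factor `f k` is `1` mod `X^n` for `k ≥ n`. -/
def hyp (f : ℕ → R) : Prop := ∀ n k : ℕ, n ≤ k → X ^ n ∣ (f k - 1)

lemma coeff_prod_subset {f : ℕ → R} (hf : hyp f) {n : ℕ} {S T : Finset ℕ}
    (hST : S ⊆ T) (h : ∀ k ∈ T, k ∉ S → n < k) :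
    @coeff K _ n (∏ k ∈ T, f k) = @coeff K _ n (∏ k ∈ S, f k) := by
  rw [← Finset.prod_sdiff hST, mul_comm]
  refine coeff_mul_sub_one (Nat.lt_succ_self n) (prod_sub_one_dvd fun k hk => ?_)
  rw [Finset.mem_sdiff] at hk
  exact hf (n+1) k (h k hk.1 hk.2)

def plim (f : ℕ → R) : R := PowerSeries.mk fun n => @coeff K _ n (∏ k ∈ Finset.range (n + 1), f k)

lemma coeff_plim {f : ℕ → R} (hf : hyp f) {n N : ℕ} (hN : n < N) :
    @coeff K _ n (plim f) = @coeff K _ n (∏ k ∈ Finset.range N, f k) := by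
  rw [plim, coeff_mk]
  rcases le_total (n+1) N with h | h
  · exact (coeff_prod_subset hf (Finset.range_subset_range.2 h)
      (fun k hk hk2 => by simp only [Finset.mem_range] at *; omega)).symm
  · exact coeff_prod_subset hf (Finset.range_subset_range.2 h)
      (fun k hk hk2 => by simp only [Finset.mem_range] at *; omega)

lemma hasProd_plim {f : ℕ → R} (hf : hyp f) : HasProd f (plim f) := by
  rw [hasProd_iff]
  intro n
  rw [Filter.eventually_atTop]
  refine ⟨Finset.range (n + 1), fun S hS => ?_⟩
  rw [coeff_prod_subset hf hS (fun k hk hk2 => by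
        by_contra hc; exact hk2 (Finset.mem_range.2 (by omega))),
    ← coeff_plim hf (Nat.lt_succ_self n)]

/-- sum analogue -/
def hypS (f : ℕ → R) : Prop := ∀ n k : ℕ, n < k → X ^ n ∣ f k

lemma coeff_sum_subset {f : ℕ → R} (hf : hypS f) {n : ℕ} {S T : Finset ℕ}
    (hST : S ⊆ T) (h : ∀ k ∈ T, k ∉ S → n + 1 < k) :
    @coeff K _ n (∑ k ∈ T, f k) = @coeff K _ n (∑ k ∈ S, f k) := by
  rw [← Finset.sum_sdiff hST, map_add, map_sum]
  have h0 : ∀ k ∈ T \ S, @coeff K _ n (f k) = 0 := fun k hk => by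
    rw [Finset.mem_sdiff] at hk
    exact coeff_eq_zero_of_dvd (Nat.lt_succ_self n) (hf (n+1) k (h k hk.1 hk.2))
  rw [Finset.sum_eq_zero h0, zero_add]

def slim (f : ℕ → R) : R := PowerSeries.mk fun n => @coeff K _ n (∑ k ∈ Finset.range (n + 2), f k)

lemma coeff_slim {f : ℕ → R} (hf : hypS f) {n N : ℕ} (hN : n + 1 < N) :
    @coeff K _ n (slim f) = @coeff K _ n (∑ k ∈ Finset.range N, f k) := by
  rw [slim, coeff_mk]
  rcases le_total (n+2) N with h | h
  · exact (coeff_sum_subset hf (Finset.range_subset_range.2 h)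
      (fun k hk hk2 => by simp only [Finset.mem_range] at *; omega)).symm
  · exact coeff_sum_subset hf (Finset.range_subset_range.2 h)
      (fun k hk hk2 => by simp only [Finset.mem_range] at *; omega)

lemma hasSum_slim {f : ℕ → R} (hf : hypS f) : HasSum f (slim f) := by
  rw [hasSum_iff]
  intro n
  rw [Filter.eventually_atTop]
  refine ⟨Finset.range (n + 2), fun S hS => ?_⟩
  rw [coeff_sum_subset hf hS (fun k hk hk2 => by
        by_contra hc; exact hk2 (Finset.mem_range.2 (by omega))),
    ← coeff_slim hf (Nat.lt_succ_self (n+1))]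

end Aux

namespace Aux3

lemma t_ne_zero : t ≠ 0 := RatFunc.X_ne_zero

lemma t_pow_ne_one {i : ℕ} (hi : 1 ≤ i) : t ^ i ≠ 1 := by
  intro h
  have h2 : (algebraMap (Polynomial ℚ) K) (Polynomial.X ^ i) = algebraMap (Polynomial ℚ) K 1 := by
    rw [map_pow, map_one]
    exact h
  have h3 := IsFractionRing.injective (Polynomial ℚ) K h2
  have h4 := congrArg Polynomial.natDegree h3
  rw [Polynomial.natDegree_X_pow, Polynomial.natDegree_one] at h4
  omega

lemma one_sub_t_pow_ne_zero {i : ℕ} (hi : 1 ≤ i) : 1 - t ^ i ≠ 0 :=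
  fun h => t_pow_ne_one hi (by linear_combination -h)

lemma pq_ne_zero (a : ℕ) : (∏ i ∈ Finset.range a, (1 - t ^ (i + 1))) ≠ 0 :=
  Finset.prod_ne_zero_iff.2 fun i _ => one_sub_t_pow_ne_zero (by omega)

open Aux2

lemma gb_eq_G (m a : ℕ) : gb m a = G t m a := by
  by_cases h : a ≤ m
  · rw [gb, if_pos h, Finset.prod_div_distrib, div_eq_iff (pq_ne_zero a)]
    linear_combination -G_mul t m a (by omega)
  · rw [gb, if_neg h]
    exact (G_eq_zero t (by omega)).symm

@[simp] lemma gb_zero (m : ℕ) : gb m 0 = 1 := by simp [gb]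

lemma qbinomK (m : ℕ) (x : K) :
    ∑ a ∈ Finset.range (m + 1), (-1 : K) ^ a * t ^ (a * (a - 1) / 2) * gb m a * x ^ a
      = ∏ i ∈ Finset.range m, (1 - x * t ^ i) := by
  simp_rw [gb_eq_G]
  exact (qbinom t x m).symm

def w (m : ℕ) : K := (∏ i ∈ Finset.range m, (1 - t ^ (i + 1)))⁻¹
def sc (m a : ℕ) : K := (-1 : K) ^ a * t ^ (a * (a - 1) / 2 + m) * gb m a
def u (k : ℕ) : K := (-1 : K) ^ k * t ^ (k * (k - 1) / 2)
def c1 (m k : ℕ) : K :=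
  (-1 : K) ^ ((k : ℤ) - (m : ℤ)) *
    t ^ (((k : ℤ) - (m : ℤ)) * ((k : ℤ) - (m : ℤ) - 1) / 2) * gb k m

lemma w_ne_zero (m : ℕ) : w m ≠ 0 := inv_ne_zero (pq_ne_zero m)

lemma cast_tri (n : ℕ) : ((n * (n - 1) / 2 : ℕ) : ℤ) * 2 = (n : ℤ) * ((n : ℤ) - 1) := by
  rcases n with _ | c
  · simp
  · have hd : 2 ∣ (c + 1) * c := by simpa [mul_comm] using (Nat.even_mul_succ_self c).two_dvd
    have h1 : (c + 1) * c / 2 * 2 = (c + 1) * c := Nat.div_mul_cancel hd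
    have h2 : ((c + 1) * c / 2 * 2 : ℕ) = (((c + 1) * c : ℕ) : ℤ) := by rw [h1]
    push_cast at h2 ⊢
    linear_combination h2

lemma zexp_eq (m k : ℕ) (hk : m ≤ k) :
    ((m * (m - 1) / 2 : ℕ) : ℤ) - (m : ℤ) * (k : ℤ) + ((k * (k - 1) / 2 : ℕ) : ℤ) + (m : ℤ)
      = (((k - m) * (k - m - 1) / 2 : ℕ) : ℤ) := by
  rcases Nat.exists_eq_add_of_le hk with ⟨j, rfl⟩
  have hj : m + j - m = j := by omega
  rw [hj]
  have hA := cast_tri m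
  have hB := cast_tri (m + j)
  have hC := cast_tri j
  apply mul_left_cancel₀ (two_ne_zero (α := ℤ))
  push_cast at hA hB hC ⊢
  linarith [hA, hB, hC]
lemma t_zpow_prod {s : Finset ℕ} (e : ℕ → ℤ) :
    ∏ i ∈ s, t ^ e i = t ^ (∑ i ∈ s, e i) := by
  classical
  induction s using Finset.induction_on with
  | empty => simp
  | @insert a s' ha ih =>
    rw [Finset.prod_insert ha, Finset.sum_insert ha, ih, ← zpow_add₀ t_ne_zero]

lemma I2 (m k : ℕ) :
    w m * t ^ m * (∏ i ∈ Finset.range m, (1 - t ^ ((i : ℤ) - (k : ℤ)))) * u k = c1 m k := by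
  rcases Nat.lt_or_ge k m with hk | hk
  · have h0 : (∏ i ∈ Finset.range m, (1 - t ^ ((i : ℤ) - (k : ℤ)))) = 0 :=
      Finset.prod_eq_zero (Finset.mem_range.2 hk) (by rw [sub_self, zpow_zero, sub_self])
    have h1 : gb k m = 0 := by rw [gb, if_neg (by omega)]
    rw [h0]
    simp only [c1, h1, mul_zero, zero_mul]
  · set j := k - m with hjdef
    have f1 : ∀ i ∈ Finset.range m, (1 - t ^ ((i : ℤ) - (k : ℤ)))
        = t ^ ((i : ℤ) - (k : ℤ)) * (-1 * (1 - t ^ (k - i))) := by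
      intro i hi
      rw [Finset.mem_range] at hi
      have hti : t ^ ((i : ℤ) - (k : ℤ)) * t ^ ((k - i : ℕ) : ℤ) = 1 := by
        rw [← zpow_add₀ t_ne_zero]
        have he : (i : ℤ) - (k : ℤ) + ((k - i : ℕ) : ℤ) = 0 := by push_cast; omega
        rw [he, zpow_zero]
      rw [zpow_natCast t (k - i)] at hti
      linear_combination -hti
    have hsum : ∑ i ∈ Finset.range m, ((i : ℤ) - (k : ℤ))
        = ((m * (m - 1) / 2 : ℕ) : ℤ) - (m : ℤ) * (k : ℤ) := by
      rw [Finset.sum_sub_distrib, Finset.sum_const, Finset.card_range, nsmul_eq_mul]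
      congr 1
      rw [← Nat.cast_sum, Finset.sum_range_id]
    have hgb : gb k m = (∏ i ∈ Finset.range m, (1 - t ^ (k - i))) * w m := by
      rw [gb, if_pos hk, Finset.prod_div_distrib, w, div_eq_mul_inv]
    have hc1 : c1 m k = (-1 : K) ^ j * t ^ (j * (j - 1) / 2)
        * ((∏ i ∈ Finset.range m, (1 - t ^ (k - i))) * w m) := by
      rw [c1, hgb]
      have he : (k : ℤ) - (m : ℤ) = (j : ℤ) := by push_cast; omega
      congr 2
      · rw [he, zpow_natCast]
      · rw [he]
        have h2 : (j : ℤ) * ((j : ℤ) - 1) / 2 = ((j * (j - 1) / 2 : ℕ) : ℤ) := by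
          rw [← cast_tri j, Int.mul_ediv_cancel _ (two_ne_zero (α := ℤ))]
        rw [h2, zpow_natCast]
    rw [Finset.prod_congr rfl f1, Finset.prod_mul_distrib, Finset.prod_mul_distrib,
      t_zpow_prod, hsum, Finset.prod_const, Finset.card_range, hc1]
    simp only [u]
    have hpow : t ^ (((m * (m - 1) / 2 : ℕ) : ℤ) - (m : ℤ) * (k : ℤ)) * t ^ m * t ^ (k * (k - 1) / 2)
        = t ^ (j * (j - 1) / 2) := by
      rw [← zpow_natCast t m, ← zpow_natCast t (k * (k - 1) / 2),
        ← zpow_add₀ t_ne_zero, ← zpow_add₀ t_ne_zero, ← zpow_natCast t (j * (j - 1) / 2)]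
      congr 1
      have hz := zexp_eq m k hk
      linarith [hz]
    have hsg : (-1 : K) ^ m * (-1 : K) ^ k = (-1 : K) ^ j := by
      rw [← pow_add]
      have h2 : m + k = j + 2 * m := by omega
      rw [h2, pow_add, pow_mul, neg_one_sq, one_pow, mul_one]
    calc w m * t ^ m * (t ^ (((m * (m - 1) / 2 : ℕ) : ℤ) - (m : ℤ) * (k : ℤ))
            * ((-1 : K) ^ m * ∏ i ∈ Finset.range m, (1 - t ^ (k - i))))
          * ((-1 : K) ^ k * t ^ (k * (k - 1) / 2))
        = (w m * ∏ i ∈ Finset.range m, (1 - t ^ (k - i))) * ((-1 : K) ^ m * (-1 : K) ^ k)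
            * (t ^ (((m * (m - 1) / 2 : ℕ) : ℤ) - (m : ℤ) * (k : ℤ)) * t ^ m
              * t ^ (k * (k - 1) / 2)) := by ring
      _ = (w m * ∏ i ∈ Finset.range m, (1 - t ^ (k - i))) * (-1 : K) ^ j
            * t ^ (j * (j - 1) / 2) := by rw [hpow, hsg]
      _ = (-1 : K) ^ j * t ^ (j * (j - 1) / 2)
            * ((∏ i ∈ Finset.range m, (1 - t ^ (k - i))) * w m) := by ring

lemma scalar_key (m : ℕ) (k : ℕ) :
    ∑ a ∈ Finset.Icc 1 m, (w m * sc m a * ((t ^ (-(a : ℤ))) ^ k * u k))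
      = c1 m k - w m * t ^ m * u k := by
  have hx : ∀ a : ℕ, (t ^ (-(a : ℤ))) ^ k = (t ^ (-(k : ℤ))) ^ a := by
    intro a
    rw [← zpow_natCast (t ^ (-(a : ℤ))) k, ← zpow_mul, ← zpow_natCast (t ^ (-(k : ℤ))) a,
      ← zpow_mul]
    congr 1
    ring
  have hins : Finset.range (m + 1) = insert 0 (Finset.Icc 1 m) := by
    ext y
    simp only [Finset.mem_range, Finset.mem_insert, Finset.mem_Icc]
    omega
  have h0 : (0 : ℕ) ∉ Finset.Icc 1 m := by simp
  set x : K := t ^ (-(k : ℤ)) with hxdef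
  have hfull : (∑ a ∈ Finset.range (m + 1), (-1 : K) ^ a * t ^ (a * (a - 1) / 2) * gb m a * x ^ a)
      = ∏ i ∈ Finset.range m, (1 - x * t ^ i) := qbinomK m x
  rw [hins, Finset.sum_insert h0] at hfull
  have ha0 : (-1 : K) ^ 0 * t ^ (0 * (0 - 1) / 2) * gb m 0 * x ^ 0 = 1 := by simp
  rw [ha0] at hfull
  have hterm : ∀ a ∈ Finset.Icc 1 m, w m * sc m a * ((t ^ (-(a : ℤ))) ^ k * u k)
      = (w m * t ^ m * u k) * ((-1 : K) ^ a * t ^ (a * (a - 1) / 2) * gb m a * x ^ a) := by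
    intro a _
    rw [hx a]
    simp only [sc]
    ring
  rw [Finset.sum_congr rfl hterm, ← Finset.mul_sum]
  have hsum2 : (∑ a ∈ Finset.Icc 1 m, ((-1 : K) ^ a * t ^ (a * (a - 1) / 2) * gb m a * x ^ a))
      = (∏ i ∈ Finset.range m, (1 - x * t ^ i)) - 1 := by linear_combination hfull
  rw [hsum2]
  have hxt : ∀ i ∈ Finset.range m, (1 - x * t ^ i) = (1 - t ^ ((i : ℤ) - (k : ℤ))) := by
    intro i _
    rw [hxdef, ← zpow_natCast t i, ← zpow_add₀ t_ne_zero]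
    congr 2
    omega
  rw [Finset.prod_congr rfl hxt, mul_sub, mul_one]
  linear_combination I2 m k

end Aux3

namespace Aux4
open PowerSeries Aux Aux2 Aux3

local notation "R" => PowerSeries K

instance : IsTopologicalSemiring R := ⟨⟩

def Pk (k : ℕ) : R := ∏ d ∈ Finset.range k, (1 - @C K _ (t ^ (d + 1)) * X ^ (d + 1))
def Vk (k : ℕ) : R := X ^ (k * (k - 1) / 2) * (Pk k)⁻¹
def st (c : ℕ → K) (k : ℕ) : R := @C K _ (c k) * Vk k
def SS (c : ℕ → K) : R := Aux.slim (st c)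
def E (z : K) : R := SS fun k => z ^ k * u k
def bf (k : ℕ) : R := 1 - @C K _ (t ^ (k + 1)) * X ^ k
def pf (d : ℕ) : R := 1 - @C K _ (t ^ (d + 2)) * X ^ (d + 1)
def efact (z : K) (k : ℕ) : R := 1 - @C K _ (z * t ^ k) * X ^ k

lemma constCoeff_Pk (k : ℕ) : @constantCoeff K _ (Pk k) = 1 := by
  rw [Pk, map_prod]
  refine Finset.prod_eq_one fun d _ => ?_
  simp [pow_succ]

lemma Pk_inv_mul (k : ℕ) : (Pk k)⁻¹ * Pk k = 1 :=
  PowerSeries.inv_mul_cancel _ (by rw [constCoeff_Pk]; exact one_ne_zero)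

lemma le_tri {n k : ℕ} (h : n < k) : n ≤ k * (k - 1) / 2 := by
  rcases k with _ | c
  · omega
  · rcases Nat.eq_zero_or_pos c with rfl | hc
    · omega
    · have h2 : n * 2 ≤ (c + 1) * c := by nlinarith [Nat.lt_succ_iff.mp h]
      have h3 := (Nat.le_div_iff_mul_le (k := 2) (by norm_num)).2 h2
      simpa [Nat.succ_sub_one] using h3

lemma hypS_st (c : ℕ → K) : Aux.hypS (st c) := by
  intro n k hnk
  have h1 : st c k = X ^ (k * (k - 1) / 2) * (@C K _ (c k) * (Pk k)⁻¹) := by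
    rw [st, Vk]; ring
  rw [h1]
  exact ((pow_dvd_pow X (le_tri hnk)).mul_right _)

lemma hasSum_st (c : ℕ → K) : HasSum (st c) (SS c) := Aux.hasSum_slim (hypS_st c)

lemma hyp_pf : Aux.hyp pf := by
  intro n k hnk
  have h1 : pf k - 1 = -(@C K _ (t ^ (k + 2)) * X ^ (k + 1)) := by rw [pf]; ring
  rw [h1]
  exact ((pow_dvd_pow X (by omega)).mul_left _).neg_right

lemma hyp_bf : Aux.hyp bf := by
  intro n k hnk
  have h1 : bf k - 1 = -(@C K _ (t ^ (k + 1)) * X ^ k) := by rw [bf]; ring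
  rw [h1]
  exact ((pow_dvd_pow X hnk).mul_left _).neg_right

lemma hyp_efact (z : K) : Aux.hyp (efact z) := by
  intro n k hnk
  have h1 : efact z k - 1 = -(@C K _ (z * t ^ k) * X ^ k) := by rw [efact]; ring
  rw [h1]
  exact ((pow_dvd_pow X hnk).mul_left _).neg_right

lemma constCoeff_bf (k : ℕ) : @constantCoeff K _ (bf k) ≠ 0 := by
  rcases k with _ | c
  · rw [bf]
    simp only [map_sub, map_one, map_mul, constantCoeff_C, pow_zero, map_one, mul_one]
    exact fun h => Aux3.one_sub_t_pow_ne_zero (i := 1) le_rfl (by simpa using h)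
  · rw [bf]
    simp [pow_succ]

lemma hyp_ibf : Aux.hyp (fun k => (bf k)⁻¹) := by
  intro n k hnk
  have h2 : (bf k)⁻¹ * bf k = 1 := PowerSeries.inv_mul_cancel _ (constCoeff_bf k)
  have h1 : (bf k)⁻¹ - 1 = (bf k)⁻¹ * (@C K _ (t ^ (k + 1)) * X ^ k) := by
    have h3 : (1 : R) - bf k = @C K _ (t ^ (k + 1)) * X ^ k := by rw [bf]; ring
    calc (bf k)⁻¹ - 1 = (bf k)⁻¹ * ((1 : R) - bf k) := by
          rw [mul_sub, mul_one, h2]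
      _ = (bf k)⁻¹ * (@C K _ (t ^ (k + 1)) * X ^ k) := by rw [h3]
  rw [h1]
  exact Dvd.dvd.mul_left ((pow_dvd_pow X hnk).mul_left _) _

def Pinf : R := Aux.plim pf
def Bv : R := Aux.plim bf
def IBv : R := Aux.plim fun k => (bf k)⁻¹

lemma hasProd_pf : HasProd pf Pinf := Aux.hasProd_plim hyp_pf
lemma hasProd_bf : HasProd bf Bv := Aux.hasProd_plim hyp_bf
lemma hasProd_ibf : HasProd (fun k => (bf k)⁻¹) IBv := Aux.hasProd_plim hyp_ibf

lemma Bv_eq : Bv = @C K _ (1 - t) * Pinf := by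
  ext n
  rw [Bv, Aux.coeff_plim hyp_bf (show n < n + 2 by omega), PowerSeries.coeff_C_mul, Pinf,
    Aux.coeff_plim hyp_pf (show n < n + 1 by omega)]
  have hfin : ∏ k ∈ Finset.range (n + 2), bf k = @C K _ (1 - t) * ∏ d ∈ Finset.range (n + 1), pf d := by
    rw [Finset.prod_range_succ' bf (n + 1)]
    have h1 : ∀ k, bf (k + 1) = pf k := fun k => rfl
    rw [Finset.prod_congr rfl fun k _ => h1 k]
    have h2 : bf 0 = @C K _ (1 - t) := by
      rw [bf]
      simp [map_sub]
    rw [h2, mul_comm]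
  rw [hfin, PowerSeries.coeff_C_mul]

lemma prod_inv (s : Finset ℕ) (f : ℕ → R) : (∏ i ∈ s, f i)⁻¹ = ∏ i ∈ s, (f i)⁻¹ := by
  classical
  induction s using Finset.induction_on with
  | empty => simp
  | @insert a s' ha ih =>
    rw [Finset.prod_insert ha, Finset.prod_insert ha, PowerSeries.mul_inv_rev, ih, mul_comm]

lemma coeff_inv_congr {f g : R} : ∀ n : ℕ, (∀ j, j ≤ n → @coeff K _ j f = @coeff K _ j g) →
    @coeff K _ n f⁻¹ = @coeff K _ n g⁻¹ := by
  intro n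
  induction n using Nat.strong_induction_on with
  | _ n ih =>
    intro h
    have hc : @constantCoeff K _ f = @constantCoeff K _ g := by
      simpa using h 0 (Nat.zero_le n)
    rw [PowerSeries.coeff_inv, PowerSeries.coeff_inv, hc]
    by_cases hn : n = 0
    · simp [hn]
    · rw [if_neg hn, if_neg hn]
      congr 1
      refine Finset.sum_congr rfl fun p hp => ?_
      rw [Finset.HasAntidiagonal.mem_antidiagonal] at hp
      by_cases h2 : p.2 < n
      · rw [if_pos h2, if_pos h2, h p.1 (by omega), ih p.2 h2 (fun j hj => h j (by omega))]
      · rw [if_neg h2, if_neg h2]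

lemma IBv_eq : IBv = Bv⁻¹ := by
  ext n
  rw [IBv, Aux.coeff_plim hyp_ibf (show n < n + 1 by omega), ← prod_inv]
  exact coeff_inv_congr n fun j hj =>
    (Aux.coeff_plim hyp_bf (show j < n + 1 by omega)).symm

lemma Q_pow (k : ℕ) : (@C K _ t * X) ^ k = @C K _ (t ^ k) * X ^ k := by
  rw [mul_pow, ← map_pow]

lemma Pk_eq_Q (a : ℕ) : Pk a = ∏ i ∈ Finset.range a, (1 - (@C K _ t * X) ^ (i + 1)) := by
  rw [Pk]
  exact Finset.prod_congr rfl fun i _ => by rw [Q_pow]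

lemma G_sub_inv_dvd (N a : ℕ) (ha : a ≤ N + 1) :
    X ^ (N + 1 - a) ∣ (G (@C K _ t * X) N a - (Pk a)⁻¹) := by
  have hPG : Pk a * G (@C K _ t * X) N a = ∏ i ∈ Finset.range a, (1 - (@C K _ t * X) ^ (N - i)) := by
    rw [Pk_eq_Q]
    exact G_mul (@C K _ t * X) N a ha
  have hd : X ^ (N + 1 - a) ∣ ((∏ i ∈ Finset.range a, (1 - (@C K _ t * X) ^ (N - i))) - 1) := by
    refine Aux.prod_sub_one_dvd fun i hi => ?_
    rw [Finset.mem_range] at hi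
    have h1 : (1 - (@C K _ t * X) ^ (N - i)) - 1 = -(@C K _ (t ^ (N - i)) * X ^ (N - i)) := by
      rw [Q_pow]; ring
    rw [h1]
    exact ((pow_dvd_pow X (by omega)).mul_left _).neg_right
  have h2 : G (@C K _ t * X) N a - (Pk a)⁻¹
      = (Pk a)⁻¹ * (Pk a * G (@C K _ t * X) N a - 1) := by
    rw [mul_sub, mul_one, ← mul_assoc, Pk_inv_mul, one_mul]
  rw [h2, hPG]
  exact Dvd.dvd.mul_left hd _

lemma plim_efact (z : K) : Aux.plim (efact z) = E z := by
  ext n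
  rw [Aux.coeff_plim (hyp_efact z) (show n < n + 2 by omega), E, SS,
    Aux.coeff_slim (hypS_st _) (show n + 1 < n + 2 by omega)]
  have hq : ∀ k ∈ Finset.range (n + 2), efact z k = 1 - @C K _ z * (@C K _ t * X) ^ k := by
    intro k _
    rw [efact, Q_pow, ← mul_assoc, ← map_mul]
  rw [Finset.prod_congr rfl hq, qbinom (@C K _ t * X) (@C K _ z) (n + 2)]
  rw [map_sum, map_sum, Finset.sum_range_succ]
  have hlast : @coeff K _ n ((-1 : R) ^ (n + 2) * (@C K _ t * X) ^ ((n + 2) * ((n + 2) - 1) / 2)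
      * G (@C K _ t * X) (n + 2) (n + 2) * (@C K _ z) ^ (n + 2)) = 0 := by
    refine Aux.coeff_eq_zero_of_dvd (show n < n + 1 by omega) ?_
    have he : n + 1 ≤ (n + 2) * ((n + 2) - 1) / 2 := le_tri (by omega)
    have h1 : (-1 : R) ^ (n + 2) * (@C K _ t * X) ^ ((n + 2) * ((n + 2) - 1) / 2)
        * G (@C K _ t * X) (n + 2) (n + 2) * (@C K _ z) ^ (n + 2)
        = X ^ ((n + 2) * ((n + 2) - 1) / 2) * ((-1 : R) ^ (n + 2) * @C K _ (t ^ ((n + 2) * ((n + 2) - 1) / 2))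
          * G (@C K _ t * X) (n + 2) (n + 2) * (@C K _ z) ^ (n + 2)) := by
      rw [Q_pow]; ring
    rw [h1]
    exact (pow_dvd_pow X he).mul_right _
  rw [hlast, add_zero]
  refine Finset.sum_congr rfl fun a ha => ?_
  rw [Finset.mem_range] at ha
  -- term difference divisible by X^(n+1)
  have hdiff : (-1 : R) ^ a * (@C K _ t * X) ^ (a * (a - 1) / 2) * G (@C K _ t * X) (n + 2) a * (@C K _ z) ^ a
      - st (fun k => z ^ k * u k) a
      = (-1 : R) ^ a * @C K _ (t ^ (a * (a - 1) / 2)) * (@C K _ z) ^ a * X ^ (a * (a - 1) / 2)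
        * (G (@C K _ t * X) (n + 2) a - (Pk a)⁻¹) := by
    rw [st, Vk, Q_pow, u]
    have hCu : @C K _ (z ^ a * ((-1 : K) ^ a * t ^ (a * (a - 1) / 2)))
        = (@C K _ z) ^ a * ((-1 : R) ^ a * @C K _ (t ^ (a * (a - 1) / 2))) := by
      rw [map_mul, map_mul, map_pow, map_pow]
      congr 2
      rw [map_neg, map_one]
    rw [hCu]
    ring
  have hdvd : X ^ (n + 1) ∣ ((-1 : R) ^ a * (@C K _ t * X) ^ (a * (a - 1) / 2) * G (@C K _ t * X) (n + 2) a * (@C K _ z) ^ a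
      - st (fun k => z ^ k * u k) a) := by
    rw [hdiff]
    have h3 := G_sub_inv_dvd (n + 2) a (by omega)
    have h4 : X ^ (a * (a - 1) / 2) * X ^ (n + 2 + 1 - a) ∣ (X ^ (a * (a - 1) / 2)
        * (G (@C K _ t * X) (n + 2) a - (Pk a)⁻¹)) :=
      mul_dvd_mul_left (X ^ (a * (a - 1) / 2)) h3
    have h5 : (X : R) ^ (n + 1) ∣ (X : R) ^ (a * (a - 1) / 2) * (X : R) ^ (n + 2 + 1 - a) := by
      rw [← pow_add]
      refine pow_dvd_pow X ?_
      rcases Nat.eq_zero_or_pos a with rfl | ha1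
      · omega
      · have := le_tri (show a - 1 < a by omega)
        omega
    have h6 : (-1 : R) ^ a * @C K _ (t ^ (a * (a - 1) / 2)) * (@C K _ z) ^ a * X ^ (a * (a - 1) / 2)
        * (G (@C K _ t * X) (n + 2) a - (Pk a)⁻¹)
        = ((-1 : R) ^ a * @C K _ (t ^ (a * (a - 1) / 2)) * (@C K _ z) ^ a)
          * (X ^ (a * (a - 1) / 2) * (G (@C K _ t * X) (n + 2) a - (Pk a)⁻¹)) := by ring
    rw [h6]
    exact Dvd.dvd.mul_left (h5.trans h4) _
  have := Aux.coeff_eq_zero_of_dvd (show n < n + 1 by omega) hdvd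
  rw [map_sub, sub_eq_zero] at this
  exact this

lemma hasProd_efact (z : K) : HasProd (efact z) (E z) :=
  plim_efact z ▸ Aux.hasProd_plim (hyp_efact z)

lemma hasSum_E (z : K) : HasSum (st fun k => z ^ k * u k) (E z) := hasSum_st _

lemma E1_zero : E 1 = 0 := by
  have h1 : HasProd (efact 1) (E 1) := hasProd_efact 1
  have h0 : efact 1 0 = 0 := by
    rw [efact]
    simp
  have h2 : HasProd (efact 1) 0 := by
    rw [Aux.hasProd_iff]
    intro n
    rw [Filter.eventually_atTop]
    refine ⟨{0}, fun S hS => ?_⟩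
    rw [Finset.prod_eq_zero (hS (Finset.mem_singleton_self 0)) h0]
  exact h1.unique h2

lemma hasProd_afact (z : K) :
    HasProd (fun k => efact z k * (bf k)⁻¹) (E z * Bv⁻¹) := by
  have h1 := (hasProd_efact z).mul (IBv_eq ▸ hasProd_ibf)
  exact h1

end Aux4

open PowerSeries in
/-- The closed form for the generating function `∑_n E(H^{[n]}_m; t) qⁿ` of the
E-polynomials of the strata of the Hilbert scheme of points on `ℂ²`:
`∏_{d=1}^∞ (1 - t^{d+1} q^d)⁻¹ ·
   ∑_{k=0}^∞ (-1)^{k-m} t^{(k-m)(k-m-1)/2} [k choose m]_t q^{k(k-1)/2}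
     ∏_{d=1}^{k} (1 - t^d q^d)⁻¹
 = ∏_{i=1}^{m-1} (1 - t^{i+1})⁻¹ ·
   ∑_{a=1}^{m} (-1)^{a} t^{a(a-1)/2 + m} [m choose a]_t
     ∏_{k=0}^∞ (1 - t^{k-a} q^k)(1 - t^{k+1} q^k)⁻¹`. -/
theorem stmt13 (m : ℕ) (hm : 1 ≤ m) :
    (∏' d : ℕ, (1 - C (R := K) (t ^ (d + 2)) * X ^ (d + 1)))⁻¹ *
        ∑' k : ℕ,
          C (R := K) ((-1 : K) ^ ((k : ℤ) - (m : ℤ)) *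
              t ^ (((k : ℤ) - (m : ℤ)) * ((k : ℤ) - (m : ℤ) - 1) / 2) *
              gb k m) *
            X ^ (k * (k - 1) / 2) *
            (∏ d ∈ Finset.range k, (1 - C (R := K) (t ^ (d + 1)) * X ^ (d + 1)))⁻¹
      = C (R := K) (∏ i ∈ Finset.Icc 1 (m - 1), (1 - t ^ (i + 1)))⁻¹ *
          ∑ a ∈ Finset.Icc 1 m,
            C (R := K) ((-1 : K) ^ a * t ^ (a * (a - 1) / 2 + m) * gb m a) *
              ∏' k : ℕ,
                (1 - C (R := K) (t ^ ((k : ℤ) - (a : ℤ))) * X ^ k) *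
                  (1 - C (R := K) (t ^ (k + 1)) * X ^ k)⁻¹ := by
  classical
  have hPinf : (∏' d : ℕ, (1 - C (R := K) (t ^ (d + 2)) * X ^ (d + 1))) = Aux4.Pinf :=
    Aux4.hasProd_pf.tprod_eq
  have hLs : (∑' k : ℕ,
        C (R := K) ((-1 : K) ^ ((k : ℤ) - (m : ℤ)) *
            t ^ (((k : ℤ) - (m : ℤ)) * ((k : ℤ) - (m : ℤ) - 1) / 2) * gb k m) *
          X ^ (k * (k - 1) / 2) *
          (∏ d ∈ Finset.range k, (1 - C (R := K) (t ^ (d + 1)) * X ^ (d + 1)))⁻¹)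
      = Aux4.SS (Aux3.c1 m) := by
    have h1 : ∀ k : ℕ,
        C (R := K) ((-1 : K) ^ ((k : ℤ) - (m : ℤ)) *
            t ^ (((k : ℤ) - (m : ℤ)) * ((k : ℤ) - (m : ℤ) - 1) / 2) * gb k m) *
          X ^ (k * (k - 1) / 2) *
          (∏ d ∈ Finset.range k, (1 - C (R := K) (t ^ (d + 1)) * X ^ (d + 1)))⁻¹
        = Aux4.st (Aux3.c1 m) k := fun k => by
      rw [Aux4.st, Aux4.Vk, Aux4.Pk, Aux3.c1, mul_assoc]
    rw [tsum_congr h1]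
    exact (Aux4.hasSum_st _).tsum_eq
  have hTa : ∀ a : ℕ,
      (∏' k : ℕ, (1 - C (R := K) (t ^ ((k : ℤ) - (a : ℤ))) * X ^ k) *
        (1 - C (R := K) (t ^ (k + 1)) * X ^ k)⁻¹)
      = Aux4.E (t ^ (-(a : ℤ))) * Aux4.Bv⁻¹ := by
    intro a
    have h1 : ∀ k : ℕ, (1 - C (R := K) (t ^ ((k : ℤ) - (a : ℤ))) * X ^ k) *
          (1 - C (R := K) (t ^ (k + 1)) * X ^ k)⁻¹
        = Aux4.efact (t ^ (-(a : ℤ))) k * (Aux4.bf k)⁻¹ := by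
      intro k
      rw [Aux4.efact, Aux4.bf]
      have h2 : t ^ ((k : ℤ) - (a : ℤ)) = t ^ (-(a : ℤ)) * t ^ k := by
        rw [← zpow_natCast t k, ← zpow_add₀ Aux3.t_ne_zero]
        congr 1
        ring
      rw [h2]
    rw [tprod_congr h1]
    exact (Aux4.hasProd_afact _).tprod_eq
  have key : ∑ a ∈ Finset.Icc 1 m, C (R := K) (Aux3.w m * Aux3.sc m a) * Aux4.E (t ^ (-(a : ℤ)))
      = Aux4.SS (Aux3.c1 m) := by
    have hA : ∀ a ∈ Finset.Icc 1 m,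
        HasSum (fun k => C (R := K) (Aux3.w m * Aux3.sc m a) *
            Aux4.st (fun k => (t ^ (-(a : ℤ))) ^ k * Aux3.u k) k)
          (C (R := K) (Aux3.w m * Aux3.sc m a) * Aux4.E (t ^ (-(a : ℤ)))) :=
      fun a _ => (Aux4.hasSum_E _).mul_left _
    have hB := hasSum_sum hA
    have hC : HasSum (fun k => Aux4.st (Aux3.c1 m) k
          + C (R := K) (-(Aux3.w m * t ^ m)) * Aux4.st (fun k => (1 : K) ^ k * Aux3.u k) k)
        (Aux4.SS (Aux3.c1 m) + C (R := K) (-(Aux3.w m * t ^ m)) * Aux4.E 1) :=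
      (Aux4.hasSum_st _).add ((Aux4.hasSum_E 1).mul_left _)
    have hfun : (fun k => ∑ a ∈ Finset.Icc 1 m,
          C (R := K) (Aux3.w m * Aux3.sc m a) *
            Aux4.st (fun k => (t ^ (-(a : ℤ))) ^ k * Aux3.u k) k)
        = (fun k => Aux4.st (Aux3.c1 m) k
            + C (R := K) (-(Aux3.w m * t ^ m)) * Aux4.st (fun k => (1 : K) ^ k * Aux3.u k) k) := by
      funext k
      have h1 : ∀ a ∈ Finset.Icc 1 m,
          C (R := K) (Aux3.w m * Aux3.sc m a) *
              Aux4.st (fun k => (t ^ (-(a : ℤ))) ^ k * Aux3.u k) k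
            = C (R := K) (Aux3.w m * Aux3.sc m a * ((t ^ (-(a : ℤ))) ^ k * Aux3.u k)) * Aux4.Vk k := by
        intro a _
        rw [Aux4.st, ← mul_assoc, ← map_mul]
      rw [Finset.sum_congr rfl h1, ← Finset.sum_mul, ← map_sum]
      have h2 : ∑ a ∈ Finset.Icc 1 m, Aux3.w m * Aux3.sc m a * ((t ^ (-(a : ℤ))) ^ k * Aux3.u k)
          = Aux3.c1 m k - Aux3.w m * t ^ m * Aux3.u k := Aux3.scalar_key m k
      rw [h2, Aux4.st, Aux4.st, ← mul_assoc, ← map_mul, ← add_mul, ← map_add]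
      congr 2
      rw [one_pow]
      ring
    rw [hfun] at hB
    have h3 := hB.unique hC
    rw [Aux4.E1_zero, mul_zero, add_zero] at h3
    exact h3
  rw [hPinf, hLs]
  have hRs : ∀ a ∈ Finset.Icc 1 m,
      C (R := K) ((-1 : K) ^ a * t ^ (a * (a - 1) / 2 + m) * gb m a) *
        (∏' k : ℕ, (1 - C (R := K) (t ^ ((k : ℤ) - (a : ℤ))) * X ^ k) *
          (1 - C (R := K) (t ^ (k + 1)) * X ^ k)⁻¹)
      = (C (R := K) (Aux3.w m))⁻¹ * (C (R := K) (Aux3.w m * Aux3.sc m a) * Aux4.E (t ^ (-(a : ℤ))))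
          * Aux4.Bv⁻¹ := by
    intro a _
    rw [hTa a]
    have h4 : (C (R := K) (Aux3.w m))⁻¹ * C (R := K) (Aux3.w m * Aux3.sc m a) = C (R := K) (Aux3.sc m a) := by
      rw [PowerSeries.C_inv, ← map_mul]
      congr 1
      field_simp [Aux3.w_ne_zero m]
    calc C (R := K) ((-1 : K) ^ a * t ^ (a * (a - 1) / 2 + m) * gb m a) *
          (Aux4.E (t ^ (-(a : ℤ))) * Aux4.Bv⁻¹)
        = C (R := K) (Aux3.sc m a) * Aux4.E (t ^ (-(a : ℤ))) * Aux4.Bv⁻¹ := by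
          rw [Aux3.sc]; ring
      _ = (C (R := K) (Aux3.w m))⁻¹ * C (R := K) (Aux3.w m * Aux3.sc m a) * Aux4.E (t ^ (-(a : ℤ)))
            * Aux4.Bv⁻¹ := by rw [h4]
      _ = _ := by ring
  rw [Finset.sum_congr rfl hRs, ← Finset.sum_mul, ← Finset.mul_sum, key]
  -- now: Pinf⁻¹ * SS = (C π)⁻¹ * ((C w)⁻¹ * SS * Bv⁻¹)
  rw [Aux4.Bv_eq, PowerSeries.mul_inv_rev, PowerSeries.C_inv, PowerSeries.C_inv]
  have hπ : (∏ i ∈ Finset.Icc 1 (m - 1), (1 - t ^ (i + 1))) ≠ 0 :=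
    Finset.prod_ne_zero_iff.2 fun i _ => Aux3.one_sub_t_pow_ne_zero (by omega)
  have h1t : (1 : K) - t ≠ 0 := by
    simpa using Aux3.one_sub_t_pow_ne_zero (i := 1) le_rfl
  have hsplit : (∏ i ∈ Finset.range m, (1 - t ^ (i + 1)))
      = (1 - t) * ∏ i ∈ Finset.Icc 1 (m - 1), (1 - t ^ (i + 1)) := by
    have hins : Finset.range m = insert 0 (Finset.Icc 1 (m - 1)) := by
      ext y
      simp only [Finset.mem_range, Finset.mem_insert, Finset.mem_Icc]
      omega
    rw [hins, Finset.prod_insert (by simp)]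
    norm_num
  have hscal : (∏ i ∈ Finset.Icc 1 (m - 1), (1 - t ^ (i + 1)))⁻¹ * (Aux3.w m)⁻¹
      * ((1 : K) - t)⁻¹ = 1 := by
    rw [Aux3.w, inv_inv, hsplit]
    field_simp
  have hfin : C (R := K) ((∏ i ∈ Finset.Icc 1 (m - 1), (1 - t ^ (i + 1)))⁻¹) *
        (C (R := K) ((Aux3.w m)⁻¹) * Aux4.SS (Aux3.c1 m) * (Aux4.Pinf⁻¹ * C (R := K) (((1 : K) - t)⁻¹)))
      = C (R := K) ((∏ i ∈ Finset.Icc 1 (m - 1), (1 - t ^ (i + 1)))⁻¹ * (Aux3.w m)⁻¹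
          * ((1 : K) - t)⁻¹) * (Aux4.Pinf⁻¹ * Aux4.SS (Aux3.c1 m)) := by
    rw [map_mul, map_mul]
    ring
  rw [hfin, hscal, map_one, one_mul]

end
end
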